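/- arXiv:math/9711217 — 10 statements merged into one kernel-verified Lean document; each statement's English description precedes it below -/
import Mathlib

section
/- Even power sums of the roots of a parity polynomial: if P is monic of degree N ≥ 2 over ℂ with P(−X) = (−1)^N P(X), then with M := ⌊N/2⌋, for every l ≥ 1 the normalized power sum m_{2l}(N) := (1/N) Σ_{i=1}^N x_i^{2l} equals (2/N) · Σ over all tuples (n_1,…,n_M) of natural numbers with Σ_{m=1}^M m·n_m = l of (−1)^{Σ_m n_m} · l · (Σ_m n_m − 1)! / (n_1!⋯n_M!) · σ_2^{n_1} σ_4^{n_2} ⋯ σ_{2M}^{n_M}. -/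
open Polynomial Finset

-- Newton identity for concrete complex numbers
lemma newton_concrete (N : ℕ) (x : Fin N → ℂ) (k : ℕ) (hk : 0 < k) :
    (∑ i, x i ^ k) = (-1)^(k+1) * k * (∑ s ∈ Finset.powersetCard k (Finset.univ : Finset (Fin N)), ∏ i ∈ s, x i)
      - ∑ a ∈ (Finset.HasAntidiagonal.antidiagonal k).filter (fun a => a.1 ∈ Set.Ioo 0 k),
          (-1:ℂ)^a.1 * (∑ s ∈ Finset.powersetCard a.1 (Finset.univ : Finset (Fin N)), ∏ i ∈ s, x i) * (∑ i, x i ^ a.2) := by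
  have h := congrArg (MvPolynomial.aeval x) (MvPolynomial.psum_eq_mul_esymm_sub_sum (Fin N) ℂ k hk)
  simpa [MvPolynomial.psum, MvPolynomial.esymm, map_sum, map_prod, map_pow, map_mul, map_sub] using h

lemma parity_prod (N : ℕ) (x : Fin N → ℂ)
    (P : Polynomial ℂ) (hP : P = ∏ i, (X - C (x i)))
    (hpar : P.comp (-X) = (-1) ^ N * P) :
    (∏ i, (X + C (x i))) = ∏ i, (X - C (x i)) := by
  have h1 : P.comp (-X) = (-1:Polynomial ℂ)^N * ∏ i, (X + C (x i)) := by
    rw [hP, Polynomial.prod_comp]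
    have : ∀ i : Fin N, (X - C (x i)).comp (-X) = (-1) * (X + C (x i)) := by
      intro i; simp [sub_comp]; ring
    rw [Finset.prod_congr rfl (fun i _ => this i), Finset.prod_mul_distrib]
    simp
  rw [h1, hP] at hpar
  have hu : IsUnit ((-1:Polynomial ℂ)^N) := (IsUnit.neg isUnit_one).pow N
  exact hu.mul_left_cancel hpar

lemma sigma_odd_zero (N : ℕ) (x : Fin N → ℂ)
    (heq : (∏ i, (X + C (x i))) = ∏ i, (X - C (x i)))
    (k : ℕ) (hk : Odd k) :
    (∑ s ∈ Finset.powersetCard k (Finset.univ : Finset (Fin N)), ∏ i ∈ s, x i) = 0 := by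
  by_cases hkN : k ≤ N
  · have hc : N - k ≤ (univ : Finset (Fin N)).card := by simp [Nat.sub_le]
    have h1 := Finset.prod_X_add_C_coeff (univ : Finset (Fin N)) x hc
    have h2 := Finset.prod_X_add_C_coeff (univ : Finset (Fin N)) (fun i => -x i) hc
    have hxx : (∏ i, (X + C ((fun i => -x i) i))) = ∏ i, (X - C (x i)) := by
      apply Finset.prod_congr rfl; intro i _; simp [sub_eq_add_neg]
    rw [hxx, ← heq, h1] at h2
    have hNk : N - (N - k) = k := Nat.sub_sub_self hkN
    simp only [Finset.card_univ, Fintype.card_fin, hNk] at h2 ⊢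
    have h3 : ∀ s ∈ Finset.powersetCard k (Finset.univ : Finset (Fin N)),
        (∏ i ∈ s, ((fun i => -x i) i)) = (-1:ℂ)^k * ∏ i ∈ s, x i := by
      intro s hs
      have : ∀ i ∈ s, ((fun i => -x i) i) = (-1 : ℂ) * x i := fun i _ => by ring
      rw [Finset.prod_congr rfl this, Finset.prod_mul_distrib, Finset.prod_const,
        (Finset.mem_powersetCard.mp hs).2]
    rw [Finset.sum_congr rfl h3, ← Finset.mul_sum, hk.neg_one_pow, neg_one_mul] at h2
    have h4 : (2:ℂ) * ∑ s ∈ Finset.powersetCard k (Finset.univ : Finset (Fin N)), ∏ i ∈ s, x i = 0 := by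
      linear_combination h2
    exact (mul_eq_zero.mp h4).resolve_left two_ne_zero
  · rw [Finset.powersetCard_eq_empty.mpr (by simpa using lt_of_not_ge hkN), Finset.sum_empty]

def Tset (M l : ℕ) : Finset (Fin M → ℕ) :=
  (Fintype.piFinset fun _ : Fin M => Finset.range (l + 1)).filter
    (fun n => ∑ m : Fin M, ((m : ℕ) + 1) * n m = l)

noncomputable def Wc (M l : ℕ) (n : Fin M → ℕ) : ℂ :=
  (-1 : ℂ) ^ (∑ m : Fin M, n m) * l * (Nat.factorial ((∑ m : Fin M, n m) - 1) : ℂ) /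
    (∏ m : Fin M, (Nat.factorial (n m) : ℂ))

noncomputable def Fp (M : ℕ) (f : ℕ → ℂ) (n : Fin M → ℕ) : ℂ :=
  ∏ m : Fin M, f ((m : ℕ) + 1) ^ n m

lemma mem_Tset {M l : ℕ} {n : Fin M → ℕ} :
    n ∈ Tset M l ↔ ∑ m : Fin M, ((m : ℕ) + 1) * n m = l := by
  constructor
  · exact fun h => (Finset.mem_filter.mp h).2
  · intro h
    refine Finset.mem_filter.mpr ⟨Fintype.mem_piFinset.mpr (fun m => Finset.mem_range.mpr ?_), h⟩
    have h1 : n m ≤ ((m : ℕ) + 1) * n m := Nat.le_mul_of_pos_left _ (Nat.succ_pos _)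
    have h2 : ((m : ℕ) + 1) * n m ≤ ∑ m : Fin M, ((m : ℕ) + 1) * n m :=
      Finset.single_le_sum (f := fun m : Fin M => ((m : ℕ) + 1) * n m)
        (fun _ _ => Nat.zero_le _) (Finset.mem_univ m)
    omega

lemma Tset_single {M l : ℕ} {n : Fin M → ℕ}
    (hT : ∑ m : Fin M, ((m : ℕ) + 1) * n m = l) (hs : ∑ m : Fin M, n m = 1) :
    l ≤ M ∧ n = fun m : Fin M => if (m : ℕ) + 1 = l then 1 else 0 := by
  -- there is exactly one m0 with n m0 = 1
  obtain ⟨m0, hm0, hm0u⟩ : ∃ m0 : Fin M, n m0 = 1 ∧ ∀ m, m ≠ m0 → n m = 0 := by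
    have hpos : ∃ m0 : Fin M, 1 ≤ n m0 := by
      by_contra hc
      push_neg at hc
      have : ∑ m : Fin M, n m = 0 := Finset.sum_eq_zero (fun m _ => by have := hc m; omega)
      omega
    obtain ⟨m0, hm0⟩ := hpos
    refine ⟨m0, ?_, ?_⟩
    · have h2 : n m0 ≤ 1 := by
        have := Finset.single_le_sum (f := n) (fun _ _ => Nat.zero_le _) (Finset.mem_univ m0)
        omega
      omega
    · intro m hm
      by_contra hc
      have h2 : n m0 + n m ≤ ∑ m : Fin M, n m := by
        have := Finset.add_sum_erase Finset.univ n (Finset.mem_univ m0)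
        have h3 : n m ≤ ∑ k ∈ Finset.univ.erase m0, n k :=
          Finset.single_le_sum (f := n) (fun _ _ => Nat.zero_le _)
            (Finset.mem_erase.mpr ⟨hm, Finset.mem_univ m⟩)
        omega
      omega
  have hsum : ∑ m : Fin M, ((m : ℕ) + 1) * n m = ((m0 : ℕ) + 1) := by
    rw [← Finset.add_sum_erase Finset.univ _ (Finset.mem_univ m0), hm0]
    have : ∑ m ∈ Finset.univ.erase m0, ((m : ℕ) + 1) * n m = 0 :=
      Finset.sum_eq_zero (fun m hm => by rw [hm0u m (Finset.mem_erase.mp hm).1]; ring)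
    omega
  have hl : (m0 : ℕ) + 1 = l := by omega
  constructor
  · have := m0.isLt; omega
  · funext m
    by_cases h : m = m0
    · subst h; simp [hm0, hl]
    · rw [hm0u m h]
      have : ¬((m : ℕ) + 1 = l) := by
        intro hc
        exact h (Fin.ext (by omega))
      simp [this]

lemma key_identity {M l : ℕ} (n : Fin M → ℕ)
    (hT : ∑ m : Fin M, ((m : ℕ) + 1) * n m = l) (hs : 2 ≤ ∑ m : Fin M, n m) :
    Wc M l n + ∑ m ∈ Finset.univ.filter (fun m : Fin M => 1 ≤ n m ∧ (m : ℕ) + 1 < l),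
      Wc M (l - ((m : ℕ) + 1)) (Function.update n m (n m - 1)) = 0 := by
  set s := ∑ m : Fin M, n m with hsdef
  set D := ∏ m : Fin M, (Nat.factorial (n m) : ℂ) with hDdef
  have hD : D ≠ 0 := Finset.prod_ne_zero_iff.mpr
    (fun m _ => Nat.cast_ne_zero.mpr (Nat.factorial_ne_zero _))
  -- split of the weighted sum
  have hsplit : ∑ m : Fin M, ((m : ℕ) + 1) * n m = s + ∑ m : Fin M, (m : ℕ) * n m := by
    rw [hsdef, ← Finset.sum_add_distrib]
    exact Finset.sum_congr rfl (fun m _ => by ring)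
  -- every m with 1 ≤ n m satisfies m+1 < l
  have hK : ∀ m : Fin M, 1 ≤ n m → (m : ℕ) + 1 < l := by
    intro m hm
    have h1 : (m : ℕ) * n m ≤ ∑ m : Fin M, (m : ℕ) * n m :=
      Finset.single_le_sum (f := fun m : Fin M => (m : ℕ) * n m)
        (fun _ _ => Nat.zero_le _) (Finset.mem_univ m)
    have h2 : (m : ℕ) ≤ (m : ℕ) * n m := Nat.le_mul_of_pos_right _ hm
    omega
  have hKset : Finset.univ.filter (fun m : Fin M => 1 ≤ n m ∧ (m : ℕ) + 1 < l)
      = Finset.univ.filter (fun m : Fin M => 1 ≤ n m) := by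
    apply Finset.filter_congr; intro m _
    exact ⟨fun h => h.1, fun h => ⟨h, hK m h⟩⟩
  -- value of each summand
  have hval : ∀ m : Fin M, 1 ≤ n m →
      Wc M (l - ((m : ℕ) + 1)) (Function.update n m (n m - 1)) =
        (-1 : ℂ) ^ (s - 1) * ((l : ℂ) - ((m : ℕ) + 1)) * (Nat.factorial (s - 2) : ℂ)
          * (n m : ℂ) / D := by
    intro m hm
    have hml := hK m hm
    have hsum_upd : ∑ k : Fin M, Function.update n m (n m - 1) k = s - 1 := by
      rw [Finset.sum_update_of_mem (Finset.mem_univ m)]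
      have h1 : s = n m + ∑ k ∈ Finset.univ \ {m}, n k := by
        rw [Finset.sdiff_singleton_eq_erase]
        exact (Finset.add_sum_erase Finset.univ n (Finset.mem_univ m)).symm
      omega
    have hprod_upd : (n m : ℂ) * ∏ k : Fin M, (Nat.factorial (Function.update n m (n m - 1) k) : ℂ) = D := by
      have hfun : (fun k : Fin M => ((Function.update n m (n m - 1) k).factorial : ℂ))
          = Function.update (fun k : Fin M => ((n k).factorial : ℂ)) m (((n m - 1).factorial : ℂ)) :=
        funext (fun k => Function.apply_update (fun _ v => ((v.factorial : ℂ))) n m _ k)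
      calc (n m : ℂ) * ∏ k : Fin M, ((Function.update n m (n m - 1) k).factorial : ℂ)
          = (n m : ℂ) * ∏ k : Fin M,
              Function.update (fun k : Fin M => ((n k).factorial : ℂ)) m (((n m - 1).factorial : ℂ)) k := by
            rw [hfun]
        _ = (n m : ℂ) * (((n m - 1).factorial : ℂ) * ∏ k ∈ Finset.univ \ {m}, ((n k).factorial : ℂ)) := by
            rw [Finset.prod_update_of_mem (Finset.mem_univ m)]
        _ = ((n m * (n m - 1).factorial : ℕ) : ℂ) * ∏ k ∈ Finset.univ \ {m}, ((n k).factorial : ℂ) := by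
            push_cast; ring
        _ = ((n m).factorial : ℂ) * ∏ k ∈ Finset.univ \ {m}, ((n k).factorial : ℂ) := by
            rw [Nat.mul_factorial_pred (by omega : n m ≠ 0)]
        _ = D := by
            rw [hDdef, Finset.sdiff_singleton_eq_erase, mul_comm,
              Finset.prod_erase_mul Finset.univ _ (Finset.mem_univ m)]
    have hprodne : (∏ k : Fin M, (Nat.factorial (Function.update n m (n m - 1) k) : ℂ)) ≠ 0 :=
      Finset.prod_ne_zero_iff.mpr (fun k _ => Nat.cast_ne_zero.mpr (Nat.factorial_ne_zero _))
    have hnm : (n m : ℂ) ≠ 0 := Nat.cast_ne_zero.mpr (by omega)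
    rw [Wc, hsum_upd]
    have hcast : ((l - ((m : ℕ) + 1) : ℕ) : ℂ) = (l : ℂ) - ((m : ℕ) + 1) := by
      push_cast [Nat.cast_sub (le_of_lt hml)]; ring
    have hfact : s - 1 - 1 = s - 2 := by omega
    rw [hcast, hfact, div_eq_div_iff hprodne hD]
    rw [← hprod_upd]
    ring
  rw [hKset]
  rw [Finset.sum_congr rfl (fun m hm => hval m (Finset.mem_filter.mp hm).2)]
  rw [Finset.sum_filter_of_ne (by
    intro m _ hne
    by_contra hc
    apply hne
    have : n m = 0 := by omega
    rw [this]
    push_cast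
    ring)]
  -- now compute the full sum
  have hsum2 : ∑ m : Fin M, (-1 : ℂ) ^ (s - 1) * ((l : ℂ) - ((m : ℕ) + 1)) *
      (Nat.factorial (s - 2) : ℂ) * (n m : ℂ) / D =
      (-1 : ℂ) ^ (s - 1) * (Nat.factorial (s - 2) : ℂ) * ((l : ℂ) * s - l) / D := by
    rw [← Finset.sum_div]
    congr 1
    have h1 : ∑ m : Fin M, ((l : ℂ) - ((m : ℕ) + 1)) * (n m : ℂ)
        = (l : ℂ) * s - l := by
      have hTc : ∑ m : Fin M, (((m : ℕ) : ℂ) + 1) * (n m : ℂ) = (l : ℂ) := by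
        rw [← hT]; push_cast
        exact Finset.sum_congr rfl (fun m _ => by ring)
      have hsc : ∑ m : Fin M, (n m : ℂ) = (s : ℂ) := by rw [hsdef]; push_cast; ring_nf
      calc ∑ m : Fin M, ((l : ℂ) - ((m : ℕ) + 1)) * (n m : ℂ)
          = ∑ m : Fin M, ((l : ℂ) * (n m : ℂ) - (((m : ℕ) : ℂ) + 1) * (n m : ℂ)) :=
            Finset.sum_congr rfl (fun m _ => by ring)
        _ = (l : ℂ) * (∑ m : Fin M, (n m : ℂ)) - ∑ m : Fin M, (((m : ℕ) : ℂ) + 1) * (n m : ℂ) := by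
            rw [Finset.sum_sub_distrib, Finset.mul_sum]
        _ = (l : ℂ) * s - l := by rw [hTc, hsc]
    calc ∑ m : Fin M, (-1 : ℂ) ^ (s - 1) * ((l : ℂ) - ((m : ℕ) + 1)) *
          (Nat.factorial (s - 2) : ℂ) * (n m : ℂ)
        = (-1 : ℂ) ^ (s - 1) * (Nat.factorial (s - 2) : ℂ) *
            ∑ m : Fin M, ((l : ℂ) - ((m : ℕ) + 1)) * (n m : ℂ) := by
          rw [Finset.mul_sum]
          exact Finset.sum_congr rfl (fun m _ => by ring)
      _ = (-1 : ℂ) ^ (s - 1) * (Nat.factorial (s - 2) : ℂ) * ((l : ℂ) * s - l) := by rw [h1]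
  rw [hsum2, Wc, ← hsdef, ← hDdef]
  have hf1 : (Nat.factorial (s - 1) : ℂ) = ((s : ℂ) - 1) * (Nat.factorial (s - 2) : ℂ) := by
    have h2 : (s - 1) * Nat.factorial (s - 1 - 1) = Nat.factorial (s - 1) :=
      Nat.mul_factorial_pred (by omega)
    have h3 : s - 1 - 1 = s - 2 := by omega
    rw [h3] at h2
    rw [← h2]
    push_cast [Nat.cast_sub (by omega : 1 ≤ s)]
    ring
  have hpow : (-1 : ℂ) ^ s = (-1 : ℂ) ^ (s - 1) * (-1) := by
    rw [← pow_succ]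
    congr 1
    omega
  rw [← add_div, _root_.div_eq_zero_iff]
  left
  rw [hf1, hpow]
  ring

lemma prod_comp_update {ι β : Type*} [Fintype ι] [DecidableEq ι] [CommMonoid β]
    (g : ι → ℕ → β) (n : ι → ℕ) (m : ι) (v : ℕ) :
    ∏ k, g k (Function.update n m v k)
      = g m v * ∏ k ∈ Finset.univ.erase m, g k (n k) := by
  rw [← Finset.mul_prod_erase Finset.univ (fun k => g k (Function.update n m v k))
    (Finset.mem_univ m), Function.update_self]
  congr 1
  exact Finset.prod_congr rfl (fun k hk => by
    rw [Function.update_of_ne (Finset.mem_erase.mp hk).1])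

lemma sum_comp_update {ι : Type*} [Fintype ι] [DecidableEq ι]
    (g : ι → ℕ → ℕ) (n : ι → ℕ) (m : ι) (v : ℕ) :
    ∑ k, g k (Function.update n m v k)
      = g m v + ∑ k ∈ Finset.univ.erase m, g k (n k) := by
  rw [← Finset.add_sum_erase Finset.univ (fun k => g k (Function.update n m v k))
    (Finset.mem_univ m), Function.update_self]
  congr 1
  exact Finset.sum_congr rfl (fun k hk => by
    rw [Function.update_of_ne (Finset.mem_erase.mp hk).1])

lemma Fp_update {M : ℕ} (f : ℕ → ℂ) (n : Fin M → ℕ) (m : Fin M) :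
    Fp M f (Function.update n m (n m + 1)) = f ((m : ℕ) + 1) * Fp M f n := by
  rw [Fp, Fp, prod_comp_update (fun (k : Fin M) (v : ℕ) => f ((k : ℕ) + 1) ^ v) n m (n m + 1),
    ← Finset.mul_prod_erase Finset.univ (fun k : Fin M => f ((k : ℕ) + 1) ^ n k) (Finset.mem_univ m)]
  rw [pow_succ]
  ring

-- the double-sum reindexing
lemma reindex (M : ℕ) (hM : 1 ≤ M) (f : ℕ → ℂ) (l : ℕ) :
    ∑ j ∈ (Finset.Ioo 0 l).filter (fun j => j ≤ M),
        f j * (2 * ∑ n ∈ Tset M (l - j), Wc M (l - j) n * Fp M f n)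
      = ∑ n' ∈ Tset M l,
          (∑ m ∈ Finset.univ.filter (fun m : Fin M => 1 ≤ n' m ∧ (m : ℕ) + 1 < l),
            2 * Wc M (l - ((m : ℕ) + 1)) (Function.update n' m (n' m - 1))) * Fp M f n' := by
  have step1 : ∀ j ∈ (Finset.Ioo 0 l).filter (fun j => j ≤ M),
      f j * (2 * ∑ n ∈ Tset M (l - j), Wc M (l - j) n * Fp M f n)
      = ∑ n ∈ Tset M (l - j), f j * (2 * (Wc M (l - j) n * Fp M f n)) := by
    intro j _
    rw [Finset.mul_sum, Finset.mul_sum]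
  rw [Finset.sum_congr rfl step1, Finset.sum_sigma']
  have step2 : ∀ n' ∈ Tset M l,
      (∑ m ∈ Finset.univ.filter (fun m : Fin M => 1 ≤ n' m ∧ (m : ℕ) + 1 < l),
        2 * Wc M (l - ((m : ℕ) + 1)) (Function.update n' m (n' m - 1))) * Fp M f n'
      = ∑ m ∈ Finset.univ.filter (fun m : Fin M => 1 ≤ n' m ∧ (m : ℕ) + 1 < l),
        2 * Wc M (l - ((m : ℕ) + 1)) (Function.update n' m (n' m - 1)) * Fp M f n' := by
    intro n' _
    rw [Finset.sum_mul]
  rw [Finset.sum_congr rfl step2, Finset.sum_sigma']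
  refine Finset.sum_nbij'
    (i := fun p => ⟨Function.update p.2 ⟨(p.1 - 1) % M, Nat.mod_lt _ hM⟩
        (p.2 ⟨(p.1 - 1) % M, Nat.mod_lt _ hM⟩ + 1), ⟨(p.1 - 1) % M, Nat.mod_lt _ hM⟩⟩)
    (j := fun p => ⟨(p.2 : ℕ) + 1, Function.update p.1 p.2 (p.1 p.2 - 1)⟩)
    ?_ ?_ ?_ ?_ ?_
  · -- hi : forward membership
    rintro ⟨j, n⟩ hp
    obtain ⟨hj, hn⟩ := Finset.mem_sigma.mp hp
    rw [Finset.mem_filter, Finset.mem_Ioo] at hj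
    obtain ⟨⟨hj0, hjl⟩, hjM⟩ := hj
    dsimp only at hn hj0 hjl hjM ⊢
    have hmod : (j - 1) % M = j - 1 := Nat.mod_eq_of_lt (by omega)
    generalize hgen : (⟨(j - 1) % M, Nat.mod_lt _ hM⟩ : Fin M) = m
    have hmval : (m : ℕ) = j - 1 := by rw [← hgen]; exact hmod
    have hnT := mem_Tset.mp hn
    refine Finset.mem_sigma.mpr ⟨mem_Tset.mpr ?_, ?_⟩
    · rw [sum_comp_update (fun (k : Fin M) (v : ℕ) => ((k : ℕ) + 1) * v) n m (n m + 1)]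
      have hB : ((m : ℕ) + 1) * n m + ∑ k ∈ Finset.univ.erase m, ((k : ℕ) + 1) * n k
          = ∑ k : Fin M, ((k : ℕ) + 1) * n k :=
        Finset.add_sum_erase Finset.univ (fun k : Fin M => ((k : ℕ) + 1) * n k)
          (Finset.mem_univ m)
      have hC : ((m : ℕ) + 1) * (n m + 1) = ((m : ℕ) + 1) * n m + ((m : ℕ) + 1) := by ring
      omega
    · rw [Finset.mem_filter]
      dsimp only
      refine ⟨Finset.mem_univ m, ?_, by omega⟩
      rw [Function.update_self]
      omega
  · -- hj : backward membership
    rintro ⟨n', m⟩ hp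
    obtain ⟨hn', hm⟩ := Finset.mem_sigma.mp hp
    rw [Finset.mem_filter] at hm
    obtain ⟨-, hm1, hml⟩ := hm
    dsimp only at hn' hm1 hml ⊢
    have hnT := mem_Tset.mp hn'
    refine Finset.mem_sigma.mpr ⟨?_, mem_Tset.mpr ?_⟩
    · rw [Finset.mem_filter, Finset.mem_Ioo]
      dsimp only
      exact ⟨⟨by omega, hml⟩, by have := m.isLt; omega⟩
    · dsimp only
      rw [sum_comp_update (fun (k : Fin M) (v : ℕ) => ((k : ℕ) + 1) * v) n' m (n' m - 1)]
      have hB : ((m : ℕ) + 1) * n' m + ∑ k ∈ Finset.univ.erase m, ((k : ℕ) + 1) * n' k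
          = ∑ k : Fin M, ((k : ℕ) + 1) * n' k :=
        Finset.add_sum_erase Finset.univ (fun k : Fin M => ((k : ℕ) + 1) * n' k)
          (Finset.mem_univ m)
      have hC : ((m : ℕ) + 1) * (n' m - 1) + ((m : ℕ) + 1) = ((m : ℕ) + 1) * n' m := by
        have h1 : n' m - 1 + 1 = n' m := by omega
        calc ((m : ℕ) + 1) * (n' m - 1) + ((m : ℕ) + 1)
            = ((m : ℕ) + 1) * (n' m - 1 + 1) := by ring
          _ = ((m : ℕ) + 1) * n' m := by rw [h1]
      omega
  · -- left inverse
    rintro ⟨j, n⟩ hp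
    obtain ⟨hj, -⟩ := Finset.mem_sigma.mp hp
    rw [Finset.mem_filter, Finset.mem_Ioo] at hj
    obtain ⟨⟨hj0, hjl⟩, hjM⟩ := hj
    dsimp only at hj0 hjl hjM ⊢
    have hmod : (j - 1) % M = j - 1 := Nat.mod_eq_of_lt (by omega)
    generalize hgen : (⟨(j - 1) % M, Nat.mod_lt _ hM⟩ : Fin M) = m
    have hmval : (m : ℕ) = j - 1 := by rw [← hgen]; exact hmod
    refine Sigma.ext (by dsimp only; omega) (heq_of_eq ?_)
    rw [Function.update_self, Function.update_idem, Nat.add_sub_cancel,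
      Function.update_eq_self]
  · -- right inverse
    rintro ⟨n', m⟩ hp
    obtain ⟨-, hm⟩ := Finset.mem_sigma.mp hp
    rw [Finset.mem_filter] at hm
    obtain ⟨-, hm1, -⟩ := hm
    dsimp only at hm1 ⊢
    have hmeq : (⟨((m : ℕ) + 1 - 1) % M, Nat.mod_lt _ hM⟩ : Fin M) = m :=
      Fin.ext (by simp [Nat.mod_eq_of_lt m.isLt])
    rw [hmeq]
    refine Sigma.ext ?_ (heq_of_eq rfl)
    dsimp only
    rw [Function.update_self, Function.update_idem]
    have : n' m - 1 + 1 = n' m := by omega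
    rw [this, Function.update_eq_self]
  · -- values
    rintro ⟨j, n⟩ hp
    obtain ⟨hj, hn⟩ := Finset.mem_sigma.mp hp
    rw [Finset.mem_filter, Finset.mem_Ioo] at hj
    obtain ⟨⟨hj0, hjl⟩, hjM⟩ := hj
    dsimp only at hn hj0 hjl hjM ⊢
    have hmod : (j - 1) % M = j - 1 := Nat.mod_eq_of_lt (by omega)
    generalize hgen : (⟨(j - 1) % M, Nat.mod_lt _ hM⟩ : Fin M) = m
    have hmval : (m : ℕ) = j - 1 := by rw [← hgen]; exact hmod
    have hjm : (m : ℕ) + 1 = j := by omega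
    rw [Function.update_self, Function.update_idem, Nat.add_sub_cancel,
      Function.update_eq_self, Fp_update, hjm]
    have h2 : l - ((j - 1) % M + 1) = l - j := by omega
    rw [h2]
    ring

lemma waring_core (M : ℕ) (hM : 1 ≤ M) (f q : ℕ → ℂ)
    (hf : ∀ j, M < j → f j = 0)
    (hrec : ∀ l, 1 ≤ l →
      q l = -(∑ j ∈ Finset.Ioo 0 l, f j * q (l - j)) - 2 * l * f l) :
    ∀ l, 1 ≤ l → q l = 2 * ∑ n ∈ Tset M l, Wc M l n * Fp M f n := by
  intro l
  induction l using Nat.strong_induction_on with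
  | _ l IH =>
  intro hl
  rw [hrec l hl]
  have hfilter : ∑ j ∈ Finset.Ioo 0 l, f j * q (l - j)
      = ∑ j ∈ (Finset.Ioo 0 l).filter (fun j => j ≤ M), f j * q (l - j) := by
    refine (Finset.sum_filter_of_ne ?_).symm
    intro j _ hne
    by_contra hc
    exact hne (by rw [hf j (by omega)]; ring)
  have hIH : ∀ j ∈ (Finset.Ioo 0 l).filter (fun j => j ≤ M),
      f j * q (l - j) = f j * (2 * ∑ n ∈ Tset M (l - j), Wc M (l - j) n * Fp M f n) := by
    intro j hj
    obtain ⟨hj1, -⟩ := Finset.mem_filter.mp hj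
    obtain ⟨hj0, hjl⟩ := Finset.mem_Ioo.mp hj1
    rw [IH (l - j) (by omega) (by omega)]
  rw [hfilter, Finset.sum_congr rfl hIH, reindex M hM f l]
  -- key cancellation
  have key : ∑ n' ∈ Tset M l,
      ((∑ m ∈ Finset.univ.filter (fun m : Fin M => 1 ≤ n' m ∧ (m : ℕ) + 1 < l),
        2 * Wc M (l - ((m : ℕ) + 1)) (Function.update n' m (n' m - 1)))
        + 2 * Wc M l n') * Fp M f n' = -(2 * l) * f l := by
    rw [← Finset.sum_filter_add_sum_filter_not (Tset M l) (fun n' => ∑ m : Fin M, n' m = 1)]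
    have hz : ∑ n' ∈ (Tset M l).filter (fun n' => ¬(∑ m : Fin M, n' m = 1)),
        ((∑ m ∈ Finset.univ.filter (fun m : Fin M => 1 ≤ n' m ∧ (m : ℕ) + 1 < l),
          2 * Wc M (l - ((m : ℕ) + 1)) (Function.update n' m (n' m - 1)))
          + 2 * Wc M l n') * Fp M f n' = 0 := by
      refine Finset.sum_eq_zero (fun n' hn' => ?_)
      obtain ⟨hT, hs1⟩ := Finset.mem_filter.mp hn'
      have hT' := mem_Tset.mp hT
      have hs2 : 2 ≤ ∑ m : Fin M, n' m := by
        rcases Nat.lt_or_ge (∑ m : Fin M, n' m) 2 with h | h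
        · exfalso
          interval_cases h' : (∑ m : Fin M, n' m)
          · have hz0 : ∀ m : Fin M, n' m = 0 :=
              fun m => Finset.sum_eq_zero_iff.mp h' m (Finset.mem_univ m)
            have h0 : ∑ m : Fin M, ((m : ℕ) + 1) * n' m = 0 :=
              Finset.sum_eq_zero (fun m _ => by rw [hz0 m]; ring)
            omega
          · exact hs1 rfl
        · exact h
      have hk := key_identity n' hT' hs2
      have hms : ∑ m ∈ Finset.univ.filter (fun m : Fin M => 1 ≤ n' m ∧ (m : ℕ) + 1 < l),
          2 * Wc M (l - ((m : ℕ) + 1)) (Function.update n' m (n' m - 1))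
          = 2 * ∑ m ∈ Finset.univ.filter (fun m : Fin M => 1 ≤ n' m ∧ (m : ℕ) + 1 < l),
          Wc M (l - ((m : ℕ) + 1)) (Function.update n' m (n' m - 1)) := by
        rw [Finset.mul_sum]
      rw [hms]
      linear_combination (2 * Fp M f n') * hk
    rw [hz, add_zero]
    by_cases hlM : l ≤ M
    · set e := fun m : Fin M => if (m : ℕ) + 1 = l then 1 else 0 with he
      have hm0 : (⟨l - 1, by omega⟩ : Fin M) ∈ Finset.univ := Finset.mem_univ _
      set m0 : Fin M := ⟨l - 1, by omega⟩ with hm0def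
      have hm0v : (m0 : ℕ) + 1 = l := by rw [hm0def]; simp; omega
      have heother : ∀ m : Fin M, m ≠ m0 → e m = 0 := by
        intro m hm
        rw [he]
        have : ¬((m : ℕ) + 1 = l) := fun hc => hm (Fin.ext (by omega))
        simp [this]
      have hem0 : e m0 = 1 := by rw [he]; simp [hm0v]
      have hsum_e : ∑ m : Fin M, e m = 1 := by
        rw [Finset.sum_eq_single m0 (fun m _ hm => heother m hm) (fun h => absurd hm0 h), hem0]
      have hTsum_e : ∑ m : Fin M, ((m : ℕ) + 1) * e m = l := by
        rw [Finset.sum_eq_single m0 (fun m _ hm => by rw [heother m hm]; ring)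
          (fun h => absurd hm0 h), hem0, hm0v]; ring
      have hfilter_eq : (Tset M l).filter (fun n' => ∑ m : Fin M, n' m = 1) = {e} := by
        ext n'
        rw [Finset.mem_filter, Finset.mem_singleton]
        constructor
        · rintro ⟨hT, hs⟩
          exact (Tset_single (mem_Tset.mp hT) hs).2
        · rintro rfl
          exact ⟨mem_Tset.mpr hTsum_e, hsum_e⟩
      rw [hfilter_eq, Finset.sum_singleton]
      -- inner e = 0
      have hinner_e : ∑ m ∈ Finset.univ.filter (fun m : Fin M => 1 ≤ e m ∧ (m : ℕ) + 1 < l),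
          2 * Wc M (l - ((m : ℕ) + 1)) (Function.update e m (e m - 1)) = 0 := by
        refine Finset.sum_eq_zero (fun m hm => ?_)
        obtain ⟨-, h1, h2⟩ := Finset.mem_filter.mp hm
        exfalso
        have : m = m0 := by
          by_contra hc
          rw [heother m hc] at h1; omega
        subst this
        omega
      -- Wc M l e = -l
      have hW : Wc M l e = -l := by
        rw [Wc, hsum_e]
        have hprod : ∏ m : Fin M, (Nat.factorial (e m) : ℂ) = 1 := by
          refine Finset.prod_eq_one (fun m _ => ?_)
          rcases eq_or_ne m m0 with rfl | h
          · rw [hem0]; simp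
          · rw [heother m h]; simp
        rw [hprod]
        simp
      -- Fp e = f l
      have hFp : Fp M f e = f l := by
        rw [Fp]
        rw [Finset.prod_eq_single m0 (fun m _ hm => by rw [heother m hm, pow_zero])
          (fun h => absurd hm0 h), hem0, pow_one, hm0v]
      rw [hinner_e, hW, hFp]
      ring
    · have hempty : (Tset M l).filter (fun n' => ∑ m : Fin M, n' m = 1) = ∅ := by
        refine Finset.filter_eq_empty_iff.mpr (fun {n'} hn' hs => ?_)
        exact hlM (Tset_single (mem_Tset.mp hn') hs).1
      rw [hempty, Finset.sum_empty, hf l (by omega)]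
      ring
  have hsplit2 : ∑ n' ∈ Tset M l,
      ((∑ m ∈ Finset.univ.filter (fun m : Fin M => 1 ≤ n' m ∧ (m : ℕ) + 1 < l),
        2 * Wc M (l - ((m : ℕ) + 1)) (Function.update n' m (n' m - 1)))
        + 2 * Wc M l n') * Fp M f n'
      = (∑ n' ∈ Tset M l,
          (∑ m ∈ Finset.univ.filter (fun m : Fin M => 1 ≤ n' m ∧ (m : ℕ) + 1 < l),
            2 * Wc M (l - ((m : ℕ) + 1)) (Function.update n' m (n' m - 1))) * Fp M f n')
        + 2 * ∑ n' ∈ Tset M l, Wc M l n' * Fp M f n' := by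
    rw [Finset.mul_sum, ← Finset.sum_add_distrib]
    exact Finset.sum_congr rfl (fun n' _ => by ring)
  rw [hsplit2] at key
  linear_combination -key

/-- **Even power sums of the roots of a parity polynomial.** Let `P` be monic of degree
`N ≥ 2` over `ℂ` with roots `x 1, …, x N` (with multiplicity) and `P(−X) = (−1)^N P(X)`,
and let `σ k` be the `k`-th elementary symmetric function of the roots.  With
`M := ⌊N/2⌋`, for every `l ≥ 1` the normalized power sum `m_{2l}(N) = (1/N) Σ_i (x i)^{2l}`
equals `(2/N)` times the sum, over all tuples `(n_1, …, n_M)` of natural numbers with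
`Σ_{m=1}^M m·n_m = l`, of
`(−1)^(Σ_m n_m) · l · (Σ_m n_m − 1)! / (n_1!⋯n_M!) · σ_2^{n_1} σ_4^{n_2} ⋯ σ_{2M}^{n_M}`. -/
theorem even_power_sums_of_parity (N : ℕ) (hN : 2 ≤ N) (x : Fin N → ℂ)
    (P : Polynomial ℂ) (hP : P = ∏ i, (X - C (x i)))
    (hpar : P.comp (-X) = (-1) ^ N * P)
    (σ : ℕ → ℂ)
    (hσ : ∀ k, σ k = ∑ s ∈ Finset.powersetCard k (Finset.univ : Finset (Fin N)), ∏ i ∈ s, x i)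
    (M : ℕ) (hM : M = N / 2)
    (l : ℕ) (hl : 1 ≤ l) :
    (1 / (N : ℂ)) * ∑ i, x i ^ (2 * l) =
      (2 / (N : ℂ)) *
        ∑ n ∈ (Fintype.piFinset fun _ : Fin M => Finset.range (l + 1)).filter
            (fun n => ∑ m : Fin M, ((m : ℕ) + 1) * n m = l),
          (-1 : ℂ) ^ (∑ m : Fin M, n m) * l *
            (Nat.factorial ((∑ m : Fin M, n m) - 1) : ℂ) /
            (∏ m : Fin M, (Nat.factorial (n m) : ℂ)) *
            ∏ m : Fin M, σ (2 * ((m : ℕ) + 1)) ^ n m := by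
  have hσodd : ∀ k, Odd k → σ k = 0 := fun k hk => by
    rw [hσ]; exact sigma_odd_zero N x (parity_prod N x P hP hpar) k hk
  set f : ℕ → ℂ := fun j => σ (2 * j) with hf_def
  set q : ℕ → ℂ := fun k => ∑ i, x i ^ (2 * k) with hq_def
  have hM1 : 1 ≤ M := by omega
  have hf0 : ∀ j, M < j → f j = 0 := by
    intro j hj
    rw [hf_def]
    simp only []
    rw [hσ, Finset.powersetCard_eq_empty.mpr (by simp; omega), Finset.sum_empty]
  -- the recursion from Newton's identities
  have hrec : ∀ l, 1 ≤ l →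
      q l = -(∑ j ∈ Finset.Ioo 0 l, f j * q (l - j)) - 2 * l * f l := by
    intro l hl
    have hnewton := newton_concrete N x (2 * l) (by omega)
    simp only [← hσ] at hnewton
    -- reindex antidiagonal sum
    have hA : ∑ a ∈ (Finset.HasAntidiagonal.antidiagonal (2 * l)).filter (fun a => a.1 ∈ Set.Ioo 0 (2 * l)),
          (-1:ℂ)^a.1 * σ a.1 * (∑ i, x i ^ a.2)
        = ∑ i ∈ Finset.Ioo 0 (2 * l), (-1:ℂ)^i * σ i * (∑ j, x j ^ (2 * l - i)) := by
      refine Finset.sum_nbij' (i := fun a => a.1) (j := fun i => (i, 2 * l - i))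
        ?_ ?_ ?_ ?_ ?_
      · rintro ⟨a1, a2⟩ ha
        obtain ⟨h1, h2⟩ := Finset.mem_filter.mp ha
        rw [Finset.HasAntidiagonal.mem_antidiagonal] at h1
        obtain ⟨h3, h4⟩ := h2
        dsimp only at h1 h3 h4 ⊢
        rw [Finset.mem_Ioo]
        exact ⟨h3, h4⟩
      · intro i hi
        obtain ⟨h1, h2⟩ := Finset.mem_Ioo.mp hi
        refine Finset.mem_filter.mpr ⟨Finset.HasAntidiagonal.mem_antidiagonal.mpr (by show i + (2 * l - i) = 2 * l; omega), h1, h2⟩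
      · rintro ⟨a1, a2⟩ ha
        obtain ⟨h1, -⟩ := Finset.mem_filter.mp ha
        rw [Finset.HasAntidiagonal.mem_antidiagonal] at h1
        dsimp only at h1 ⊢
        rw [Prod.mk.injEq]
        exact ⟨rfl, by omega⟩
      · intro i hi
        rfl
      · rintro ⟨a1, a2⟩ ha
        obtain ⟨h1, -⟩ := Finset.mem_filter.mp ha
        rw [Finset.HasAntidiagonal.mem_antidiagonal] at h1
        dsimp only at h1 ⊢
        have h2 : a2 = 2 * l - a1 := by omega
        rw [h2]
    rw [hA] at hnewton
    -- restrict to even indices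
    have hEven : ∑ i ∈ Finset.Ioo 0 (2 * l), (-1:ℂ)^i * σ i * (∑ j, x j ^ (2 * l - i))
        = ∑ i ∈ (Finset.Ioo 0 (2 * l)).filter (fun i => Even i),
            (-1:ℂ)^i * σ i * (∑ j, x j ^ (2 * l - i)) := by
      refine (Finset.sum_filter_of_ne ?_).symm
      intro i _ hne
      by_contra hc
      exact hne (by rw [hσodd i (Nat.not_even_iff_odd.mp hc)]; ring)
    rw [hEven] at hnewton
    -- reindex i = 2 j
    have hHalf : ∑ i ∈ (Finset.Ioo 0 (2 * l)).filter (fun i => Even i),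
          (-1:ℂ)^i * σ i * (∑ j, x j ^ (2 * l - i))
        = ∑ j ∈ Finset.Ioo 0 l, f j * q (l - j) := by
      refine Finset.sum_nbij' (i := fun i => i / 2) (j := fun j => 2 * j) ?_ ?_ ?_ ?_ ?_
      · intro i hi
        obtain ⟨h1, h2⟩ := Finset.mem_filter.mp hi
        obtain ⟨h3, h4⟩ := Finset.mem_Ioo.mp h1
        obtain ⟨c, hc⟩ := h2
        rw [Finset.mem_Ioo]
        omega
      · intro j hj
        obtain ⟨h1, h2⟩ := Finset.mem_Ioo.mp hj
        exact Finset.mem_filter.mpr ⟨Finset.mem_Ioo.mpr (by omega), ⟨j, by omega⟩⟩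
      · intro i hi
        obtain ⟨h1, h2⟩ := Finset.mem_filter.mp hi
        obtain ⟨h3, h4⟩ := Finset.mem_Ioo.mp h1
        obtain ⟨c, hc⟩ := h2
        omega
      · intro j hj
        omega
      · intro i hi
        obtain ⟨h1, h2⟩ := Finset.mem_filter.mp hi
        obtain ⟨c, hc⟩ := h2
        obtain ⟨h3, h4⟩ := Finset.mem_Ioo.mp h1
        have he1 : 2 * (i / 2) = i := by omega
        have he2 : 2 * (l - i / 2) = 2 * l - i := by omega
        rw [hf_def, hq_def]
        simp only []
        rw [he1, he2]
        have hpow : (-1:ℂ)^i = 1 := Even.neg_one_pow ⟨c, hc⟩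
        rw [hpow]
        ring
    rw [hHalf] at hnewton
    have hsign : (-1:ℂ)^(2 * l + 1) = -1 := Odd.neg_one_pow ⟨l, by ring⟩
    rw [hsign] at hnewton
    rw [hq_def]
    simp only []
    rw [hnewton, hf_def]
    simp only []
    push_cast
    ring
  have hq := waring_core M hM1 f q hf0 hrec l hl
  rw [hq_def] at hq
  simp only [] at hq
  rw [hq]
  have hsum : ∑ n ∈ Tset M l, Wc M l n * Fp M f n
      = ∑ n ∈ (Fintype.piFinset fun _ : Fin M => Finset.range (l + 1)).filter
            (fun n => ∑ m : Fin M, ((m : ℕ) + 1) * n m = l),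
          (-1 : ℂ) ^ (∑ m : Fin M, n m) * l *
            (Nat.factorial ((∑ m : Fin M, n m) - 1) : ℂ) /
            (∏ m : Fin M, (Nat.factorial (n m) : ℂ)) *
            ∏ m : Fin M, σ (2 * ((m : ℕ) + 1)) ^ n m := by
    refine Finset.sum_congr rfl (fun n _ => ?_)
    rw [Wc, Fp, hf_def]
  rw [hsum]
  ring
end

section
/- Stabilized moments of Chebyshev T zeros (correction of Case's claim): for every l ≥ 1 and every N ≥ l + 1, m_{2l}^{(T)}(N) = binom(2l, l)/4^l, i.e. (1/N) Σ_{i=1}^N (cos((2i−1)π/(2N)))^{2l} = binom(2l, l)/2^{2l}. -/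
open Finset Real

open Complex in
/-- Geometric-sum vanishing: if `N ∤ d` then `∑_{i<N} exp(2πI d/N)^i = 0`. -/
lemma cheb_geom_zero {N : ℕ} (hN : 0 < N) (d : ℤ) (hd : ¬ (N:ℤ) ∣ d) :
    ∑ i ∈ Finset.range N, Complex.exp (2 * (Real.pi:ℂ) * I * d / N) ^ i = 0 := by
  have hN0 : (N:ℂ) ≠ 0 := Nat.cast_ne_zero.mpr hN.ne'
  have hr : Complex.exp (2 * (Real.pi:ℂ) * I * d / N) ≠ 1 := by
    intro h
    rw [Complex.exp_eq_one_iff] at h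
    obtain ⟨n, hn⟩ := h
    apply hd
    refine ⟨n, ?_⟩
    have h2 : (2 * (Real.pi:ℂ) * I) ≠ 0 := by
      simp [Real.pi_ne_zero, Complex.I_ne_zero]
    have : (d : ℂ) = N * n := by
      field_simp at hn
      have : (d:ℂ) * (2 * (Real.pi:ℂ) * I) = ((N:ℂ) * n) * (2 * (Real.pi:ℂ) * I) := by
        linear_combination (2 * (Real.pi:ℂ) * I) * hn
      exact mul_right_cancel₀ h2 this
    exact_mod_cast this
  rw [geom_sum_eq hr, ← Complex.exp_nat_mul]
  have : (N:ℂ) * (2 * (Real.pi:ℂ) * I * d / N) = d * (2 * (Real.pi:ℂ) * I) := by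
    field_simp
  rw [this, Complex.exp_int_mul_two_pi_mul_I, sub_self, zero_div]

open Complex in
/-- Sum of a nontrivial character over Chebyshev nodes vanishes. -/
lemma cheb_inner_zero {N : ℕ} (hN : 0 < N) (d : ℤ) (hd : ¬ (N:ℤ) ∣ d) :
    ∑ i ∈ Finset.range N,
      Complex.exp ((2 * (i:ℂ) + 1) * (Real.pi:ℂ) / (2*N) * I) ^ (2*d) = 0 := by
  have hN0 : (N:ℂ) ≠ 0 := Nat.cast_ne_zero.mpr hN.ne'
  have step : ∀ i ∈ Finset.range N,
      Complex.exp ((2 * (i:ℂ) + 1) * (Real.pi:ℂ) / (2*N) * I) ^ (2*d)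
        = Complex.exp ((Real.pi:ℂ) * I * d / N) *
          Complex.exp (2 * (Real.pi:ℂ) * I * d / N) ^ i := by
    intro i _
    rw [← Complex.exp_int_mul, ← Complex.exp_nat_mul, ← Complex.exp_add]
    congr 1
    push_cast
    field_simp
    ring
  rw [Finset.sum_congr rfl step, ← Finset.mul_sum, cheb_geom_zero hN d hd, mul_zero]

open Complex in
lemma cheb_complex_sum (l N : ℕ) (hN : l + 1 ≤ N) :
    ∑ i ∈ Finset.range N,
      Complex.cos ((2 * (i:ℂ) + 1) * (Real.pi:ℂ) / (2*N)) ^ (2*l)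
      = N * (Nat.choose (2*l) l) / 4 ^ l := by
  have hNpos : 0 < N := lt_of_lt_of_le l.succ_pos hN
  set u : ℕ → ℂ := fun i => Complex.exp ((2 * (i:ℂ) + 1) * (Real.pi:ℂ) / (2*N) * I)
    with hu_def
  have hu0 : ∀ i, u i ≠ 0 := fun i => Complex.exp_ne_zero _
  -- expand cos^{2l}
  have expand : ∀ i : ℕ, Complex.cos ((2 * (i:ℂ) + 1) * (Real.pi:ℂ) / (2*N)) ^ (2*l)
      = (∑ j ∈ Finset.range (2*l+1),
          (Nat.choose (2*l) j : ℂ) * u i ^ (2*(j:ℤ) - 2*l)) / 4 ^ l := by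
    intro i
    rw [Complex.cos]
    rw [div_pow, neg_mul, Complex.exp_neg]
    rw [add_pow]
    have h4 : (2:ℂ) ^ (2*l) = 4 ^ l := by
      rw [pow_mul]; norm_num
    rw [h4]
    congr 1
    refine Finset.sum_congr rfl fun j hj => ?_
    rw [Finset.mem_range] at hj
    have hjle : j ≤ 2*l := Nat.lt_succ_iff.mp hj
    have : u i ^ j * (u i)⁻¹ ^ (2*l - j) = u i ^ (2*(j:ℤ) - 2*l) := by
      rw [inv_pow, ← zpow_natCast (u i) j, ← zpow_natCast (u i) (2*l - j),
        ← zpow_neg, ← zpow_add₀ (hu0 i)]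
      congr 1
      have : ((2*l - j : ℕ) : ℤ) = 2*l - j := by
        push_cast [Nat.cast_sub hjle]; ring
      rw [this]; ring
    rw [this]; ring
  rw [Finset.sum_congr rfl fun i _ => expand i, ← Finset.sum_div]
  rw [Finset.sum_comm]
  have main : ∑ j ∈ Finset.range (2*l+1), ∑ i ∈ Finset.range N,
      (Nat.choose (2*l) j : ℂ) * u i ^ (2*(j:ℤ) - 2*l)
      = N * (Nat.choose (2*l) l) := by
    rw [Finset.sum_eq_single l]
    · have : ∀ i ∈ Finset.range N,
          (Nat.choose (2*l) l : ℂ) * u i ^ (2*(l:ℤ) - 2*l)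
            = (Nat.choose (2*l) l : ℂ) := by
        intro i _
        have : (2*(l:ℤ) - 2*l) = 0 := by ring
        rw [this, zpow_zero, mul_one]
      rw [Finset.sum_congr rfl this, Finset.sum_const, Finset.card_range,
        nsmul_eq_mul]
    · intro j hj hjne
      have hd : ¬ (N:ℤ) ∣ ((j:ℤ) - l) := by
        intro hdvd
        have hne : (j:ℤ) - l ≠ 0 := by
          intro h
          exact hjne (by omega : j = l)
        have := Int.le_of_dvd (abs_pos.mpr hne) ((dvd_abs _ _).mpr hdvd)
        rw [Finset.mem_range] at hj
        have habs : |(j:ℤ) - l| ≤ l := abs_le.mpr ⟨by omega, by omega⟩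
        omega
      have : ∀ i ∈ Finset.range N, u i ^ (2*(j:ℤ) - 2*l)
          = u i ^ (2*((j:ℤ) - l)) := by
        intro i _; congr 1; ring
      rw [← Finset.mul_sum, Finset.sum_congr rfl this,
        cheb_inner_zero hNpos _ hd, mul_zero]
    · intro h
      exact absurd (Finset.mem_range.mpr (by omega)) h
  rw [main]

/-- **Stabilized moments of Chebyshev `T` zeros (correction of Case's claim).**
For every `l ≥ 1` and every `N ≥ l + 1`,
`m_{2l}^{(T)}(N) = (1/N) Σ_{i=1}^N (cos((2i−1)π/(2N)))^{2l} = binom(2l, l)/4^l`. -/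
theorem chebyshevT_zero_moments_stabilized (l N : ℕ) (hl : 1 ≤ l) (hN : l + 1 ≤ N) :
    (1 / (N : ℝ)) *
        ∑ i ∈ Finset.range N,
          (Real.cos ((2 * (i : ℝ) + 1) * Real.pi / (2 * N))) ^ (2 * l) =
      (Nat.choose (2 * l) l : ℝ) / 4 ^ l := by
  have hNpos : 0 < N := lt_of_lt_of_le l.succ_pos hN
  have hNR : (N:ℝ) ≠ 0 := Nat.cast_ne_zero.mpr hNpos.ne'
  have key : (∑ i ∈ Finset.range N,
      (Real.cos ((2 * (i : ℝ) + 1) * Real.pi / (2 * N))) ^ (2 * l))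
      = N * (Nat.choose (2*l) l) / 4 ^ l := by
    have hc := cheb_complex_sum l N hN
    rw [← Complex.ofReal_inj]
    push_cast [Complex.ofReal_cos]
    convert hc using 1
  rw [key]
  field_simp
end

section
/- Moments of the zeros of T_4 in terms of Chebyshev polynomials: for every l ≥ 1, m_{2l}^{(T)}(4) = T_l(√2)/(2√2)^l, i.e. (1/4) Σ_{i=1}^4 (cos((2i−1)π/8))^{2l} = T_l(√2)/(2√2)^l, where T_l denotes the l-th Chebyshev polynomial of the first kind evaluated at the real number √2. -/
open Finset Real Polynomial

lemma teval_sqrt_two : ∀ n : ℕ, (Polynomial.Chebyshev.T ℝ n).eval (Real.sqrt 2)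
    = ((Real.sqrt 2 + 1) ^ n + (Real.sqrt 2 - 1) ^ n) / 2 := by
  have hs2 : Real.sqrt 2 ^ 2 = 2 := Real.sq_sqrt (by norm_num)
  have key : ∀ n : ℕ,
      (Polynomial.Chebyshev.T ℝ n).eval (Real.sqrt 2)
        = ((Real.sqrt 2 + 1) ^ n + (Real.sqrt 2 - 1) ^ n) / 2 ∧
      (Polynomial.Chebyshev.T ℝ (n + 1)).eval (Real.sqrt 2)
        = ((Real.sqrt 2 + 1) ^ (n + 1) + (Real.sqrt 2 - 1) ^ (n + 1)) / 2 := by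
    intro n
    induction n with
    | zero =>
      constructor
      · simp [Polynomial.Chebyshev.T_zero]
      · simp [Polynomial.Chebyshev.T_one]
    | succ k ih =>
      refine ⟨ih.2, ?_⟩
      have hrec : Polynomial.Chebyshev.T ℝ ((k : ℤ) + 2)
          = 2 * Polynomial.X * Polynomial.Chebyshev.T ℝ ((k : ℤ) + 1)
            - Polynomial.Chebyshev.T ℝ k := Polynomial.Chebyshev.T_add_two ℝ k
      have hcast : ((k + 1 : ℕ) : ℤ) + 1 = (k : ℤ) + 2 := by push_cast; ring
      rw [hcast, hrec]
      simp only [Polynomial.eval_sub, Polynomial.eval_mul, Polynomial.eval_ofNat,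
        Polynomial.eval_X]
      have h1 := ih.1
      have h2 : (Polynomial.Chebyshev.T ℝ ((k : ℤ) + 1)).eval (Real.sqrt 2)
          = ((Real.sqrt 2 + 1) ^ (k + 1) + (Real.sqrt 2 - 1) ^ (k + 1)) / 2 := by
        have : ((k + 1 : ℕ) : ℤ) = (k : ℤ) + 1 := by push_cast; ring
        rw [← this]; exact ih.2
      rw [h2, h1]
      have e1 : (Real.sqrt 2 + 1) ^ (k + 1 + 1) = (Real.sqrt 2 + 1) ^ k * (Real.sqrt 2 + 1) ^ 2 := by
        ring
      have e2 : (Real.sqrt 2 - 1) ^ (k + 1 + 1) = (Real.sqrt 2 - 1) ^ k * (Real.sqrt 2 - 1) ^ 2 := by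
        ring
      rw [e1, e2]
      have p1 : (Real.sqrt 2 + 1) ^ (k + 1) = (Real.sqrt 2 + 1) ^ k * (Real.sqrt 2 + 1) := by ring
      have p2 : (Real.sqrt 2 - 1) ^ (k + 1) = (Real.sqrt 2 - 1) ^ k * (Real.sqrt 2 - 1) := by ring
      rw [p1, p2]
      linear_combination (((Real.sqrt 2 + 1) ^ k + (Real.sqrt 2 - 1) ^ k) / 2) * hs2
  exact fun n => (key n).1

/-- **Moments of the zeros of `T₄` in terms of Chebyshev polynomials.** For every `l ≥ 1`,
`m_{2l}^{(T)}(4) = (1/4) Σ_{i=1}^4 (cos((2i−1)π/8))^{2l} = T_l(√2)/(2√2)^l`,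
where `T_l` is the `l`-th Chebyshev polynomial of the first kind. -/
theorem chebyshevT_zero_moments_deg_four (l : ℕ) (hl : 1 ≤ l) :
    (1 / (4 : ℝ)) *
        ∑ i ∈ Finset.range 4,
          (Real.cos ((2 * (i : ℝ) + 1) * Real.pi / 8)) ^ (2 * l) =
      (Polynomial.Chebyshev.T ℝ l).eval (Real.sqrt 2) / (2 * Real.sqrt 2) ^ l := by
  have hs2 : Real.sqrt 2 ^ 2 = 2 := Real.sq_sqrt (by norm_num)
  have hsle : Real.sqrt 2 ≤ 2 := by nlinarith [Real.sqrt_nonneg 2]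
  have hc : Real.cos (Real.pi / 8) ^ 2 = (2 + Real.sqrt 2) / 4 := by
    rw [Real.cos_pi_div_eight, div_pow, Real.sq_sqrt (by positivity)]
    norm_num
  have hsn : Real.sin (Real.pi / 8) ^ 2 = (2 - Real.sqrt 2) / 4 := by
    rw [Real.sin_pi_div_eight, div_pow, Real.sq_sqrt (by linarith)]
    norm_num
  have e1 : (2 * (0 : ℝ) + 1) * Real.pi / 8 = Real.pi / 8 := by ring
  have e3 : (2 * (1 : ℝ) + 1) * Real.pi / 8 = Real.pi / 2 - Real.pi / 8 := by ring
  have e5 : (2 * (2 : ℝ) + 1) * Real.pi / 8 = Real.pi - (Real.pi / 2 - Real.pi / 8) := by ring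
  have e7 : (2 * (3 : ℝ) + 1) * Real.pi / 8 = Real.pi - Real.pi / 8 := by ring
  rw [Finset.sum_range_succ, Finset.sum_range_succ, Finset.sum_range_succ,
    Finset.sum_range_one]
  push_cast
  rw [e1, e3, e5, e7, Real.cos_pi_sub, Real.cos_pi_sub, Real.cos_pi_div_two_sub,
    (even_two_mul l).neg_pow, (even_two_mul l).neg_pow]
  rw [pow_mul, pow_mul, hc, hsn]
  rw [teval_sqrt_two l]
  have hA : (2 + Real.sqrt 2) / 4 = (Real.sqrt 2 + 1) / (2 * Real.sqrt 2) := by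
    rw [div_eq_div_iff (by norm_num) (by positivity)]
    nlinarith [hs2]
  have hB : (2 - Real.sqrt 2) / 4 = (Real.sqrt 2 - 1) / (2 * Real.sqrt 2) := by
    rw [div_eq_div_iff (by norm_num) (by positivity)]
    nlinarith [hs2]
  rw [hA, hB, div_pow, div_pow]
  have hne : ((2 * Real.sqrt 2) ^ l : ℝ) ≠ 0 := by positivity
  field_simp
  ring
end

section
/- Moments of the zeros of T_5 in terms of Chebyshev polynomials: for every l ≥ 1, m_{2l}^{(T)}(5) = (√5)^{l−2} · T_l(√5/2) / 2^{2(l−1)}, i.e. (1/5) Σ_{i=1}^5 (cos((2i−1)π/10))^{2l} = (√5)^{l−2} T_l(√5/2)/4^{l−1}. -/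
open Finset Real Polynomial

lemma Teval_sqrt5 : ∀ n : ℕ, (Polynomial.Chebyshev.T ℝ n).eval (Real.sqrt 5 / 2) =
    (((1 + Real.sqrt 5)/2)^n + ((Real.sqrt 5 - 1)/2)^n)/2 := by
  have h5 : (Real.sqrt 5)^2 = 5 := Real.sq_sqrt (by norm_num)
  intro n
  induction n using Nat.twoStepInduction with
  | zero => simp
  | one => simp [Polynomial.Chebyshev.T_one]; ring
  | more n ih0 ih1 =>
    have hc : ((n + 2 : ℕ) : ℤ) = (n : ℤ) + 2 := by push_cast; ring
    rw [hc, Polynomial.Chebyshev.T_add_two]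
    simp only [eval_sub, eval_mul, eval_X, eval_ofNat]
    rw [show ((n:ℤ)+1) = ((n+1:ℕ):ℤ) by push_cast; ring, ih1, ih0]
    have hφ : ((1 + Real.sqrt 5)/2)^(n+2)
        = Real.sqrt 5 * ((1 + Real.sqrt 5)/2)^(n+1) - ((1 + Real.sqrt 5)/2)^n := by
      have h2 : ((1 + Real.sqrt 5)/2)^2 = Real.sqrt 5 * ((1 + Real.sqrt 5)/2) - 1 := by
        linarith [h5]
      calc ((1 + Real.sqrt 5)/2)^(n+2) = ((1 + Real.sqrt 5)/2)^n * ((1 + Real.sqrt 5)/2)^2 := by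
            ring
        _ = ((1 + Real.sqrt 5)/2)^n * (Real.sqrt 5 * ((1 + Real.sqrt 5)/2) - 1) := by rw [h2]
        _ = _ := by ring
    have hψ : ((Real.sqrt 5 - 1)/2)^(n+2)
        = Real.sqrt 5 * ((Real.sqrt 5 - 1)/2)^(n+1) - ((Real.sqrt 5 - 1)/2)^n := by
      have h2 : ((Real.sqrt 5 - 1)/2)^2 = Real.sqrt 5 * ((Real.sqrt 5 - 1)/2) - 1 := by
        linarith [h5]
      calc ((Real.sqrt 5 - 1)/2)^(n+2) = ((Real.sqrt 5 - 1)/2)^n * ((Real.sqrt 5 - 1)/2)^2 := by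
            ring
        _ = ((Real.sqrt 5 - 1)/2)^n * (Real.sqrt 5 * ((Real.sqrt 5 - 1)/2) - 1) := by rw [h2]
        _ = _ := by ring
    rw [hφ, hψ]; ring

/-- **Moments of the zeros of `T₅` in terms of Chebyshev polynomials.** For every `l ≥ 1`,
`m_{2l}^{(T)}(5) = (1/5) Σ_{i=1}^5 (cos((2i−1)π/10))^{2l} = (√5)^{l−2}·T_l(√5/2)/2^{2(l−1)}`,
where `T_l` is the `l`-th Chebyshev polynomial of the first kind. -/
theorem chebyshevT_zero_moments_deg_five (l : ℕ) (hl : 1 ≤ l) :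
    (1 / (5 : ℝ)) *
        ∑ i ∈ Finset.range 5,
          (Real.cos ((2 * (i : ℝ) + 1) * Real.pi / 10)) ^ (2 * l) =
      (Real.sqrt 5) ^ ((l : ℤ) - 2) *
        (Polynomial.Chebyshev.T ℝ l).eval (Real.sqrt 5 / 2) / 4 ^ ((l : ℤ) - 1) := by
  have h5 : (Real.sqrt 5)^2 = 5 := Real.sq_sqrt (by norm_num)
  have h5pos : (0:ℝ) < Real.sqrt 5 := Real.sqrt_pos.mpr (by norm_num)
  have h25 : Real.cos (2*π/5) = (Real.sqrt 5 - 1)/4 := by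
    have h := Real.cos_two_mul (π/5)
    rw [Real.cos_pi_div_five] at h
    rw [show 2*π/5 = 2*(π/5) by ring, h]
    nlinarith [h5]
  have h35 : Real.cos (3*π/5) = (1 - Real.sqrt 5)/4 := by
    rw [show 3*π/5 = π - 2*π/5 by ring, Real.cos_pi_sub, h25]; ring
  -- squares of the cosines
  have sq1 : Real.cos (π/10)^2 = (5 + Real.sqrt 5)/8 := by
    have := Real.cos_sq (π/10)
    rw [show 2*(π/10) = π/5 by ring, Real.cos_pi_div_five] at this
    rw [this]; ring
  have sq3 : Real.cos (3*π/10)^2 = (5 - Real.sqrt 5)/8 := by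
    have := Real.cos_sq (3*π/10)
    rw [show 2*(3*π/10) = 3*π/5 by ring, h35] at this
    rw [this]; ring
  have sq7 : Real.cos (7*π/10)^2 = (5 - Real.sqrt 5)/8 := by
    have := Real.cos_sq (7*π/10)
    rw [show 2*(7*π/10) = 2*π - 3*π/5 by ring, Real.cos_two_pi_sub, h35] at this
    rw [this]; ring
  have sq9 : Real.cos (9*π/10)^2 = (5 + Real.sqrt 5)/8 := by
    have := Real.cos_sq (9*π/10)
    rw [show 2*(9*π/10) = 2*π - π/5 by ring, Real.cos_two_pi_sub, Real.cos_pi_div_five] at this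
    rw [this]; ring
  have c5 : Real.cos (5*π/10) = 0 := by
    rw [show 5*π/10 = π/2 by ring, Real.cos_pi_div_two]
  -- expand the sum
  rw [Finset.sum_range_succ, Finset.sum_range_succ, Finset.sum_range_succ,
    Finset.sum_range_succ, Finset.sum_range_succ, Finset.sum_range_zero]
  push_cast
  rw [show (2*(0:ℝ)+1)*π/10 = π/10 by ring,
    show (2*(1:ℝ)+1)*π/10 = 3*π/10 by ring,
    show (2*(2:ℝ)+1)*π/10 = 5*π/10 by ring,
    show (2*(3:ℝ)+1)*π/10 = 7*π/10 by ring,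
    show (2*(4:ℝ)+1)*π/10 = 9*π/10 by ring]
  simp only [pow_mul, sq1, sq3, sq7, sq9, c5]
  rw [show ((0:ℝ)^2)^l = 0 by rw [show ((0:ℝ)^2) = 0 by norm_num, zero_pow (by omega : l ≠ 0)]]
  -- RHS
  rw [Teval_sqrt5 l]
  have hz1 : (Real.sqrt 5 : ℝ) ^ ((l : ℤ) - 2) = (Real.sqrt 5)^l / 5 := by
    rw [zpow_sub₀ (ne_of_gt h5pos), zpow_natCast]
    norm_num [zpow_two, ← Real.sqrt_mul_self (by norm_num : (0:ℝ) ≤ 5)]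
  have hz2 : (4:ℝ) ^ ((l : ℤ) - 1) = 4^l / 4 := by
    rw [zpow_sub₀ (by norm_num : (4:ℝ) ≠ 0), zpow_natCast]; norm_num
  rw [hz1, hz2]
  have ha : ((5 + Real.sqrt 5)/8 : ℝ) = (Real.sqrt 5 * ((1 + Real.sqrt 5)/2))/4 := by
    nlinarith [h5]
  have hb : ((5 - Real.sqrt 5)/8 : ℝ) = (Real.sqrt 5 * ((Real.sqrt 5 - 1)/2))/4 := by
    nlinarith [h5]
  rw [ha, hb]
  simp only [mul_pow, div_pow]
  have h4 : ((4:ℝ))^l ≠ 0 := by positivity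
  field_simp
  ring
end

section
/- Explicit formula for negative power sums (eq. (29), case r ≤ N): let P be monic of degree N over ℂ with σ_N ≠ 0. Then for every r with 1 ≤ r ≤ N, Σ_{i=1}^N x_i^{−r} = Σ over all tuples (n_1,…,n_r) of natural numbers with Σ_{m=1}^r m·n_m = r of (−1)^{r − Σ_m n_m} · r · (Σ_m n_m − 1)!/(n_1!⋯n_r!) · Π_{m=1}^r (σ_{N−m}/σ_N)^{n_m}. -/
open Polynomial Finset

namespace NPS

noncomputable def c {L : ℕ} (s : ℕ) (n : Fin L → ℕ) : ℂ :=
  (-1) ^ (s - ∑ m, n m) * s * (Nat.factorial ((∑ m, n m) - 1) : ℂ) /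
    (∏ m, (Nat.factorial (n m) : ℂ))
noncomputable def E {L : ℕ} (e : ℕ → ℂ) (n : Fin L → ℕ) : ℂ :=
  ∏ m : Fin L, e ((m : ℕ) + 1) ^ n m
lemma neg_one_pow_sub {a b : ℕ} (h : b ≤ a) : (-1 : ℂ) ^ (a - b) = (-1) ^ (a + b) := by
  rw [show a + b = (a - b) + 2 * b by omega, pow_add, pow_mul]; norm_num

def D (L s : ℕ) : Finset (Fin L → ℕ) :=
  (Fintype.piFinset fun _ : Fin L => Finset.range (s + 1)).filter
    (fun n => ∑ m : Fin L, ((m : ℕ) + 1) * n m = s)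

lemma mem_D {L s : ℕ} {n : Fin L → ℕ} :
    n ∈ D L s ↔ ∑ m : Fin L, ((m : ℕ) + 1) * n m = s := by
  simp only [D, mem_filter, Fintype.mem_piFinset, mem_range, and_iff_right_iff_imp]
  intro h m
  have h1 : ((m : ℕ) + 1) * n m ≤ s := h ▸ Finset.single_le_sum
    (f := fun m : Fin L => ((m : ℕ) + 1) * n m) (fun _ _ => Nat.zero_le _) (mem_univ m)
  have h2 : n m ≤ ((m : ℕ) + 1) * n m := Nat.le_mul_of_pos_left _ (Nat.succ_pos _)
  omega

noncomputable def G (L : ℕ) (e : ℕ → ℂ) (s : ℕ) : ℂ := ∑ n ∈ D L s, c s n * E e n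

/-- update-decrement sum identity, additive form. -/
lemma sum_update_pred {L : ℕ} (w : Fin L → ℕ) (n : Fin L → ℕ) (m : Fin L) (hm : n m ≠ 0) :
    (∑ m', w m' * Function.update n m (n m - 1) m') + w m = ∑ m', w m' * n m' := by
  rw [← Finset.add_sum_erase univ (fun m' => w m' * Function.update n m (n m - 1) m') (mem_univ m),
    ← Finset.add_sum_erase univ (fun m' => w m' * n m') (mem_univ m), Function.update_self]
  have hrest : ∑ m' ∈ univ.erase m, w m' * Function.update n m (n m - 1) m'
      = ∑ m' ∈ univ.erase m, w m' * n m' := Finset.sum_congr rfl fun m' hm' => by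
    rw [Function.update_of_ne (Finset.ne_of_mem_erase hm')]
  have hmul : w m * (n m - 1) + w m = w m * n m := by
    conv_rhs => rw [show n m = (n m - 1) + 1 by omega]
    rw [Nat.mul_succ]
  omega

lemma sum_update_succ {L : ℕ} (w : Fin L → ℕ) (n : Fin L → ℕ) (m : Fin L) :
    ∑ m', w m' * Function.update n m (n m + 1) m' = (∑ m', w m' * n m') + w m := by
  rw [← Finset.add_sum_erase univ (fun m' => w m' * Function.update n m (n m + 1) m') (mem_univ m),
    ← Finset.add_sum_erase univ (fun m' => w m' * n m') (mem_univ m), Function.update_self]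
  have hrest : ∑ m' ∈ univ.erase m, w m' * Function.update n m (n m + 1) m'
      = ∑ m' ∈ univ.erase m, w m' * n m' := Finset.sum_congr rfl fun m' hm' => by
    rw [Function.update_of_ne (Finset.ne_of_mem_erase hm')]
  rw [hrest, Nat.mul_succ]
  omega

lemma weight_single {L : ℕ} (ms : Fin L) :
    ∑ m : Fin L, ((m : ℕ) + 1) * (Pi.single ms 1 : Fin L → ℕ) m = (ms : ℕ) + 1 := by
  rw [Finset.sum_eq_single_of_mem ms (mem_univ ms)]
  · simp
  · intro m _ hne
    rw [Pi.single_eq_of_ne hne, mul_zero]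

lemma sum_single {L : ℕ} (ms : Fin L) : ∑ m : Fin L, (Pi.single ms 1 : Fin L → ℕ) m = 1 := by
  rw [Finset.sum_pi_single' ms 1 univ, if_pos (mem_univ ms)]

lemma aux_single {L s : ℕ} (hs1 : 1 ≤ s) {n : Fin L → ℕ}
    (hn : ∑ m : Fin L, ((m : ℕ) + 1) * n m = s) (hle : ∑ m, n m ≤ 1)
    {ms : Fin L} (hms : (ms : ℕ) = s - 1) : n = Pi.single ms 1 := by
  have h0 : ∑ m, n m ≠ 0 := by
    intro h
    have hz : ∀ m ∈ (univ : Finset (Fin L)), n m = 0 := Finset.sum_eq_zero_iff.1 h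
    rw [Finset.sum_eq_zero (fun m hm => by rw [hz m hm, mul_zero])] at hn
    omega
  have h1 : ∑ m, n m = 1 := by omega
  obtain ⟨m0, -, hm0⟩ := Finset.exists_ne_zero_of_sum_ne_zero h0
  have hm01 : n m0 = 1 := by
    have := Finset.single_le_sum (f := n) (fun _ _ => Nat.zero_le _) (mem_univ m0)
    omega
  have hrest : ∀ m', m' ≠ m0 → n m' = 0 := by
    intro m' hne
    have hsplit : n m0 + ∑ m'' ∈ univ.erase m0, n m'' = ∑ m, n m :=
      Finset.add_sum_erase univ n (mem_univ m0)
    have hz : ∑ m'' ∈ univ.erase m0, n m'' = 0 := by omega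
    have := (Finset.sum_eq_zero_iff).1 hz m' (Finset.mem_erase.2 ⟨hne, mem_univ m'⟩)
    exact this
  have hfun : n = Pi.single m0 1 := by
    funext m'
    by_cases h : m' = m0
    · rw [h, hm01, Pi.single_eq_same]
    · rw [hrest m' h, Pi.single_eq_of_ne h]
  have hwt : (m0 : ℕ) + 1 = s := by rw [← hn, hfun, weight_single]
  have : m0 = ms := Fin.ext (by omega)
  rw [hfun, this]

lemma aux_lt {L s : ℕ} {n : Fin L → ℕ} (hn : ∑ m : Fin L, ((m : ℕ) + 1) * n m = s)
    (h2 : 2 ≤ ∑ m, n m) {m : Fin L} (hm : n m ≠ 0) : (m : ℕ) + 1 < s := by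
  have hw : ((m : ℕ) + 1) * n m ≤ s := hn ▸ Finset.single_le_sum
    (f := fun m : Fin L => ((m : ℕ) + 1) * n m) (fun _ _ => Nat.zero_le _) (mem_univ m)
  by_cases hc : 2 ≤ n m
  · have := Nat.mul_le_mul_left ((m : ℕ) + 1) hc
    omega
  · have hone : n m = 1 := by omega
    have hsplit : n m + ∑ m' ∈ univ.erase m, n m' = ∑ m', n m' :=
      Finset.add_sum_erase univ n (mem_univ m)
    obtain ⟨m', hm'mem, hm'⟩ : ∃ m' ∈ univ.erase m, n m' ≠ 0 := by
      apply Finset.exists_ne_zero_of_sum_ne_zero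
      omega
    have hmne : m ≠ m' := (Finset.ne_of_mem_erase hm'mem).symm
    have hpair : ∑ m'' ∈ ({m, m'} : Finset (Fin L)), ((m'' : ℕ) + 1) * n m'' ≤ s := by
      rw [← hn]
      exact Finset.sum_le_sum_of_subset (Finset.subset_univ _)
    rw [Finset.sum_pair hmne] at hpair
    have h1 : 1 ≤ ((m' : ℕ) + 1) * n m' :=
      Nat.one_le_iff_ne_zero.2 (Nat.mul_ne_zero (Nat.succ_ne_zero _) hm')
    have hb : ((m : ℕ) + 1) * n m = (m : ℕ) + 1 := by rw [hone, mul_one]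
    omega

lemma key {L s : ℕ} (e : ℕ → ℂ) {n : Fin L → ℕ}
    (hn : ∑ m : Fin L, ((m : ℕ) + 1) * n m = s) (h2 : 2 ≤ ∑ m, n m) :
    c s n * E e n = ∑ m ∈ univ.filter (fun m : Fin L => n m ≠ 0),
      (-1 : ℂ) ^ ((m : ℕ) + 2) * e ((m : ℕ) + 1) *
        (c (s - ((m : ℕ) + 1)) (Function.update n m (n m - 1)) *
         E e (Function.update n m (n m - 1))) := by
  set T := ∑ m, n m with hT
  have hTs : T ≤ s := by
    rw [← hn]
    exact Finset.sum_le_sum fun m _ => Nat.le_mul_of_pos_left _ (Nat.succ_pos _)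
  have hfacn : (∏ m, (Nat.factorial (n m) : ℂ)) ≠ 0 :=
    Finset.prod_ne_zero_iff.2 fun m _ => Nat.cast_ne_zero.2 (Nat.factorial_ne_zero _)
  have hterm : ∀ m ∈ univ.filter (fun m : Fin L => n m ≠ 0),
      (-1 : ℂ) ^ ((m : ℕ) + 2) * e ((m : ℕ) + 1) *
        (c (s - ((m : ℕ) + 1)) (Function.update n m (n m - 1)) *
         E e (Function.update n m (n m - 1)))
      = (((s : ℂ) - ((m : ℕ) + 1)) * (n m : ℂ)) *
          ((-1 : ℂ) ^ (s + T) * ((Nat.factorial (T - 2) : ℂ) /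
            ∏ m', (Nat.factorial (n m') : ℂ)) * E e n) := by
    intro m hm
    rw [mem_filter] at hm
    have hnm : 1 ≤ n m := Nat.one_le_iff_ne_zero.2 hm.2
    have hsplit : ((m : ℕ) + 1) * n m + ∑ m' ∈ univ.erase m, ((m' : ℕ) + 1) * n m' = s :=
      (Finset.add_sum_erase univ (fun m' : Fin L => ((m' : ℕ) + 1) * n m') (mem_univ m)).trans hn
    have hi : (m : ℕ) + 1 ≤ s := by
      have h1 : ((m : ℕ) + 1) * 1 ≤ ((m : ℕ) + 1) * n m := Nat.mul_le_mul_left _ hnm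
      omega
    have hupd : ∀ (b : ℕ), ∑ m' : Fin L, ((m' : ℕ) + 1) * Function.update n m b m'
        = ((m : ℕ) + 1) * b + ∑ m' ∈ univ.erase m, ((m' : ℕ) + 1) * n m' := by
      intro b
      rw [← Finset.add_sum_erase univ
        (fun m' : Fin L => ((m' : ℕ) + 1) * Function.update n m b m') (mem_univ m),
        Function.update_self]
      congr 1
      exact Finset.sum_congr rfl fun m' hm' => by
        rw [Function.update_of_ne (Finset.ne_of_mem_erase hm')]
    have hw' : ∑ m' : Fin L, ((m' : ℕ) + 1) * Function.update n m (n m - 1) m'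
        = s - ((m : ℕ) + 1) := by
      rw [hupd]
      have hmul : ((m : ℕ) + 1) * (n m - 1) + ((m : ℕ) + 1) = ((m : ℕ) + 1) * n m := by
        conv_rhs => rw [show n m = (n m - 1) + 1 by omega]
        rw [Nat.mul_succ]
      omega
    have hsum_split : n m + ∑ m' ∈ univ.erase m, n m' = T :=
      Finset.add_sum_erase univ n (mem_univ m)
    have hT' : ∑ m' : Fin L, Function.update n m (n m - 1) m' = T - 1 := by
      rw [← Finset.add_sum_erase univ (Function.update n m (n m - 1)) (mem_univ m),
        Function.update_self]
      have hrest : ∑ m' ∈ univ.erase m, Function.update n m (n m - 1) m'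
          = ∑ m' ∈ univ.erase m, n m' := Finset.sum_congr rfl fun m' hm' => by
        rw [Function.update_of_ne (Finset.ne_of_mem_erase hm')]
      omega
    have hT'le : T - 1 ≤ s - ((m : ℕ) + 1) := by
      rw [← hw', ← hT']
      exact Finset.sum_le_sum fun m' _ => Nat.le_mul_of_pos_left _ (Nat.succ_pos _)
    have hfac : (∏ m', (Nat.factorial (Function.update n m (n m - 1) m') : ℂ))
        = (∏ m', (Nat.factorial (n m') : ℂ)) / (n m : ℂ) := by
      have hnm0 : (n m : ℂ) ≠ 0 := Nat.cast_ne_zero.2 hm.2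
      rw [eq_div_iff hnm0]
      rw [← Finset.mul_prod_erase univ
        (fun m' => (Nat.factorial (Function.update n m (n m - 1) m') : ℂ)) (mem_univ m),
        ← Finset.mul_prod_erase univ (fun m' => (Nat.factorial (n m') : ℂ)) (mem_univ m),
        Function.update_self]
      have hrest : ∏ m' ∈ univ.erase m, (Nat.factorial (Function.update n m (n m - 1) m') : ℂ)
          = ∏ m' ∈ univ.erase m, (Nat.factorial (n m') : ℂ) :=
        Finset.prod_congr rfl fun m' hm' => by
          rw [Function.update_of_ne (Finset.ne_of_mem_erase hm')]
      rw [hrest]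
      have h3 : (n m : ℂ) * ((Nat.factorial (n m - 1)) : ℂ) = ((Nat.factorial (n m)) : ℂ) := by
        exact_mod_cast congrArg (Nat.cast (R := ℂ)) (Nat.mul_factorial_pred (Nat.one_le_iff_ne_zero.1 hnm))
      linear_combination (∏ m' ∈ univ.erase m, (Nat.factorial (n m') : ℂ)) * h3
    have hE : e ((m : ℕ) + 1) * E e (Function.update n m (n m - 1)) = E e n := by
      unfold E
      rw [← Finset.mul_prod_erase univ
        (fun m' : Fin L => e ((m' : ℕ) + 1) ^ Function.update n m (n m - 1) m') (mem_univ m),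
        ← Finset.mul_prod_erase univ
        (fun m' : Fin L => e ((m' : ℕ) + 1) ^ n m') (mem_univ m),
        Function.update_self]
      have hrest : ∏ m' ∈ univ.erase m, e ((m' : ℕ) + 1) ^ Function.update n m (n m - 1) m'
          = ∏ m' ∈ univ.erase m, e ((m' : ℕ) + 1) ^ n m' :=
        Finset.prod_congr rfl fun m' hm' => by
          rw [Function.update_of_ne (Finset.ne_of_mem_erase hm')]
      rw [hrest, ← mul_assoc, ← pow_succ']
      congr 2
      omega
    have hcast : ((s - ((m : ℕ) + 1) : ℕ) : ℂ) = (s : ℂ) - ((m : ℕ) + 1) := by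
      push_cast [Nat.cast_sub hi]; ring
    rw [show s + T = ((m : ℕ) + 2) + ((s - ((m : ℕ) + 1)) + (T - 1)) by omega]
    unfold c
    rw [hT', show T - 1 - 1 = T - 2 by omega, hfac, neg_one_pow_sub hT'le, hcast, ← hE,
      pow_add]
    have hnm0 : (n m : ℂ) ≠ 0 := Nat.cast_ne_zero.2 hm.2
    field_simp
    ring
  rw [Finset.sum_congr rfl hterm]
  rw [Finset.sum_filter_of_ne (by
    intro m _ hne h0
    apply hne
    simp only [h0, Nat.cast_zero, mul_zero, zero_mul])]
  rw [← Finset.sum_mul]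
  have hsum : ∑ m : Fin L, ((s : ℂ) - ((m : ℕ) + 1)) * (n m : ℂ) = (s : ℂ) * T - s := by
    have hc1 : ∑ m : Fin L, ((m : ℕ) + 1 : ℂ) * (n m : ℂ) = (s : ℂ) := by
      exact_mod_cast congrArg (Nat.cast (R := ℂ)) hn
    have hc2 : ((T : ℕ) : ℂ) = ∑ m : Fin L, (n m : ℂ) := by
      rw [hT]; exact Nat.cast_sum _ _
    simp only [sub_mul]
    rw [Finset.sum_sub_distrib, ← Finset.mul_sum, ← hc2, hc1]
  rw [hsum]
  unfold c
  rw [← hT, neg_one_pow_sub hTs]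
  have hfac2 : ((Nat.factorial (T - 1)) : ℂ) = ((T - 1 : ℕ) : ℂ) * ((Nat.factorial (T - 2)) : ℂ) := by
    have : Nat.factorial (T - 1) = (T - 1) * Nat.factorial (T - 2) := by
      rw [show T - 1 = (T - 2) + 1 by omega, Nat.factorial_succ]
    exact_mod_cast congrArg (Nat.cast (R := ℂ)) this
  have hcastT : ((T - 1 : ℕ) : ℂ) = (T : ℂ) - 1 := by
    push_cast [Nat.cast_sub (show 1 ≤ T by omega)]; ring
  rw [hfac2, hcastT]
  field_simp

lemma one_le_sum {L s : ℕ} (hs : 1 ≤ s) {n : Fin L → ℕ}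
    (hn : ∑ m : Fin L, ((m : ℕ) + 1) * n m = s) : 1 ≤ ∑ m, n m := by
  by_contra h
  push_neg at h
  have h0 : ∑ m, n m = 0 := by omega
  have hz : ∀ m ∈ (univ : Finset (Fin L)), n m = 0 := Finset.sum_eq_zero_iff.1 h0
  rw [Finset.sum_eq_zero (fun m hm => by rw [hz m hm, mul_zero])] at hn
  omega

lemma G_recurrence {L : ℕ} (e : ℕ → ℂ) {s : ℕ} (hs1 : 1 ≤ s) (hsL : s ≤ L) :
    G L e s = (-1) ^ (s + 1) * s * e s -
      ∑ a ∈ (antidiagonal s).filter (fun a => a.1 ∈ Set.Ioo 0 s),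
        (-1) ^ a.1 * e a.1 * G L e a.2 := by
  have hL : 0 < L := lt_of_lt_of_le hs1 hsL
  set ms : Fin L := ⟨s - 1, by omega⟩ with hmsdef
  have hmss : (ms : ℕ) = s - 1 := rfl
  set δ : Fin L → ℕ := Pi.single ms 1 with hδ
  have hδD : δ ∈ D L s := mem_D.2 (by rw [hδ, weight_single, hmss]; omega)
  have hδsum : ∑ m, δ m = 1 := by rw [hδ]; exact sum_single ms
  have hboundary : c s δ * E e δ = (-1) ^ (s + 1) * s * e s := by
    unfold c E
    rw [hδsum]
    have hprod1 : ∏ m, (Nat.factorial (δ m) : ℂ) = 1 := by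
      apply Finset.prod_eq_one
      intro m _
      by_cases h : m = ms
      · rw [hδ, h, Pi.single_eq_same]; norm_num
      · rw [hδ, Pi.single_eq_of_ne h]; norm_num
    have hprodE : ∏ m : Fin L, e ((m : ℕ) + 1) ^ δ m = e s := by
      rw [Finset.prod_eq_single_of_mem ms (mem_univ ms)]
      · rw [hδ, Pi.single_eq_same, pow_one, hmss]
        congr 1
        omega
      · intro m _ hne
        rw [hδ, Pi.single_eq_of_ne hne, pow_zero]
    rw [hprod1, hprodE, neg_one_pow_sub (by omega : 1 ≤ s)]
    norm_num [Nat.factorial]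
  have h2' : ∀ n ∈ (D L s).erase δ, 2 ≤ ∑ m, n m := by
    intro n hn
    by_contra hc
    exact (Finset.ne_of_mem_erase hn)
      (aux_single hs1 (mem_D.1 (Finset.mem_of_mem_erase hn)) (by omega) hmss)
  set dm : ℕ → Fin L := fun i => ⟨min (i - 1) (L - 1), by omega⟩ with hdm
  have hbij : ∑ p ∈ ((D L s).erase δ).sigma (fun n => univ.filter (fun m => n m ≠ 0)),
      ((-1 : ℂ) ^ ((p.2 : ℕ) + 2) * e ((p.2 : ℕ) + 1) *
        (c (s - ((p.2 : ℕ) + 1)) (Function.update p.1 p.2 (p.1 p.2 - 1)) *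
         E e (Function.update p.1 p.2 (p.1 p.2 - 1))))
      = ∑ a ∈ (antidiagonal s).filter (fun a => a.1 ∈ Set.Ioo 0 s),
          ∑ n ∈ D L a.2, (-1 : ℂ) ^ (a.1 + 1) * e a.1 * (c a.2 n * E e n) := by
    rw [Finset.sum_sigma']
    apply Finset.sum_nbij'
      (i := fun p => ⟨((p.2 : ℕ) + 1, s - ((p.2 : ℕ) + 1)),
        Function.update p.1 p.2 (p.1 p.2 - 1)⟩)
      (j := fun q => ⟨Function.update q.2 (dm q.1.1) (q.2 (dm q.1.1) + 1), dm q.1.1⟩)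
    -- hi
    · rintro ⟨n, m⟩ hp
      simp only [Finset.mem_sigma, mem_filter] at hp
      obtain ⟨hnmem, -, hm2⟩ := hp
      have hwt : ∑ m' : Fin L, ((m' : ℕ) + 1) * n m' = s :=
        mem_D.1 (Finset.mem_of_mem_erase hnmem)
      have hlt : (m : ℕ) + 1 < s := aux_lt hwt (h2' n hnmem) hm2
      rw [Finset.mem_sigma]
      dsimp only
      constructor
      · rw [mem_filter, Finset.HasAntidiagonal.mem_antidiagonal]
        dsimp only
        refine ⟨by omega, ?_⟩
        simp only [Set.mem_Ioo]
        omega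
      · apply mem_D.2
        have h4 := sum_update_pred (fun m' : Fin L => (m' : ℕ) + 1) n m hm2
        omega
    -- hj
    · rintro ⟨a, n⟩ hq
      simp only [Finset.mem_sigma, mem_filter, Finset.HasAntidiagonal.mem_antidiagonal, Set.mem_Ioo] at hq
      obtain ⟨⟨hsum_a, hIoo1, hIoo2⟩, hnmem⟩ := hq
      have hwt : ∑ m' : Fin L, ((m' : ℕ) + 1) * n m' = a.2 := mem_D.1 hnmem
      have hm0 : ((dm a.1 : Fin L) : ℕ) = a.1 - 1 := by
        simp only [hdm]
        omega
      have ha2 : 1 ≤ a.2 := by omega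
      have hs1' : 1 ≤ ∑ m, n m := one_le_sum ha2 hwt
      have hsucc1 := sum_update_succ (fun _ : Fin L => 1) n (dm a.1)
      simp only [one_mul] at hsucc1
      have hsuccw := sum_update_succ (fun m' : Fin L => (m' : ℕ) + 1) n (dm a.1)
      rw [Finset.mem_sigma]
      dsimp only
      constructor
      · rw [Finset.mem_erase]
        constructor
        · intro hcontra
          have hcs := congrArg (fun f : Fin L → ℕ => ∑ m, f m) hcontra
          rw [hδsum, hsucc1] at hcs
          omega
        · apply mem_D.2
          rw [hsuccw, hwt]
          omega
      · rw [mem_filter]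
        refine ⟨mem_univ _, ?_⟩
        rw [Function.update_self]
        omega
    -- left_inv
    · rintro ⟨n, m⟩ hp
      simp only [Finset.mem_sigma, mem_filter] at hp
      obtain ⟨hnmem, -, hm2⟩ := hp
      have hdmm : dm ((m : ℕ) + 1) = m := by
        apply Fin.ext
        simp only [hdm]
        omega
      dsimp only
      rw [hdmm, Function.update_self, Function.update_idem,
        show n m - 1 + 1 = n m by omega, Function.update_eq_self]
    -- right_inv
    · rintro ⟨a, n⟩ hq
      simp only [Finset.mem_sigma, mem_filter, Finset.HasAntidiagonal.mem_antidiagonal, Set.mem_Ioo] at hq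
      obtain ⟨⟨hsum_a, hIoo1, hIoo2⟩, hnmem⟩ := hq
      have hm0 : ((dm a.1 : Fin L) : ℕ) = a.1 - 1 := by
        simp only [hdm]
        omega
      have h2 : ((dm a.1 : Fin L) : ℕ) + 1 = a.1 := by omega
      have h3 : s - (((dm a.1 : Fin L) : ℕ) + 1) = a.2 := by omega
      dsimp only
      rw [Function.update_self, Function.update_idem,
        show n (dm a.1) + 1 - 1 = n (dm a.1) by omega, Function.update_eq_self, h2,
        show s - a.1 = a.2 by omega, Prod.mk.eta]
    -- h
    · rintro ⟨n, m⟩ _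
      norm_num
  rw [G, ← Finset.add_sum_erase (D L s) (fun n => c s n * E e n) hδD, hboundary]
  rw [Finset.sum_congr rfl
    (fun n hn => key e (mem_D.1 (Finset.mem_of_mem_erase hn)) (h2' n hn)),
    Finset.sum_sigma', hbij]
  have hfinal : ∀ a ∈ (antidiagonal s).filter (fun a => a.1 ∈ Set.Ioo 0 s),
      ∑ n ∈ D L a.2, (-1 : ℂ) ^ (a.1 + 1) * e a.1 * (c a.2 n * E e n)
        = -((-1 : ℂ) ^ a.1 * e a.1 * G L e a.2) := by
    intro a _
    rw [← Finset.mul_sum, ← G, pow_succ]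
    ring
  rw [Finset.sum_congr rfl hfinal, Finset.sum_neg_distrib]
  ring

lemma newton_num {N : ℕ} (y : Fin N → ℂ) {k : ℕ} (hk : 0 < k) :
    ∑ i, y i ^ k = (-1) ^ (k + 1) * k * (∑ t ∈ powersetCard k univ, ∏ i ∈ t, y i) -
      ∑ a ∈ (antidiagonal k).filter (fun a => a.1 ∈ Set.Ioo 0 k),
        (-1) ^ a.1 * (∑ t ∈ powersetCard a.1 univ, ∏ i ∈ t, y i) * (∑ i, y i ^ a.2) := by
  have h := congrArg (MvPolynomial.eval y) (MvPolynomial.psum_eq_mul_esymm_sub_sum (Fin N) ℂ k hk)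
  simpa [MvPolynomial.psum, MvPolynomial.esymm, map_sum, map_prod, Finset.sum_filter, apply_ite (MvPolynomial.eval y)] using h

lemma esymm_inv {N : ℕ} (x : Fin N → ℂ) (hx : ∀ i, x i ≠ 0) {k : ℕ} (hk : k ≤ N) :
    ∑ t ∈ powersetCard k (univ : Finset (Fin N)), ∏ i ∈ t, (x i)⁻¹
      = (∑ t ∈ powersetCard (N - k) (univ : Finset (Fin N)), ∏ i ∈ t, x i) / ∏ i, x i := by
  have hprod : (∏ i, x i) ≠ 0 := Finset.prod_ne_zero_iff.2 fun i _ => hx i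
  rw [eq_div_iff hprod, Finset.sum_mul]
  apply Finset.sum_nbij' (i := fun t => tᶜ) (j := fun t => tᶜ)
  · intro t ht
    rw [Finset.mem_powersetCard_univ] at ht ⊢
    rw [Finset.card_compl, ht, Fintype.card_fin]
  · intro t ht
    rw [Finset.mem_powersetCard_univ] at ht ⊢
    rw [Finset.card_compl, ht, Fintype.card_fin]
    omega
  · intro t _; exact compl_compl t
  · intro t _; exact compl_compl t
  · intro t _
    have h1 : (∏ i ∈ t, x i) ≠ 0 := Finset.prod_ne_zero_iff.2 fun i _ => hx i
    rw [Finset.prod_inv_distrib, ← Finset.prod_mul_prod_compl t x]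
    field_simp

lemma sum_extend {N r : ℕ} (hrN : r ≤ N) (f : ℕ → ℕ → ℕ) (hf : ∀ j, f j 0 = 0)
    (n' : Fin r → ℕ) :
    (∑ m : Fin N, f (m : ℕ) (if h : (m : ℕ) < r then n' ⟨(m : ℕ), h⟩ else 0))
      = ∑ m : Fin r, f (m : ℕ) (n' m) := by
  have t1 : (∑ m : Fin N, f (m : ℕ) (if h : (m : ℕ) < r then n' ⟨(m : ℕ), h⟩ else 0))
      = ∑ j ∈ range N, f j (if h : j < r then n' ⟨j, h⟩ else 0) :=
    Fin.sum_univ_eq_sum_range (fun j => f j (if h : j < r then n' ⟨j, h⟩ else 0)) N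
  have t2 : (∑ j ∈ range r, f j (if h : j < r then n' ⟨j, h⟩ else 0))
      = ∑ j ∈ range N, f j (if h : j < r then n' ⟨j, h⟩ else 0) := by
    apply Finset.sum_subset (Finset.range_subset_range.2 hrN)
    intro j _ hj
    rw [mem_range] at hj
    rw [dif_neg hj, hf]
  have t3 : (∑ m : Fin r, f (m : ℕ) (n' m))
      = ∑ j ∈ range r, f j (if h : j < r then n' ⟨j, h⟩ else 0) := by
    rw [← Fin.sum_univ_eq_sum_range (fun j => f j (if h : j < r then n' ⟨j, h⟩ else 0)) r]
    apply Finset.sum_congr rfl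
    intro m _
    rw [dif_pos m.2]
  rw [t1, t3, t2]

lemma prod_extend {N r : ℕ} (hrN : r ≤ N) (f : ℕ → ℕ → ℂ) (hf : ∀ j, f j 0 = 1)
    (n' : Fin r → ℕ) :
    (∏ m : Fin N, f (m : ℕ) (if h : (m : ℕ) < r then n' ⟨(m : ℕ), h⟩ else 0))
      = ∏ m : Fin r, f (m : ℕ) (n' m) := by
  have t1 : (∏ m : Fin N, f (m : ℕ) (if h : (m : ℕ) < r then n' ⟨(m : ℕ), h⟩ else 0))
      = ∏ j ∈ range N, f j (if h : j < r then n' ⟨j, h⟩ else 0) :=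
    Fin.prod_univ_eq_prod_range (fun j => f j (if h : j < r then n' ⟨j, h⟩ else 0)) N
  have t2 : (∏ j ∈ range r, f j (if h : j < r then n' ⟨j, h⟩ else 0))
      = ∏ j ∈ range N, f j (if h : j < r then n' ⟨j, h⟩ else 0) := by
    apply Finset.prod_subset (Finset.range_subset_range.2 hrN)
    intro j _ hj
    rw [mem_range] at hj
    rw [dif_neg hj, hf]
  have t3 : (∏ m : Fin r, f (m : ℕ) (n' m))
      = ∏ j ∈ range r, f j (if h : j < r then n' ⟨j, h⟩ else 0) := by
    rw [← Fin.prod_univ_eq_prod_range (fun j => f j (if h : j < r then n' ⟨j, h⟩ else 0)) r]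
    apply Finset.prod_congr rfl
    intro m _
    rw [dif_pos m.2]
  rw [t1, t3, t2]

lemma psum_eq_G {N : ℕ} (y : Fin N → ℂ) (e : ℕ → ℂ)
    (he : ∀ i, 1 ≤ i → i ≤ N →
      e i = ∑ t ∈ powersetCard i (univ : Finset (Fin N)), ∏ j ∈ t, y j) :
    ∀ s, 1 ≤ s → s ≤ N → ∑ i, y i ^ s = G N e s := by
  intro s
  induction s using Nat.strong_induction_on with
  | _ s ih =>
    intro hs1 hsN
    rw [newton_num y (show 0 < s by omega), G_recurrence e hs1 hsN, he s hs1 hsN]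
    congr 1
    apply Finset.sum_congr rfl
    intro a ha
    rw [mem_filter, Finset.HasAntidiagonal.mem_antidiagonal, Set.mem_Ioo] at ha
    obtain ⟨hsum_a, h01, h0s⟩ := ha
    rw [he a.1 (by omega) (by omega), ih a.2 (by omega) (by omega) (by omega)]

lemma sum_restrict {N r : ℕ} (hrN : r ≤ N) {n : Fin N → ℕ}
    (hzero : ∀ m : Fin N, r ≤ (m : ℕ) → n m = 0) (f : ℕ → ℕ → ℕ) (hf : ∀ j, f j 0 = 0) :
    ∑ m : Fin N, f (m : ℕ) (n m) = ∑ m : Fin r, f (m : ℕ) (n (Fin.castLE hrN m)) := by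
  rw [← sum_extend hrN f hf (fun m => n (Fin.castLE hrN m))]
  apply Finset.sum_congr rfl
  intro m _
  by_cases h : (m : ℕ) < r
  · rw [dif_pos h, show Fin.castLE hrN ⟨(m : ℕ), h⟩ = m from Fin.ext rfl]
  · rw [dif_neg h, hzero m (by omega)]

lemma prod_restrict {N r : ℕ} (hrN : r ≤ N) {n : Fin N → ℕ}
    (hzero : ∀ m : Fin N, r ≤ (m : ℕ) → n m = 0) (f : ℕ → ℕ → ℂ) (hf : ∀ j, f j 0 = 1) :
    ∏ m : Fin N, f (m : ℕ) (n m) = ∏ m : Fin r, f (m : ℕ) (n (Fin.castLE hrN m)) := by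
  rw [← prod_extend hrN f hf (fun m => n (Fin.castLE hrN m))]
  apply Finset.prod_congr rfl
  intro m _
  by_cases h : (m : ℕ) < r
  · rw [dif_pos h, show Fin.castLE hrN ⟨(m : ℕ), h⟩ = m from Fin.ext rfl]
  · rw [dif_neg h, hzero m (by omega)]

lemma G_shrink {r N : ℕ} (hrN : r ≤ N) (e : ℕ → ℂ) : G N e r = G r e r := by
  unfold G
  have hzero : ∀ n ∈ D N r, ∀ m : Fin N, r ≤ (m : ℕ) → n m = 0 := by
    intro n hn m hm
    have hwt := mem_D.1 hn
    have h1 : ((m : ℕ) + 1) * n m ≤ r := hwt ▸ Finset.single_le_sum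
      (f := fun m : Fin N => ((m : ℕ) + 1) * n m) (fun _ _ => Nat.zero_le _) (mem_univ m)
    by_contra h0
    have : (m : ℕ) + 1 ≤ ((m : ℕ) + 1) * n m := Nat.le_mul_of_pos_right _ (by omega)
    omega
  apply Finset.sum_nbij'
    (i := fun n (m : Fin r) => n (Fin.castLE hrN m))
    (j := fun n' (m : Fin N) => if h : (m : ℕ) < r then n' ⟨(m : ℕ), h⟩ else 0)
  · intro n hn
    apply mem_D.2
    have := sum_restrict hrN (hzero n hn) (fun j v => (j + 1) * v) (fun j => by simp)
    rw [← this]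
    exact mem_D.1 hn
  · intro n' hn'
    apply mem_D.2
    have := sum_extend hrN (fun j v => (j + 1) * v) (fun j => by simp) n'
    rw [this]
    exact mem_D.1 hn'
  · intro n hn
    funext m
    by_cases h : (m : ℕ) < r
    · simp only [dif_pos h]
      congr 1
    · simp only [dif_neg h]
      exact (hzero n hn m (by omega)).symm
  · intro n' _
    funext m
    show (if h : ((Fin.castLE hrN m : Fin N) : ℕ) < r then n' ⟨((Fin.castLE hrN m : Fin N) : ℕ), h⟩ else 0) = n' m
    rw [dif_pos (show ((Fin.castLE hrN m : Fin N) : ℕ) < r from m.2)]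
    exact congrArg n' (Fin.ext rfl)
  · intro n hn
    unfold c E
    have hS := sum_restrict hrN (hzero n hn) (fun j v => v) (fun j => rfl)
    have hF := prod_restrict hrN (hzero n hn) (fun j v => (Nat.factorial v : ℂ)) (fun j => by simp)
    have hE := prod_restrict hrN (hzero n hn) (fun j v => e (j + 1) ^ v) (fun j => pow_zero _)
    rw [hS, hF, hE]

end NPS

open NPS in
/-- **Explicit formula for negative power sums** (Girard–Waring for `1 ≤ r ≤ N`).
Let `P` be monic of degree `N ≥ 1` over `ℂ` with roots `x 1, …, x N` (with multiplicity),
`σ k` the `k`-th elementary symmetric function of the roots, and `σ_N ≠ 0`.  Then for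
every `r` with `1 ≤ r ≤ N`,
`Σ_i (x i)^{−r} = Σ_{(n_1,…,n_r) : Σ m·n_m = r} (−1)^{r−Σn_m} · r · (Σn_m − 1)!/(n_1!⋯n_r!)
· Π_{m=1}^r (σ_{N−m}/σ_N)^{n_m}`. -/
theorem negative_power_sums_explicit (N : ℕ) (hN : 1 ≤ N) (x : Fin N → ℂ)
    (P : Polynomial ℂ) (hP : P = ∏ i, (X - C (x i)))
    (σ : ℕ → ℂ)
    (hσ : ∀ k, σ k = ∑ s ∈ Finset.powersetCard k (Finset.univ : Finset (Fin N)), ∏ i ∈ s, x i)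
    (hσN : σ N ≠ 0)
    (r : ℕ) (hr1 : 1 ≤ r) (hrN : r ≤ N) :
    ∑ i, x i ^ (-(r : ℤ)) =
      ∑ n ∈ (Fintype.piFinset fun _ : Fin r => Finset.range (r + 1)).filter
          (fun n => ∑ m : Fin r, ((m : ℕ) + 1) * n m = r),
        (-1 : ℂ) ^ (r - ∑ m : Fin r, n m) * r *
          (Nat.factorial ((∑ m : Fin r, n m) - 1) : ℂ) /
          (∏ m : Fin r, (Nat.factorial (n m) : ℂ)) *
          ∏ m : Fin r, (σ (N - ((m : ℕ) + 1)) / σ N) ^ n m := by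
  have hσNprod : σ N = ∏ i, x i := by
    rw [hσ N]
    rw [show Finset.powersetCard N (univ : Finset (Fin N)) = {univ} from by
      have h := Finset.powersetCard_self (univ : Finset (Fin N))
      rwa [Finset.card_univ, Fintype.card_fin] at h]
    rw [Finset.sum_singleton]
  have hx : ∀ i, x i ≠ 0 := by
    intro i hxi
    exact hσN (by rw [hσNprod]; exact Finset.prod_eq_zero (mem_univ i) hxi)
  set y : Fin N → ℂ := fun i => (x i)⁻¹ with hy
  set e : ℕ → ℂ := fun k => σ (N - k) / σ N with he_def
  have he : ∀ i, 1 ≤ i → i ≤ N →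
      e i = ∑ t ∈ powersetCard i (univ : Finset (Fin N)), ∏ j ∈ t, y j := by
    intro i _ hiN
    rw [he_def]
    simp only
    rw [hσ (N - i), hσNprod, hy]
    exact (esymm_inv x hx hiN).symm
  have hLHS : ∑ i, x i ^ (-(r : ℤ)) = ∑ i, y i ^ r := by
    apply Finset.sum_congr rfl
    intro i _
    rw [hy]
    simp only
    rw [zpow_neg, zpow_natCast, ← inv_pow]
  rw [hLHS, psum_eq_G y e he r hr1 hrN, G_shrink hrN e]
  unfold G D c E
  apply Finset.sum_congr rfl
  intro n _
  simp only [he_def]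
end

section
/- Closed form of the moment generating function for Chebyshev T zeros (Table 1): for every N ≥ 1 and every real z with 0 < z < 1, the series Σ_{r=0}^∞ m_r^{(T)}(N) z^r converges and equals (1/√(1−z²)) · tanh(N · ln(z/(1 − √(1−z²)))). -/
open Finset Real

private lemma mgf_fourier_aux (u θ : ℝ) (hu0 : 0 ≤ u) (hu1 : u < 1) :
    HasSum (fun m : ℕ => u ^ m * Real.cos (m * θ))
      ((1 - u * Real.cos θ) / (1 + u ^ 2 - 2 * u * Real.cos θ)) := by
  set w : ℂ := u * Complex.exp (θ * Complex.I) with hw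
  have hnw : ‖w‖ < 1 := by
    rw [hw]
    simpa [Complex.norm_exp_ofReal_mul_I, abs_of_nonneg hu0] using hu1
  have hgeo := hasSum_geometric_of_norm_lt_one hnw
  have hre := Complex.reCLM.hasSum hgeo
  have hD : 0 < 1 + u ^ 2 - 2 * u * Real.cos θ := by
    nlinarith [Real.neg_one_le_cos θ, Real.cos_le_one θ, sq_nonneg (1 - u)]
  have hwm : ∀ m : ℕ, (w ^ m).re = u ^ m * Real.cos (m * θ) := by
    intro m
    rw [hw, mul_pow, ← Complex.exp_nat_mul]
    have h : ((m : ℂ) * (θ * Complex.I)) = ((m * θ : ℝ) : ℂ) * Complex.I := by push_cast; ring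
    rw [h, ← Complex.ofReal_pow, Complex.re_ofReal_mul, Complex.exp_ofReal_mul_I_re]
  have hval : ((1 - w)⁻¹).re = (1 - u * Real.cos θ) / (1 + u ^ 2 - 2 * u * Real.cos θ) := by
    rw [Complex.inv_re]
    have h1 : (1 - w).re = 1 - u * Real.cos θ := by
      simp [hw, Complex.mul_re, Complex.exp_ofReal_mul_I_re]
    have h2 : Complex.normSq (1 - w) = 1 + u ^ 2 - 2 * u * Real.cos θ := by
      rw [Complex.normSq_apply]
      have h3 : (1 - w).im = -(u * Real.sin θ) := by
        simp [hw, Complex.mul_im, Complex.exp_ofReal_mul_I_im]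
      rw [h1, h3]
      nlinarith [Real.sin_sq_add_cos_sq θ]
    rw [h1, h2]
  simpa [hwm, hval] using hre

private lemma mgf_fourier (u θ : ℝ) (hu0 : 0 ≤ u) (hu1 : u < 1) :
    HasSum (fun m : ℕ => (if m = 0 then (1:ℝ) else 2) * (u ^ m * Real.cos (m * θ)))
      ((1 - u ^ 2) / (1 + u ^ 2 - 2 * u * Real.cos θ)) := by
  have aux := mgf_fourier_aux u θ hu0 hu1
  have hD : 0 < 1 + u ^ 2 - 2 * u * Real.cos θ := by
    nlinarith [Real.neg_one_le_cos θ, Real.cos_le_one θ, sq_nonneg (1 - u)]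
  have h2 := aux.mul_left 2
  have h1 : HasSum (fun m : ℕ => if m = 0 then (1:ℝ) else 0) 1 := hasSum_ite_eq 0 1
  have h3 := h2.sub h1
  have hfun : (fun m : ℕ => 2 * (u ^ m * Real.cos (m * θ)) - (if m = 0 then (1:ℝ) else 0))
      = fun m : ℕ => (if m = 0 then (1:ℝ) else 2) * (u ^ m * Real.cos (m * θ)) := by
    funext m
    by_cases hm : m = 0
    · subst hm; norm_num
    · simp [hm]
  rw [hfun] at h3
  have hval : (1 - u ^ 2) / (1 + u ^ 2 - 2 * u * Real.cos θ)
      = 2 * ((1 - u * Real.cos θ) / (1 + u ^ 2 - 2 * u * Real.cos θ)) - 1 := by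
    rw [mul_div_assoc', eq_sub_iff_add_eq, div_add_one hD.ne']
    ring
  rw [hval]
  exact h3

private lemma mgf_charsum (N : ℕ) (hN : 1 ≤ N) (m : ℕ) :
    ∑ i ∈ Finset.range N, Real.cos (m * ((2 * (i:ℝ) + 1) * π / (2 * N))) =
      if 2 * N ∣ m then (N:ℝ) * (-1) ^ (m / (2 * N)) else 0 := by
  have hNR : (N:ℝ) ≠ 0 := Nat.cast_ne_zero.2 (by omega)
  have hNC : (N:ℂ) ≠ 0 := Nat.cast_ne_zero.2 (by omega)
  by_cases hdvd : 2 * N ∣ m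
  · obtain ⟨j, hj⟩ := hdvd
    have hjm : m / (2 * N) = j := by rw [hj]; exact Nat.mul_div_cancel_left j (by omega)
    rw [if_pos ⟨j, hj⟩, hjm]
    have : ∀ i ∈ Finset.range N, Real.cos (m * ((2 * (i:ℝ) + 1) * π / (2 * N)))
        = (-1 : ℝ) ^ j := by
      intro i _
      have hang : (m : ℝ) * ((2 * (i:ℝ) + 1) * π / (2 * N)) = ((j * (2 * i + 1) : ℕ) : ℝ) * π - 0 := by
        rw [hj]; push_cast; field_simp; ring
      rw [hang, Real.cos_nat_mul_pi_sub, Real.cos_zero, mul_one,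
        show j * (2 * i + 1) = j + 2 * (j * i) from by ring, pow_add, pow_mul]
      norm_num
    rw [Finset.sum_congr rfl this]
    simp [mul_comm]
  · rw [if_neg hdvd]
    rcases Nat.even_or_odd m with ⟨k, hk⟩ | hodd
    · -- m = 2k even, with ¬ N ∣ k
      have hk' : m = 2 * k := by omega
      have hNk : ¬ N ∣ k := by
        rintro ⟨c, hc⟩; exact hdvd ⟨c, by rw [hk', hc]; ring⟩
      set β : ℝ := k * π / N with hβ
      have hang : ∀ i : ℕ, (m : ℝ) * ((2 * (i:ℝ) + 1) * π / (2 * N)) = (2 * (i:ℝ) + 1) * β := by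
        intro i; rw [hk', hβ]; push_cast; field_simp
      have hexp : ∀ i : ℕ, Complex.exp (((2 * (i:ℝ) + 1) * β : ℝ) * Complex.I)
          = Complex.exp ((2 * β : ℝ) * Complex.I) ^ i * Complex.exp ((β:ℝ) * Complex.I) := by
        intro i
        rw [← Complex.exp_nat_mul, ← Complex.exp_add]
        congr 1
        push_cast; ring
      set q : ℂ := Complex.exp ((2 * β : ℝ) * Complex.I) with hq
      have hq1 : q ≠ 1 := by
        rw [hq]
        intro h
        rw [Complex.exp_eq_one_iff] at h
        obtain ⟨n, hn⟩ := h
        apply hNk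
        have hI : ((2 * β : ℝ) : ℂ) = (n : ℂ) * (2 * (π:ℝ)) := by
          rw [show (n:ℂ) * (2 * ((π:ℝ):ℂ) * Complex.I) = ((n:ℂ) * (2 * (π:ℝ))) * Complex.I from by ring] at hn
          exact mul_right_cancel₀ Complex.I_ne_zero hn
        have hr : (2 * β : ℝ) = (n : ℝ) * (2 * π) := by exact_mod_cast hI
        rw [hβ] at hr
        have hπ := Real.pi_ne_zero
        have h5 : ((k:ℝ) - (n:ℝ) * N) * π = 0 := by
          field_simp at hr
          linear_combination π * hr
        have h6 : (k : ℝ) = (n:ℝ) * N := by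
          rcases mul_eq_zero.1 h5 with h | h
          · linarith [sub_eq_zero.1 h]
          · exact absurd h hπ
        have h7 : (k : ℤ) = n * N := by exact_mod_cast h6
        have : (N : ℤ) ∣ (k : ℤ) := ⟨n, by rw [h7, mul_comm]⟩
        exact_mod_cast this
      have hqN : q ^ N = 1 := by
        rw [hq, ← Complex.exp_nat_mul]
        have : (N : ℂ) * (((2 * β : ℝ) : ℂ) * Complex.I) = (k : ℂ) * (2 * (π:ℝ) * Complex.I) := by
          rw [hβ]; push_cast; field_simp
        rw [this]
        exact_mod_cast Complex.exp_int_mul_two_pi_mul_I k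
      have hsum : ∑ i ∈ Finset.range N, Complex.exp (((2 * (i:ℝ) + 1) * β : ℝ) * Complex.I) = 0 := by
        rw [Finset.sum_congr rfl (fun i _ => hexp i), ← Finset.sum_mul, geom_sum_eq hq1, hqN]
        simp
      have hre := congrArg Complex.re hsum
      rw [Complex.re_sum, Complex.zero_re] at hre
      simp only [Complex.exp_ofReal_mul_I_re] at hre
      rw [← hre]
      exact Finset.sum_congr rfl fun i _ => by rw [hang i]
    · -- m odd: reflection
      obtain ⟨k, hk⟩ := hodd
      set f : ℕ → ℝ := fun i => Real.cos (m * ((2 * (i:ℝ) + 1) * π / (2 * N))) with hf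
      have hrefl := Finset.sum_range_reflect f N
      have hneg : ∀ i ∈ Finset.range N, f (N - 1 - i) = -f i := by
        intro i hi
        rw [Finset.mem_range] at hi
        have hcast : ((N - 1 - i : ℕ) : ℝ) = (N : ℝ) - 1 - i := by
          have h0 : N - 1 - i = N - (1 + i) := by omega
          rw [h0, Nat.cast_sub (by omega : 1 + i ≤ N)]
          push_cast; ring
        rw [hf]
        simp only
        rw [hcast]
        have hang : (m : ℝ) * ((2 * ((N:ℝ) - 1 - i) + 1) * π / (2 * N))
            = (m : ℝ) * π - m * ((2 * (i:ℝ) + 1) * π / (2 * N)) := by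
          field_simp; ring
        rw [hang, Real.cos_nat_mul_pi_sub, hk]
        have hm1 : (-1 : ℝ) ^ (2 * k + 1) = -1 := by
          rw [pow_succ, pow_mul]; norm_num
        rw [hm1]; ring
      rw [Finset.sum_congr rfl hneg, Finset.sum_neg_distrib] at hrefl
      linarith [hrefl]

private lemma mgf_main_sum (N : ℕ) (hN : 1 ≤ N) (u : ℝ) (hu0 : 0 ≤ u) (hu1 : u < 1) :
    ∑ i ∈ Finset.range N,
      (1 - u ^ 2) / (1 + u ^ 2 - 2 * u * Real.cos ((2 * (i:ℝ) + 1) * π / (2 * N))) =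
    (N : ℝ) * (1 - u ^ (2 * N)) / (1 + u ^ (2 * N)) := by
  set v : ℝ := u ^ (2 * N) with hv
  have hv0 : 0 ≤ v := pow_nonneg hu0 _
  have hv1 : v < 1 := pow_lt_one₀ hu0 hu1 (by omega)
  have hL : HasSum
      (fun m : ℕ => ∑ i ∈ Finset.range N,
        (if m = 0 then (1:ℝ) else 2) * (u ^ m * Real.cos (m * ((2 * (i:ℝ) + 1) * π / (2 * N)))))
      (∑ i ∈ Finset.range N,
        (1 - u ^ 2) / (1 + u ^ 2 - 2 * u * Real.cos ((2 * (i:ℝ) + 1) * π / (2 * N)))) :=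
    hasSum_sum fun i _ => mgf_fourier u _ hu0 hu1
  have hfun : (fun m : ℕ => ∑ i ∈ Finset.range N,
        (if m = 0 then (1:ℝ) else 2) * (u ^ m * Real.cos (m * ((2 * (i:ℝ) + 1) * π / (2 * N)))))
      = fun m : ℕ => (if m = 0 then (1:ℝ) else 2) * u ^ m *
          (if 2 * N ∣ m then (N:ℝ) * (-1) ^ (m / (2 * N)) else 0) := by
    funext m
    rw [← mgf_charsum N hN m, Finset.mul_sum]
    exact Finset.sum_congr rfl fun i _ => by ring
  rw [hfun] at hL
  set f : ℕ → ℝ := fun m => (if m = 0 then (1:ℝ) else 2) * u ^ m *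
      (if 2 * N ∣ m then (N:ℝ) * (-1) ^ (m / (2 * N)) else 0) with hf
  have hg : Function.Injective (fun j : ℕ => 2 * N * j) := fun a b h => by
    simpa using Nat.eq_of_mul_eq_mul_left (by omega : 0 < 2 * N) h
  have hvanish : ∀ m ∉ Set.range (fun j : ℕ => 2 * N * j), f m = 0 := by
    intro m hm
    have : ¬ (2 * N ∣ m) := by
      intro ⟨c, hc⟩; exact hm ⟨c, hc.symm⟩
    simp [hf, this]
  have hgeo : HasSum (fun j : ℕ => 2 * (N:ℝ) * (-v) ^ j) (2 * N * (1 - (-v))⁻¹) :=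
    (hasSum_geometric_of_norm_lt_one (by simpa [abs_of_nonneg hv0] using hv1 : ‖-v‖ < 1)).mul_left _
  have hone : HasSum (fun j : ℕ => if j = 0 then (N:ℝ) else 0) N := hasSum_ite_eq 0 _
  have hFG := hgeo.sub hone
  have hcomp : (fun j : ℕ => 2 * (N:ℝ) * (-v) ^ j - (if j = 0 then (N:ℝ) else 0))
      = f ∘ (fun j : ℕ => 2 * N * j) := by
    funext j
    by_cases hj : j = 0
    · subst hj
      simp [hf]
      ring
    · have hne : 2 * N * j ≠ 0 := by positivity
      have hdvd : 2 * N ∣ 2 * N * j := ⟨j, rfl⟩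
      have hdiv : 2 * N * j / (2 * N) = j := Nat.mul_div_cancel_left j (by omega)
      simp only [Function.comp, hf, if_neg hne, if_pos hdvd, hdiv, if_neg hj]
      rw [hv, neg_pow, pow_mul]
      ring
  rw [hcomp] at hFG
  have hR : HasSum f (2 * N * (1 - (-v))⁻¹ - N) := (hg.hasSum_iff hvanish).1 hFG
  have := hL.unique hR
  rw [this]
  have h1v : (0:ℝ) < 1 + v := by linarith
  rw [sub_neg_eq_add]
  field_simp
  ring

/-- **Closed form of the moment generating function for Chebyshev `T` zeros.**
For every `N ≥ 1` and every real `z` with `0 < z < 1`, the series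
`Σ_{r=0}^∞ m_r^{(T)}(N) z^r`, with `m_r^{(T)}(N) = (1/N) Σ_{i=1}^N (cos((2i−1)π/(2N)))^r`,
converges and its sum is `(1/√(1−z²)) · tanh(N · ln(z/(1 − √(1−z²))))`. -/
theorem chebyshevT_moment_generating_function (N : ℕ) (hN : 1 ≤ N)
    (z : ℝ) (hz0 : 0 < z) (hz1 : z < 1) :
    HasSum
      (fun r : ℕ =>
        ((1 / (N : ℝ)) *
            ∑ i ∈ Finset.range N,
              (Real.cos ((2 * (i : ℝ) + 1) * Real.pi / (2 * N))) ^ r) * z ^ r)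
      ((1 / Real.sqrt (1 - z ^ 2)) *
        Real.tanh (N * Real.log (z / (1 - Real.sqrt (1 - z ^ 2))))) := by
  have hNR : (N:ℝ) ≠ 0 := Nat.cast_ne_zero.2 (by omega)
  set s : ℝ := Real.sqrt (1 - z ^ 2) with hs
  have hz2 : 0 < 1 - z ^ 2 := by nlinarith
  have hs0 : 0 < s := Real.sqrt_pos.2 hz2
  have hs2 : s ^ 2 = 1 - z ^ 2 := Real.sq_sqrt (le_of_lt hz2)
  have hs1 : s < 1 := by nlinarith
  set u : ℝ := (1 - s) / z with hu
  have hu0 : 0 < u := div_pos (by linarith) hz0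
  have hu1 : u < 1 := by
    rw [hu, div_lt_one hz0]
    nlinarith
  have key : z * (1 + u ^ 2) = 2 * u := by
    rw [hu]
    field_simp
    linear_combination hs2
  -- denominators
  have hDpos : ∀ θ : ℝ, 0 < 1 + u ^ 2 - 2 * u * Real.cos θ := fun θ => by
    nlinarith [Real.neg_one_le_cos θ, Real.cos_le_one θ, sq_nonneg (1 - u)]
  have hzc : ∀ θ : ℝ, 0 < 1 - Real.cos θ * z := fun θ => by
    nlinarith [Real.neg_one_le_cos θ, Real.cos_le_one θ]
  -- geometric series per root
  have hgeo : ∀ i : ℕ, HasSum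
      (fun r : ℕ => (Real.cos ((2 * (i : ℝ) + 1) * π / (2 * N)) * z) ^ r)
      (1 - Real.cos ((2 * (i : ℝ) + 1) * π / (2 * N)) * z)⁻¹ := by
    intro i
    apply hasSum_geometric_of_norm_lt_one
    rw [Real.norm_eq_abs, abs_mul, abs_of_pos hz0]
    calc |Real.cos ((2 * (i : ℝ) + 1) * π / (2 * N))| * z ≤ 1 * z := by
          exact mul_le_mul_of_nonneg_right (Real.abs_cos_le_one _) (le_of_lt hz0)
      _ < 1 := by linarith
  have hsum := (hasSum_sum (fun i (_ : i ∈ Finset.range N) => hgeo i)).mul_left (1 / (N:ℝ))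
  have hfun : (fun r : ℕ => (1 / (N:ℝ)) * ∑ i ∈ Finset.range N,
        (Real.cos ((2 * (i : ℝ) + 1) * π / (2 * N)) * z) ^ r)
      = fun r : ℕ => ((1 / (N : ℝ)) *
            ∑ i ∈ Finset.range N,
              (Real.cos ((2 * (i : ℝ) + 1) * Real.pi / (2 * N))) ^ r) * z ^ r := by
    funext r
    rw [mul_assoc, Finset.sum_mul]
    congr 1
    exact Finset.sum_congr rfl fun i _ => by rw [mul_pow]
  rw [hfun] at hsum
  -- evaluate the sum value
  have hterm : ∀ i : ℕ, (1 - Real.cos ((2 * (i : ℝ) + 1) * π / (2 * N)) * z)⁻¹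
      = ((1 + u ^ 2) / (1 - u ^ 2)) *
        ((1 - u ^ 2) / (1 + u ^ 2 - 2 * u * Real.cos ((2 * (i : ℝ) + 1) * π / (2 * N)))) := by
    intro i
    set c := Real.cos ((2 * (i : ℝ) + 1) * π / (2 * N)) with hc
    have h1 : 0 < 1 - c * z := hzc _
    have h2 : 0 < 1 + u ^ 2 - 2 * u * c := hDpos _
    have h3 : (0:ℝ) < 1 - u ^ 2 := by nlinarith
    rw [div_mul_div_comm, inv_eq_one_div, div_eq_div_iff h1.ne' (by positivity)]
    linear_combination (1 - u ^ 2) * c * key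
  have hval : ∑ i ∈ Finset.range N,
      (1 - Real.cos ((2 * (i : ℝ) + 1) * π / (2 * N)) * z)⁻¹
      = ((1 + u ^ 2) / (1 - u ^ 2)) * ((N : ℝ) * (1 - u ^ (2 * N)) / (1 + u ^ (2 * N))) := by
    rw [Finset.sum_congr rfl fun i _ => hterm i, ← Finset.mul_sum,
      mgf_main_sum N hN u (le_of_lt hu0) hu1]
  rw [hval] at hsum
  -- identify the closed form
  have htanh : Real.tanh ((N:ℝ) * Real.log (z / (1 - s)))
      = (1 - u ^ (2 * N)) / (1 + u ^ (2 * N)) := by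
    have hinv : z / (1 - s) = u⁻¹ := by
      rw [hu]
      field_simp
    have hlog : Real.log (z / (1 - s)) = - Real.log u := by
      rw [hinv, Real.log_inv]
    have hexp1 : Real.exp ((N:ℝ) * Real.log u) = u ^ N := by
      rw [Real.exp_nat_mul, Real.exp_log hu0]
    have huN : 0 < u ^ N := pow_pos hu0 N
    have h2N : u ^ (2 * N) = (u ^ N) ^ 2 := by rw [← pow_mul, mul_comm]
    rw [hlog, Real.tanh_eq_sinh_div_cosh, Real.sinh_eq, Real.cosh_eq, mul_neg, neg_neg,
      Real.exp_neg, hexp1, h2N]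
    rw [div_div_div_cancel_right₀]
    · field_simp
    · norm_num
  rw [htanh]
  have hsval : s * (1 + u ^ 2) = 1 - u ^ 2 := by
    rw [hu]
    field_simp
    linear_combination (s - 1) * hs2
  have hfinal : (1 / (N:ℝ)) * (((1 + u ^ 2) / (1 - u ^ 2)) *
      ((N : ℝ) * (1 - u ^ (2 * N)) / (1 + u ^ (2 * N))))
      = (1 / s) * ((1 - u ^ (2 * N)) / (1 + u ^ (2 * N))) := by
    have hu2 : (0:ℝ) < 1 - u ^ 2 := by nlinarith
    have hv1 : (0:ℝ) < 1 + u ^ (2 * N) := by positivity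
    have h9 : (1 + u ^ 2) / (1 - u ^ 2) = 1 / s := by
      rw [div_eq_div_iff hu2.ne' hs0.ne']
      linarith [hsval]
    rw [h9]
    field_simp
  rw [hfinal] at hsum
  exact hsum
end

section
/- Closed form of the moment generating function for Chebyshev U zeros (Table 1, with the hyperbolic function corrected to coth): for every N ≥ 1 and every real z with 0 < z < 1, the series Σ_{r=0}^∞ m_r^{(U)}(N) z^r converges and equals (1/(N√(1−z²))) · [ (N+1) · coth((N+1) · ln(z/(1 − √(1−z²)))) − 1/√(1−z²) ]. -/
open Finset Real

open Polynomial in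
lemma sum_inv_sub_root (n : ℕ) (hn : 0 < n) (ζ : ℂ) (hζ : IsPrimitiveRoot ζ n)
    (x : ℂ) (hx : x ^ n ≠ 1) :
    ∑ k ∈ Finset.range n, (x - ζ ^ k)⁻¹ = n * x ^ (n - 1) / (x ^ n - 1) := by
  have hroots : (X ^ n - C (1 : ℂ)).roots = (Multiset.range n).map (fun i => ζ ^ i) := by
    have h := hζ.nthRoots_eq (α := (1 : ℂ)) (a := (1 : ℂ)) (one_pow n)
    simpa [Polynomial.nthRoots, mul_one] using h
  have hmonic : (X ^ n - C (1 : ℂ)).Monic := monic_X_pow_sub_C 1 hn.ne'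
  have hcard : (X ^ n - C (1 : ℂ)).roots.card = (X ^ n - C (1:ℂ)).natDegree := by
    rw [hroots, Multiset.card_map, Multiset.card_range, natDegree_X_pow_sub_C]
  have hP : (X ^ n - C (1 : ℂ)) = ∏ k ∈ Finset.range n, (X - C (ζ ^ k)) := by
    conv_lhs => rw [← prod_multiset_X_sub_C_of_monic_of_roots_card_eq hmonic hcard]
    rw [hroots, Multiset.map_map, Finset.prod_eq_multiset_prod, Finset.range_val]
    rfl
  -- evaluate the product
  have heval : ∏ k ∈ Finset.range n, (x - ζ ^ k) = x ^ n - 1 := by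
    have := congrArg (Polynomial.eval x) hP
    simpa [eval_prod] using this.symm
  -- evaluate the derivative
  have hder : ∑ k ∈ Finset.range n, ∏ j ∈ (Finset.range n).erase k, (x - ζ ^ j)
      = n * x ^ (n - 1) := by
    have hfin : Polynomial.derivative (∏ k ∈ Finset.range n, (X - C (ζ ^ k)))
        = ∑ k ∈ Finset.range n, ∏ j ∈ (Finset.range n).erase k, (X - C (ζ ^ j)) := by
      rw [Finset.prod_eq_multiset_prod, derivative_prod, Finset.sum_eq_multiset_sum]
      congr 1
      refine Multiset.map_congr rfl ?_
      intro i hi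
      rw [← Finset.erase_val, ← Finset.prod_eq_multiset_prod]
      simp [derivative_pow]
    have h1 := hP ▸ hfin
    have h2 := congrArg (Polynomial.eval x) h1
    simpa [eval_finset_sum, eval_prod, derivative_X_pow] using h2.symm
  have hne : ∀ k ∈ Finset.range n, x - ζ ^ k ≠ 0 := by
    intro k _
    intro h
    apply hx
    have hxk : x = ζ ^ k := by linear_combination h
    rw [hxk, ← pow_mul, mul_comm, pow_mul, hζ.pow_eq_one, one_pow]
  have hxn : x ^ n - 1 ≠ 0 := sub_ne_zero.mpr hx
  have hterm : ∀ k ∈ Finset.range n,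
      (x - ζ ^ k)⁻¹ = (∏ j ∈ (Finset.range n).erase k, (x - ζ ^ j)) / (x ^ n - 1) := by
    intro k hk
    have hm := Finset.mul_prod_erase (Finset.range n) (fun j => x - ζ ^ j) hk
    rw [heval] at hm
    field_simp [hne k hk]
    linear_combination -hm
  rw [Finset.sum_congr rfl hterm, ← Finset.sum_div, hder]

lemma pair_sum (N : ℕ) (F : ℝ → ℝ) :
    ∑ k ∈ Finset.range (2 * (N + 1)), F (Real.cos (π * k / (N + 1)))
      = F 1 + F (-1) + 2 * ∑ k ∈ Finset.range N, F (Real.cos (π * (k + 1) / (N + 1))) := by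
  have hsplit : 2 * (N + 1) = (N + 2) + N := by omega
  rw [hsplit, Finset.sum_range_add]
  have hNc : ((N:ℝ) + 1) ≠ 0 := by positivity
  -- second chunk: reflect
  have hsecond : ∀ k ∈ Finset.range N,
      F (Real.cos (π * (↑(N + 2 + k)) / (N + 1))) = F (Real.cos (π * (↑(N - k) : ℕ) / (N + 1))) := by
    intro k hk
    rw [Finset.mem_range] at hk
    have hang : (π * (↑(N + 2 + k)) / (N + 1)) = 2 * π - π * (↑(N - k) : ℕ) / (N + 1) := by
      have h1 : ((N - k : ℕ) : ℝ) = (N : ℝ) - k := by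
        rw [Nat.cast_sub hk.le]
      rw [h1]
      push_cast
      field_simp
      ring
    rw [hang, Real.cos_sub, Real.cos_two_pi, Real.sin_two_pi]
    ring_nf
  rw [Finset.sum_congr rfl hsecond]
  have hrefl : ∑ k ∈ Finset.range N, F (Real.cos (π * (↑(N - k) : ℕ) / (N + 1)))
      = ∑ k ∈ Finset.range N, F (Real.cos (π * (↑(k + 1) : ℕ) / (N + 1))) := by
    have := Finset.sum_range_reflect (fun j => F (Real.cos (π * (↑(j + 1) : ℕ) / (N + 1)))) N
    rw [← this]
    apply Finset.sum_congr rfl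
    intro j hj
    rw [Finset.mem_range] at hj
    have hje : N - 1 - j + 1 = N - j := by omega
    rw [hje]
  rw [hrefl]
  -- first chunk
  rw [Finset.sum_range_succ', Finset.sum_range_succ]
  have h0 : F (Real.cos (π * (0:ℕ) / (N + 1))) = F 1 := by norm_num
  have hM : F (Real.cos (π * (↑(N + 1) : ℕ) / (N + 1))) = F (-1) := by
    have : (π * (↑(N + 1) : ℕ) / (N + 1)) = π := by push_cast; field_simp
    rw [this, Real.cos_pi]
  have hcast : ∀ k : ℕ, F (Real.cos (π * (↑(k+1):ℕ) / (N + 1))) = F (Real.cos (π * ((k:ℝ) + 1) / (N + 1))) := by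
    intro k; push_cast; ring_nf
  push_cast at hM ⊢
  rw [hM]
  norm_num
  ring

set_option maxHeartbeats 1000000 in
lemma keyReal (N : ℕ) (hN : 1 ≤ N) (z : ℝ) (hz0 : 0 < z) (hz1 : z < 1) :
    (1 / (N : ℝ)) * ∑ k ∈ Finset.range N,
        (1 - Real.cos (((k : ℝ) + 1) * Real.pi / (N + 1)) * z)⁻¹
      = ((1 / (N * Real.sqrt (1 - z ^ 2))) *
        ((N + 1) *
            (Real.cosh ((N + 1) * Real.log (z / (1 - Real.sqrt (1 - z ^ 2)))) /
              Real.sinh ((N + 1) * Real.log (z / (1 - Real.sqrt (1 - z ^ 2))))) -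
          1 / Real.sqrt (1 - z ^ 2))) := by
  have hz2 : 0 < 1 - z ^ 2 := by nlinarith
  set s : ℝ := Real.sqrt (1 - z ^ 2) with hsdef
  have hs0 : 0 < s := Real.sqrt_pos.mpr hz2
  have hs2 : s ^ 2 = 1 - z ^ 2 := Real.sq_sqrt hz2.le
  have hs1 : s < 1 := by nlinarith
  set x : ℝ := (1 + s) / z with hxdef
  have hx1 : 1 < x := (one_lt_div hz0).mpr (by linarith)
  have hx0 : 0 < x := lt_trans one_pos hx1
  have hz' : z ≠ 0 := hz0.ne'
  have hs' : s ≠ 0 := hs0.ne'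
  have hx' : x ≠ 0 := hx0.ne'
  have hzx : z * x = 1 + s := by
    rw [hxdef]; field_simp
  have hlogarg : z / (1 - s) = x := by
    rw [hxdef, div_eq_div_iff (by linarith) hz0.ne']
    nlinarith [hs2]
  -- hyperbolic side
  set E : ℝ := x ^ (N + 1) with hEdef
  have hE1 : 1 < E := one_lt_pow₀ hx1 (Nat.succ_ne_zero N)
  have hE0 : 0 < E := lt_trans one_pos hE1
  have hexp : Real.exp (((N : ℝ) + 1) * Real.log x) = E := by
    rw [show ((N : ℝ) + 1) = ((N + 1 : ℕ) : ℝ) by push_cast; ring,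
      Real.exp_nat_mul, Real.exp_log hx0]
  have hcosh : Real.cosh (((N : ℝ) + 1) * Real.log x) = (E + E⁻¹) / 2 := by
    rw [Real.cosh_eq, Real.exp_neg, hexp]
  have hsinh : Real.sinh (((N : ℝ) + 1) * Real.log x) = (E - E⁻¹) / 2 := by
    rw [Real.sinh_eq, Real.exp_neg, hexp]
  have hE2 : (0:ℝ) < E ^ 2 - 1 := by nlinarith
  have hratio : Real.cosh (((N : ℝ) + 1) * Real.log x) / Real.sinh (((N : ℝ) + 1) * Real.log x)
      = (E ^ 2 + 1) / (E ^ 2 - 1) := by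
    rw [hcosh, hsinh]
    have hEi : E⁻¹ < 1 := inv_lt_one_of_one_lt₀ hE1
    rw [div_eq_div_iff (by linarith) hE2.ne']
    field_simp
  clear_value s x E
  -- complex sum
  set n : ℕ := 2 * (N + 1) with hndef
  have hn0 : 0 < n := by omega
  have hnc : ((n : ℝ)) = 2 * ((N : ℝ) + 1) := by rw [hndef]; push_cast; ring
  set ζ : ℂ := Complex.exp (2 * π * Complex.I / n) with hzeta_def
  have hζ : IsPrimitiveRoot ζ n := Complex.isPrimitiveRoot_exp n hn0.ne'
  have hxnR : (1 : ℝ) < x ^ n := one_lt_pow₀ hx1 (by omega)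
  have hxnC : ((x : ℝ) : ℂ) ^ n ≠ 1 := by
    intro h
    have h2 : (((x ^ n : ℝ)) : ℂ) = ((1 : ℝ) : ℂ) := by push_cast; exact h
    have := Complex.ofReal_injective h2
    linarith
  have hsum := sum_inv_sub_root n hn0 ζ hζ ((x : ℝ) : ℂ) hxnC
  -- real parts
  have hzetak : ∀ k : ℕ, ζ ^ k = Complex.exp (((2 * π * k / n : ℝ) : ℂ) * Complex.I) := by
    intro k
    rw [hzeta_def, ← Complex.exp_nat_mul]
    congr 1
    push_cast
    ring
  have hterm_re : ∀ k : ℕ, ((((x : ℝ) : ℂ) - ζ ^ k)⁻¹).re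
      = (x - Real.cos (2 * π * k / n)) / (x ^ 2 - 2 * x * Real.cos (2 * π * k / n) + 1) := by
    intro k
    rw [Complex.inv_re, Complex.normSq_apply]
    have hre : ((((x : ℝ) : ℂ) - ζ ^ k)).re = x - Real.cos (2 * π * k / n) := by
      rw [hzetak k, Complex.sub_re, Complex.ofReal_re, Complex.exp_ofReal_mul_I_re]
    have him : ((((x : ℝ) : ℂ) - ζ ^ k)).im = - Real.sin (2 * π * k / n) := by
      rw [hzetak k, Complex.sub_im, Complex.ofReal_im, Complex.exp_ofReal_mul_I_im]
      ring
    rw [hre, him]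
    congr 1
    have h2 := Real.sin_sq_add_cos_sq (2 * π * k / n)
    linear_combination h2
  have hre_eq : ∑ k ∈ Finset.range n,
      (x - Real.cos (2 * π * k / n)) / (x ^ 2 - 2 * x * Real.cos (2 * π * k / n) + 1)
      = n * x ^ (n - 1) / (x ^ n - 1) := by
    have h := congrArg Complex.re hsum
    rw [Complex.re_sum] at h
    have hrhs : (((n : ℕ) : ℂ) * ((x : ℝ) : ℂ) ^ (n - 1) / (((x : ℝ) : ℂ) ^ n - 1)).re
        = (n : ℝ) * x ^ (n - 1) / (x ^ n - 1) := by
      have : (((n : ℕ) : ℂ) * ((x : ℝ) : ℂ) ^ (n - 1) / (((x : ℝ) : ℂ) ^ n - 1))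
          = (((n : ℝ) * x ^ (n - 1) / (x ^ n - 1) : ℝ) : ℂ) := by
        push_cast
        ring
      rw [this, Complex.ofReal_re]
    rw [hrhs] at h
    rw [← h]
    apply Finset.sum_congr rfl
    intro k _
    exact (hterm_re k).symm
  -- per-term algebraic transformation
  have hx2 : z * (x ^ 2 + 1) = 2 * x := by
    apply mul_left_cancel₀ hz'
    ring_nf
    linear_combination (z * x + s - 1) * hzx + hs2
  have htrans : ∀ c : ℝ, -1 ≤ c → c ≤ 1 →
      (x - c) / (x ^ 2 - 2 * x * c + 1) = (s * (1 - c * z)⁻¹ + 1) / (2 * x) := by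
    intro c hcl hcu
    have hc1 : 0 < 1 - c * z := by nlinarith
    have hc1' : (1 : ℝ) - c * z ≠ 0 := hc1.ne'
    have hq : x ^ 2 - 2 * x * c + 1 = (2 * x / z) * (1 - c * z) := by
      field_simp
      linear_combination hx2
    rw [hq, div_eq_div_iff (mul_pos (div_pos (by linarith : (0:ℝ) < 2 * x) hz0) hc1).ne' (mul_pos two_pos hx0).ne']
    field_simp
    linear_combination hzx
  -- sum of transformed terms
  have h1 : ∑ k ∈ Finset.range n,
      (s * (1 - Real.cos (2 * π * k / n) * z)⁻¹ + 1) / (2 * x)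
      = (n : ℝ) * x ^ (n - 1) / (x ^ n - 1) := by
    rw [← hre_eq]
    apply Finset.sum_congr rfl
    intro k _
    exact (htrans _ (Real.neg_one_le_cos _) (Real.cos_le_one _)).symm
  have h2 : ∑ k ∈ Finset.range n,
      (s * (1 - Real.cos (2 * π * k / n) * z)⁻¹ + 1) / (2 * x)
      = (s * (∑ k ∈ Finset.range n, (1 - Real.cos (2 * π * k / n) * z)⁻¹) + n) / (2 * x) := by
    rw [← Finset.sum_div, Finset.sum_add_distrib, ← Finset.mul_sum, Finset.sum_const,
      Finset.card_range]
    simp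
  have hGsum : ∑ k ∈ Finset.range n, (1 - Real.cos (2 * π * k / n) * z)⁻¹
      = (2 * x * ((n : ℝ) * x ^ (n - 1) / (x ^ n - 1)) - n) / s := by
    have h3 : (s * (∑ k ∈ Finset.range n, (1 - Real.cos (2 * π * k / n) * z)⁻¹) + n) / (2 * x)
        = (n : ℝ) * x ^ (n - 1) / (x ^ n - 1) := by rw [← h2, h1]
    rw [div_eq_iff (mul_ne_zero two_ne_zero hx')] at h3
    rw [eq_div_iff hs0.ne']
    linarith [h3]
  -- angle conversion and pairing
  have hNc : ((N : ℝ) + 1) ≠ 0 := by positivity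
  have hang : ∀ k : ℕ, 2 * π * (k : ℝ) / (n : ℝ) = π * (k : ℝ) / ((N : ℝ) + 1) := by
    intro k
    rw [hnc]
    field_simp
  have hpair := pair_sum N (fun c => (1 - c * z)⁻¹)
  simp only [one_mul, neg_one_mul, sub_neg_eq_add] at hpair
  rw [← hndef] at hpair
  have hangle : ∑ k ∈ Finset.range n, (1 - Real.cos (π * (k : ℝ) / ((N : ℝ) + 1)) * z)⁻¹
      = ∑ k ∈ Finset.range n, (1 - Real.cos (2 * π * (k : ℝ) / (n : ℝ)) * z)⁻¹ := by
    apply Finset.sum_congr rfl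
    intro k _
    rw [hang k]
  rw [hangle, hGsum] at hpair
  -- hyperbolic rewrite of the closed form
  have hxn : x ^ n = E ^ 2 := by
    rw [hndef, hEdef, show 2 * (N + 1) = (N + 1) * 2 from by ring, pow_mul]
  have hxn1 : x ^ (n - 1) * x = E ^ 2 := by
    rw [← pow_succ, show n - 1 + 1 = n from by omega, hxn]
  have hE2' : (E : ℝ) ^ 2 - 1 ≠ 0 := hE2.ne'
  have hR0 : 2 * x * ((n : ℝ) * x ^ (n - 1) / (x ^ n - 1))
      = 2 * (n : ℝ) * E ^ 2 / (E ^ 2 - 1) := by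
    rw [hxn]
    have h' : 2 * x * ((n : ℝ) * x ^ (n - 1) / (E ^ 2 - 1))
        = 2 * (n : ℝ) * (x ^ (n - 1) * x) / (E ^ 2 - 1) := by ring
    rw [h', hxn1]
  rw [hR0] at hpair
  clear_value n
  have h1z : (1 : ℝ) - z ≠ 0 := by linarith
  have h1z' : (1 : ℝ) + z ≠ 0 := by linarith
  have h12 : ((1 : ℝ) - z)⁻¹ + ((1 : ℝ) + z)⁻¹ = 2 / s ^ 2 := by
    field_simp
    linear_combination 2 * hs2
  have hfinal_eq : (2 * (n : ℝ) * E ^ 2 / (E ^ 2 - 1) - (n : ℝ)) / s - 2 / s ^ 2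
      = 2 * ((1 / s) * (((N : ℝ) + 1) * (E ^ 2 + 1) / (E ^ 2 - 1) - 1 / s)) := by
    rw [hnc]
    field_simp
    ring
  have hAval : ∑ k ∈ Finset.range N, (1 - Real.cos (π * ((k : ℝ) + 1) / ((N : ℝ) + 1)) * z)⁻¹
      = (1 / s) * (((N : ℝ) + 1) * (E ^ 2 + 1) / (E ^ 2 - 1) - 1 / s) := by
    linarith [hpair, h12, hfinal_eq]
  have hsum_eq : ∑ k ∈ Finset.range N,
      (1 - Real.cos (((k : ℝ) + 1) * π / ((N : ℝ) + 1)) * z)⁻¹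
      = ∑ k ∈ Finset.range N, (1 - Real.cos (π * ((k : ℝ) + 1) / ((N : ℝ) + 1)) * z)⁻¹ := by
    apply Finset.sum_congr rfl
    intro k _
    rw [mul_comm ((k : ℝ) + 1) π]
  rw [hlogarg, hratio, hsum_eq, hAval]
  ring


/-- **Closed form of the moment generating function for Chebyshev `U` zeros**
(with the hyperbolic function corrected to `coth`).  For every `N ≥ 1` and every real
`z` with `0 < z < 1`, the series `Σ_{r=0}^∞ m_r^{(U)}(N) z^r`, with
`m_r^{(U)}(N) = (1/N) Σ_{k=1}^N (cos(kπ/(N+1)))^r`, converges and its sum is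
`(1/(N√(1−z²))) · [(N+1)·coth((N+1)·ln(z/(1−√(1−z²)))) − 1/√(1−z²)]`. -/
theorem chebyshevU_moment_generating_function (N : ℕ) (hN : 1 ≤ N)
    (z : ℝ) (hz0 : 0 < z) (hz1 : z < 1) :
    HasSum
      (fun r : ℕ =>
        ((1 / (N : ℝ)) *
            ∑ k ∈ Finset.range N,
              (Real.cos (((k : ℝ) + 1) * Real.pi / (N + 1))) ^ r) * z ^ r)
      ((1 / (N * Real.sqrt (1 - z ^ 2))) *
        ((N + 1) *
            (Real.cosh ((N + 1) * Real.log (z / (1 - Real.sqrt (1 - z ^ 2)))) /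
              Real.sinh ((N + 1) * Real.log (z / (1 - Real.sqrt (1 - z ^ 2))))) -
          1 / Real.sqrt (1 - z ^ 2))) := by
  have hk : ∀ k ∈ Finset.range N, HasSum
      (fun r : ℕ => (Real.cos (((k : ℝ) + 1) * Real.pi / (N + 1)) * z) ^ r)
      ((1 - Real.cos (((k : ℝ) + 1) * Real.pi / (N + 1)) * z)⁻¹) := by
    intro k _
    apply hasSum_geometric_of_abs_lt_one
    rw [abs_mul, abs_of_pos hz0]
    calc |Real.cos (((k : ℝ) + 1) * Real.pi / (N + 1))| * z ≤ 1 * z :=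
          mul_le_mul_of_nonneg_right (Real.abs_cos_le_one _) hz0.le
      _ < 1 := by simpa using hz1
  have h1 := (hasSum_sum hk).mul_left (1 / (N : ℝ))
  have hfe : (fun r : ℕ =>
      ((1 / (N : ℝ)) *
          ∑ k ∈ Finset.range N, (Real.cos (((k : ℝ) + 1) * Real.pi / (N + 1))) ^ r) * z ^ r)
      = fun r : ℕ => (1 / (N : ℝ)) *
          ∑ k ∈ Finset.range N, (Real.cos (((k : ℝ) + 1) * Real.pi / (N + 1)) * z) ^ r := by
    funext r
    rw [mul_assoc, Finset.sum_mul]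
    simp [mul_pow]
  rw [hfe, ← keyReal N hN z hz0 hz1]
  exact h1
end

section
/- Riccati equation for the Chebyshev T moment generating function (Table 2): for every N ≥ 1, the function G(z) := Σ_{r=0}^∞ m_r^{(T)}(N) z^r is well defined and differentiable on the real interval (−1, 1), and for every z ∈ (−1, 1) it satisfies ((1 − z²) z / N) · G′(z) = (z²/N) · G(z) + (1 − z²) · G(z)² − 1. -/
open Finset Real

section ChebAux
open Polynomial Polynomial.Chebyshev

/-- The Chebyshev second-order ODE `(1-X²) T'' = X T' - m² T`. -/
theorem cheb_riccati_ode (m : ℤ) : (1 - X^2) * derivative (derivative (T ℝ m)) =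
    X * derivative (T ℝ m) - ((m:ℝ[X]))^2 * T ℝ m := by
  have h1 := congr_arg derivative (one_sub_X_sq_mul_derivative_T_eq_poly_in_T (R := ℝ) (m-1))
  rw [sub_add_cancel] at h1
  simp only [derivative_mul, derivative_sub, derivative_one, derivative_X_pow, derivative_X,
    derivative_intCast, derivative_add, derivative_ofNat, map_natCast, Nat.cast_ofNat,
    map_ofNat] at h1
  have h2 := T_derivative_eq_U (R := ℝ) m
  have h3 := T_derivative_eq_U (R := ℝ) (m-1)
  have h4 := T_eq_U_sub_X_mul_U ℝ m
  have h5 := U_sub_two ℝ m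
  linear_combination (norm := (push_cast; ring_nf)) h1 + (m:ℝ[X])*h3 + (1-(m:ℝ[X]))*X*h2 +
    (m:ℝ[X])*((m:ℝ[X])-1)*h4 + (m:ℝ[X])*((m:ℝ[X])-1)*h5

theorem cheb_riccati_deg (n : ℕ) :
    (T ℝ (n:ℤ)).natDegree ≤ n ∧ (T ℝ (n:ℤ)).coeff n = 2^(n-1) := by
  induction n using Nat.strong_induction_on with
  | _ n ih =>
    match n with
    | 0 => simp [T_zero]
    | 1 => simp [T_one]
    | (k+2) =>
      obtain ⟨h1d, h1c⟩ := ih (k+1) (by omega)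
      obtain ⟨h0d, h0c⟩ := ih k (by omega)
      have hT : T ℝ ((k+2:ℕ):ℤ) = 2 * (X * T ℝ ((k+1:ℕ):ℤ)) - T ℝ (k:ℤ) := by
        push_cast
        rw [← mul_assoc]
        exact T_add_two ℝ k
      have hd2 : (2 * (X * T ℝ ((k+1:ℕ):ℤ))).natDegree ≤ k + 2 := by
        have h' : (X * T ℝ ((k+1:ℕ):ℤ)).natDegree ≤ k + 2 :=
          le_trans natDegree_mul_le (by rw [natDegree_X]; omega)
        exact le_trans natDegree_mul_le (by simpa using h')
      constructor
      · rw [hT]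
        refine le_trans (natDegree_sub_le _ _) (max_le hd2 (by omega))
      · rw [hT]
        rw [coeff_sub]
        have hc0 : (T ℝ (k:ℤ)).coeff (k+2) = 0 :=
          coeff_eq_zero_of_natDegree_lt (by omega)
        have h2 : (2 * (X * T ℝ ((k+1:ℕ):ℤ))).coeff (k+2)
            = 2 * (T ℝ ((k+1:ℕ):ℤ)).coeff (k+1) := by
          rw [show ((2:ℝ[X])) = Polynomial.C 2 from (map_ofNat Polynomial.C 2).symm, coeff_C_mul, coeff_X_mul]
        rw [h2, hc0, h1c]
        simp
        ring

theorem cheb_riccati_fact (N : ℕ) (hN : 1 ≤ N) :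
    T ℝ (N:ℤ) = Polynomial.C ((2:ℝ)^(N-1)) *
      ∏ i ∈ Finset.range N, (X - Polynomial.C (Real.cos ((2*(i:ℝ)+1)*Real.pi/(2*N)))) := by
  set θ : ℕ → ℝ := fun i => (2*(i:ℝ)+1)*Real.pi/(2*N) with hθ
  set c : ℝ := (2:ℝ)^(N-1) with hc
  have hNR : (0:ℝ) < N := by exact_mod_cast hN
  have hroot : ∀ i, (T ℝ (N:ℤ)).eval (Real.cos (θ i)) = 0 := by
    intro i
    rw [T_real_cos]
    have : ((N:ℤ):ℝ) * θ i = (i:ℝ) * Real.pi + Real.pi/2 := by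
      field_simp [hθ, Int.cast_natCast]
      rw [hθ]; field_simp; norm_cast
    rw [this, Real.cos_add, Real.cos_pi_div_two, Real.sin_pi_div_two]
    simp [Real.sin_nat_mul_pi]
  have hmem : ∀ i : ℕ, i < N → θ i ∈ Set.Icc 0 Real.pi := by
    intro i hi
    constructor
    · positivity
    · rw [hθ]
      rw [div_le_iff₀ (by positivity)]
      have : (2*(i:ℝ)+1) ≤ 2*N - 1 := by
        have : (i:ℝ) + 1 ≤ N := by exact_mod_cast hi
        linarith
      nlinarith [Real.pi_pos]
  have hinj : Function.Injective (fun i : Fin N => Real.cos (θ i)) := by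
    intro i j hij
    have h1 : θ i = θ j := Real.injOn_cos (hmem i i.2) (hmem j j.2) hij
    have : (i:ℝ) = (j:ℝ) := by
      rw [hθ] at h1
      field_simp at h1
      linarith
    exact Fin.ext (by exact_mod_cast this)
  set Q : ℝ[X] := ∏ i ∈ Finset.range N, (X - Polynomial.C (Real.cos (θ i))) with hQ
  have hQmonic : Q.Monic := monic_prod_of_monic _ _ (fun i _ => monic_X_sub_C _)
  have hQdeg : Q.natDegree = N := by
    rw [hQ, natDegree_prod _ _ (fun i _ => X_sub_C_ne_zero _)]
    simp [natDegree_X_sub_C]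
  set D : ℝ[X] := T ℝ (N:ℤ) - Polynomial.C c * Q with hD
  have hcoeffD : ∀ m : ℕ, N ≤ m → D.coeff m = 0 := by
    intro m hm
    rcases eq_or_lt_of_le hm with h | h
    · have hQc : Q.coeff N = 1 := by rw [← hQdeg]; exact hQmonic.coeff_natDegree
      rw [hD, coeff_sub, coeff_C_mul, ← h, (cheb_riccati_deg N).2, hQc, mul_one, hc, sub_self]
    · rw [hD, coeff_sub, coeff_C_mul,
        coeff_eq_zero_of_natDegree_lt (lt_of_le_of_lt (cheb_riccati_deg N).1 h),
        coeff_eq_zero_of_natDegree_lt (by rw [hQdeg]; exact h)]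
      ring
  have hDdeg : D.natDegree < N := by
    by_cases h0 : D = 0
    · rw [h0]; simp; omega
    · have : D.degree < (N:ℕ) := by
        rw [degree_lt_iff_coeff_zero]
        intro m hm
        exact_mod_cast hcoeffD m (by exact_mod_cast hm)
      exact natDegree_lt_iff_degree_lt h0 |>.2 (by exact_mod_cast this)
  have hDzero : D = 0 := by
    apply Polynomial.eq_zero_of_natDegree_lt_card_of_eval_eq_zero D hinj
    · intro i
      rw [hD, eval_sub, eval_mul, hroot i, hQ]
      simp only [eval_prod, eval_sub, eval_X, eval_C]
      rw [Finset.prod_eq_zero (Finset.mem_range.mpr i.2) (by ring)]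
      ring
    · simpa using hDdeg
  exact sub_eq_zero.mp hDzero

end ChebAux

/-- **Riccati equation for the Chebyshev `T` moment generating function.**
For every `N ≥ 1`, the function `G(z) = Σ_{r=0}^∞ m_r^{(T)}(N) z^r`, with
`m_r^{(T)}(N) = (1/N) Σ_{i=1}^N (cos((2i−1)π/(2N)))^r`, is well defined (the series
converges) and differentiable on `(−1, 1)`, and there it satisfies
`((1 − z²) z / N) G′(z) = (z²/N) G(z) + (1 − z²) G(z)² − 1`. -/
theorem chebyshevT_moment_gf_riccati (N : ℕ) (hN : 1 ≤ N)
    (m : ℕ → ℝ)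
    (hm : ∀ r, m r = (1 / (N : ℝ)) *
        ∑ i ∈ Finset.range N, (Real.cos ((2 * (i : ℝ) + 1) * Real.pi / (2 * N))) ^ r)
    (G : ℝ → ℝ) (hG : ∀ w, G w = ∑' r : ℕ, m r * w ^ r) :
    ∀ z ∈ Set.Ioo (-1 : ℝ) 1,
      Summable (fun r : ℕ => m r * z ^ r) ∧
        ∃ g' : ℝ, HasDerivAt G g' z ∧
          ((1 - z ^ 2) * z / N) * g' =
            (z ^ 2 / N) * G z + (1 - z ^ 2) * (G z) ^ 2 - 1 := by
  have hNR : (0:ℝ) < N := by exact_mod_cast hN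
  set x : ℕ → ℝ := fun i => Real.cos ((2 * (i : ℝ) + 1) * Real.pi / (2 * N)) with hx
  have hxz : ∀ w : ℝ, w ∈ Set.Ioo (-1:ℝ) 1 → ∀ i, |x i * w| < 1 := by
    intro w hw i
    calc |x i * w| = |x i| * |w| := abs_mul _ _
      _ ≤ 1 * |w| := by
          have := Real.abs_cos_le_one ((2 * (i : ℝ) + 1) * Real.pi / (2 * N))
          exact mul_le_mul_of_nonneg_right this (abs_nonneg w)
      _ = |w| := one_mul _
      _ < 1 := abs_lt.mpr ⟨hw.1, hw.2⟩
  have hne : ∀ w ∈ Set.Ioo (-1:ℝ) 1, ∀ i, 1 - x i * w ≠ 0 := by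
    intro w hw i h
    have := hxz w hw i
    rw [show x i * w = 1 from by linarith] at this
    simp at this
  have hterm : ∀ w : ℝ, (fun r : ℕ => m r * w ^ r)
      = fun r => ∑ i ∈ Finset.range N, (1/(N:ℝ)) * (x i * w)^r := by
    intro w
    funext r
    rw [hm r, Finset.mul_sum, Finset.sum_mul]
    refine Finset.sum_congr rfl fun i _ => ?_
    rw [mul_pow]
    ring
  have hsummable : ∀ w ∈ Set.Ioo (-1:ℝ) 1, Summable (fun r : ℕ => m r * w ^ r) := by
    intro w hw
    rw [hterm w]
    exact summable_sum fun i _ =>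
      ((summable_geometric_of_abs_lt_one (hxz w hw i)).mul_left _)
  have hGF : ∀ w ∈ Set.Ioo (-1:ℝ) 1,
      G w = (1/(N:ℝ)) * ∑ i ∈ Finset.range N, (1 - x i * w)⁻¹ := by
    intro w hw
    rw [hG w, hterm w, Summable.tsum_finsetSum (fun i _ =>
      ((summable_geometric_of_abs_lt_one (hxz w hw i)).mul_left _)), Finset.mul_sum]
    refine Finset.sum_congr rfl fun i _ => ?_
    rw [tsum_mul_left, tsum_geometric_of_abs_lt_one (hxz w hw i)]
  intro z hz
  refine ⟨hsummable z hz, (1/(N:ℝ)) * ∑ i ∈ Finset.range N, x i * ((1 - x i * z)⁻¹)^2, ?_, ?_⟩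
  · -- derivative
    have hF : HasDerivAt (fun w => (1/(N:ℝ)) * ∑ i ∈ Finset.range N, (1 - x i * w)⁻¹)
        ((1/(N:ℝ)) * ∑ i ∈ Finset.range N, x i * ((1 - x i * z)⁻¹)^2) z := by
      refine HasDerivAt.const_mul _ (HasDerivAt.fun_sum fun i _ => ?_)
      have h1 : HasDerivAt (fun w => 1 - x i * w) (-(x i)) z := by
        simpa using ((hasDerivAt_id z).const_mul (x i)).const_sub 1
      have h2 := h1.fun_inv (hne z hz i)
      refine h2.congr_deriv ?_
      rw [neg_neg, div_eq_mul_inv, inv_pow]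
    refine hF.congr_of_eventuallyEq ?_
    filter_upwards [isOpen_Ioo.mem_nhds hz] with w hw
    exact hGF w hw
  · -- the Riccati identity
    rw [hGF z hz]
    by_cases hz0 : z = 0
    · subst hz0
      simp only [one_pow, mul_zero, zero_mul, mul_one, sub_zero, zero_pow, ne_eq,
        OfNat.ofNat_ne_zero, not_false_eq_true, zero_div, inv_one, Finset.sum_const,
        Finset.card_range, nsmul_eq_mul, mul_zero]
      field_simp
      norm_num
    · -- z ≠ 0 : use the Chebyshev polynomial structure
      set u : ℝ := z⁻¹ with hu
      have hu0 : u ≠ 0 := inv_ne_zero hz0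
      have hzu : z * u = 1 := mul_inv_cancel₀ hz0
      have hzeq : z = u⁻¹ := by rw [hu, inv_inv]
      have hfac : ∀ i : ℕ, 1 - x i * z = z * (u - x i) := by
        intro i
        rw [mul_sub, hzu]
        ring
      have hane : ∀ i : ℕ, u - x i ≠ 0 := by
        intro i h
        exact hne z hz i (by rw [hfac i, h, mul_zero])
      set c : ℝ := (2:ℝ)^(N-1) with hc
      have hcne : c ≠ 0 := by positivity
      set A : ℝ := ∏ i ∈ Finset.range N, (u - x i) with hA
      have hAne : A ≠ 0 := Finset.prod_ne_zero_iff.mpr fun i _ => hane i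
      set T1 : ℝ := ∑ i ∈ Finset.range N, ∏ j ∈ (Finset.range N).erase i, (u - x j) with hT1
      set T2 : ℝ := ∑ i ∈ Finset.range N, ∑ j ∈ (Finset.range N).erase i,
        ∏ k ∈ ((Finset.range N).erase i).erase j, (u - x k) with hT2
      have hev : ∀ w : ℝ, (Polynomial.Chebyshev.T ℝ (N:ℤ)).eval w
          = c * ∏ i ∈ Finset.range N, (w - x i) := by
        intro w
        rw [cheb_riccati_fact N hN]
        simp [Polynomial.eval_prod, hx, hc]
      have hder1 : ∀ w : ℝ, (Polynomial.derivative (Polynomial.Chebyshev.T ℝ (N:ℤ))).eval w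
          = c * ∑ i ∈ Finset.range N, ∏ j ∈ (Finset.range N).erase i, (w - x j) := by
        intro w
        have h1 := Polynomial.hasDerivAt (Polynomial.Chebyshev.T ℝ (N:ℤ)) w
        have h2 : HasDerivAt (fun y => c * ∏ i ∈ Finset.range N, (y - x i))
            (c * ∑ i ∈ Finset.range N,
              (∏ j ∈ (Finset.range N).erase i, (w - x j)) * 1) w :=
          (HasDerivAt.fun_finsetProd fun i _ => (hasDerivAt_id w).sub_const (x i)).const_mul c
        rw [funext hev] at h1
        simpa [mul_one] using h1.unique h2
      have hder2 : (Polynomial.derivative (Polynomial.derivative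
          (Polynomial.Chebyshev.T ℝ (N:ℤ)))).eval u = c * T2 := by
        have h1 := Polynomial.hasDerivAt (Polynomial.derivative (Polynomial.Chebyshev.T ℝ (N:ℤ))) u
        have h2 : HasDerivAt (fun y => c * ∑ i ∈ Finset.range N,
              ∏ j ∈ (Finset.range N).erase i, (y - x j))
            (c * ∑ i ∈ Finset.range N, ∑ j ∈ (Finset.range N).erase i,
              (∏ k ∈ ((Finset.range N).erase i).erase j, (u - x k)) * 1) u :=
          ((HasDerivAt.fun_sum fun i _ => HasDerivAt.fun_finsetProd
            fun j _ => (hasDerivAt_id u).sub_const (x j)).const_mul c)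
        rw [funext hder1] at h1
        simpa [mul_one, hT2] using h1.unique h2
      have hODEu := congr_arg (Polynomial.eval u) (cheb_riccati_ode (N:ℤ))
      simp only [Polynomial.eval_mul, Polynomial.eval_sub, Polynomial.eval_pow,
        Polynomial.eval_one, Polynomial.eval_X, Polynomial.eval_intCast] at hODEu
      rw [hder2, hder1 u, hev u] at hODEu
      push_cast at hODEu
      have hODE : (1 - u^2) * T2 = u * T1 - (N:ℝ)^2 * A := by
        apply mul_left_cancel₀ hcne
        linear_combination hODEu
      have h1u : 1 - u^2 ≠ 0 := by
        have h2 : z^2 < 1 := by nlinarith [hz.1, hz.2]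
        have h3 : z^2 > 0 := by positivity
        have h4 : u^2 * z^2 = 1 := by rw [hzeq]; field_simp
        intro h
        have : u^2 = 1 := by linarith
        rw [this, one_mul] at h4
        linarith
      have hT2v : T2 = (u * T1 - (N:ℝ)^2 * A) / (1 - u^2) := by
        rw [eq_div_iff h1u]
        linear_combination hODE
      have hPine : ∀ i ∈ Finset.range N, (∏ j ∈ (Finset.range N).erase i, (u - x j)) ≠ 0 :=
        fun i _ => Finset.prod_ne_zero_iff.mpr fun j _ => hane j
      have hprodsplit : ∀ i ∈ Finset.range N,
          (u - x i) * ∏ j ∈ (Finset.range N).erase i, (u - x j) = A :=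
        fun i hi => (Finset.mul_prod_erase (Finset.range N) (fun k => u - x k) hi).trans hA.symm
      have hinvA : ∀ i ∈ Finset.range N,
          (∏ j ∈ (Finset.range N).erase i, (u - x j)) / A = (u - x i)⁻¹ := by
        intro i hi
        rw [div_eq_iff hAne, ← hprodsplit i hi, ← mul_assoc, inv_mul_cancel₀ (hane i), one_mul]
      have hs1 : ∑ i ∈ Finset.range N, (u - x i)⁻¹ = T1 / A := by
        rw [hT1, Finset.sum_div]
        exact Finset.sum_congr rfl fun i hi => (hinvA i hi).symm
      have hkey : T1^2 = (∑ i ∈ Finset.range N,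
          (∏ j ∈ (Finset.range N).erase i, (u - x j))^2) + T2 * A := by
        rw [pow_two, hT1, Finset.sum_mul_sum]
        have step1 : ∀ i ∈ Finset.range N,
            (∑ j ∈ Finset.range N, (∏ k ∈ (Finset.range N).erase i, (u - x k)) *
              (∏ k ∈ (Finset.range N).erase j, (u - x k)))
            = (∏ k ∈ (Finset.range N).erase i, (u - x k))^2
              + ∑ j ∈ (Finset.range N).erase i,
                  (∏ k ∈ (Finset.range N).erase i, (u - x k)) *
                  (∏ k ∈ (Finset.range N).erase j, (u - x k)) := by
          intro i hi
          rw [← Finset.add_sum_erase _ _ hi, sq]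
        rw [Finset.sum_congr rfl step1, Finset.sum_add_distrib]
        congr 1
        rw [hT2, Finset.sum_mul]
        refine Finset.sum_congr rfl fun i hi => ?_
        rw [Finset.sum_mul]
        refine Finset.sum_congr rfl fun j hj => ?_
        have hjN : j ∈ Finset.range N := Finset.mem_of_mem_erase hj
        have e1 : (u - x j) * ∏ k ∈ ((Finset.range N).erase i).erase j, (u - x k)
            = ∏ k ∈ (Finset.range N).erase i, (u - x k) :=
          Finset.mul_prod_erase ((Finset.range N).erase i) (fun k => u - x k) hj
        have e2 : (u - x j) * ∏ k ∈ (Finset.range N).erase j, (u - x k) = A :=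
          hprodsplit j hjN
        rw [← e2, ← e1]
        ring
      have hs2 : ∑ i ∈ Finset.range N, ((u - x i)⁻¹)^2 = (T1^2 - T2*A)/A^2 := by
        rw [hkey, add_sub_cancel_right, Finset.sum_div]
        refine Finset.sum_congr rfl fun i hi => ?_
        rw [← hinvA i hi, div_pow]
      have hSG : ∑ i ∈ Finset.range N, (1 - x i * z)⁻¹ = u * (T1/A) := by
        rw [← hs1, Finset.mul_sum]
        refine Finset.sum_congr rfl fun i hi => ?_
        rw [hfac i, mul_inv, hzeq, inv_inv]
      have hSD : ∑ i ∈ Finset.range N, x i * ((1 - x i * z)⁻¹)^2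
          = u^3 * ((T1^2 - T2*A)/A^2) - u^2 * (T1/A) := by
        rw [← hs2, ← hs1, Finset.mul_sum, Finset.mul_sum, ← Finset.sum_sub_distrib]
        refine Finset.sum_congr rfl fun i hi => ?_
        rw [hfac i, mul_inv, hzeq, inv_inv]
        have hww : (u - x i) * ((u - x i)⁻¹)^2 = (u - x i)⁻¹ := by
          rw [pow_two, ← mul_assoc, mul_inv_cancel₀ (hane i), one_mul]
        linear_combination (-(u^2)) * hww
      rw [hSG, hSD, hT2v, hzeq]
      have hNne : (N:ℝ) ≠ 0 := ne_of_gt hNR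
      field_simp
      ring
end

section
/- Riccati equation for the Chebyshev U moment generating function (Table 2): for every N ≥ 1, the function G(z) := Σ_{r=0}^∞ m_r^{(U)}(N) z^r is well defined and differentiable on the real interval (−1, 1), and for every z ∈ (−1, 1) it satisfies ((1 − z²) z / N) · G′(z) = ((2 + z²)/N) · G(z) + (1 − z²) · G(z)² − (N + 2)/N. -/
open Finset Real Complex



lemma aux_Dpos (u c : ℝ) (hu : |u| < 1) (hc : |c| ≤ 1) : 0 < 1 - 2*u*c + u^2 := by
  nlinarith [le_abs_self (u*c), neg_abs_le (u*c), abs_mul u c,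
    mul_le_of_le_one_right (abs_nonneg u) hc, sq_nonneg (1 - |u|), _root_.sq_abs u, abs_nonneg u]

lemma aux_pair (u β : ℝ) (hu : |u| < 1) :
    ((1:ℂ) - u * Complex.exp (β * Complex.I))⁻¹ + ((1:ℂ) - u * Complex.exp (-β * Complex.I))⁻¹
      = (((2 - 2*u*Real.cos β) / (1 - 2*u*Real.cos β + u^2) : ℝ) : ℂ) := by
  have hD : (0:ℝ) < 1 - 2*u*Real.cos β + u^2 := aux_Dpos u _ hu (abs_cos_le_one β)
  have h1 : ((1:ℂ) - u * Complex.exp (β * Complex.I)) ≠ 0 := by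
    intro h
    have h' : (u:ℂ) * Complex.exp (β * Complex.I) = 1 := by linear_combination -h
    have : ‖(u:ℂ) * Complex.exp (β * Complex.I)‖ = 1 := by rw [h']; simp
    rw [norm_mul, Complex.norm_exp_ofReal_mul_I] at this
    simp only [Complex.norm_real, Real.norm_eq_abs, mul_one] at this
    linarith
  have h2 : ((1:ℂ) - u * Complex.exp (-β * Complex.I)) ≠ 0 := by
    intro h
    have h' : (u:ℂ) * Complex.exp (-β * Complex.I) = 1 := by linear_combination -h
    have : ‖(u:ℂ) * Complex.exp (-β * Complex.I)‖ = 1 := by rw [h']; simp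
    have e : (-β : ℂ) = ((-β : ℝ) : ℂ) := by push_cast; ring
    rw [norm_mul, e, Complex.norm_exp_ofReal_mul_I] at this
    simp only [Complex.norm_real, Real.norm_eq_abs, mul_one] at this
    linarith
  have hmul : Complex.exp (β * Complex.I) * Complex.exp (-β * Complex.I) = 1 := by
    rw [← Complex.exp_add]; ring_nf; exact Complex.exp_zero
  have hadd : Complex.exp (β * Complex.I) + Complex.exp (-β * Complex.I)
      = 2 * Complex.cos (β:ℂ) := by
    rw [Complex.exp_mul_I, Complex.exp_mul_I, Complex.cos_neg, Complex.sin_neg]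
    ring
  rw [inv_add_inv h1 h2]
  have key : ((1:ℂ) - u * Complex.exp (β * Complex.I)) * (1 - u * Complex.exp (-β * Complex.I))
      = ((1 - 2*u*Real.cos β + u^2 : ℝ) : ℂ) := by
    push_cast
    linear_combination ((u:ℂ)^2) * hmul - (u:ℂ) * hadd
  have hsum : ((1:ℂ) - u * Complex.exp (β * Complex.I)) + (1 - u * Complex.exp (-β * Complex.I))
      = ((2 - 2*u*Real.cos β : ℝ) : ℂ) := by
    push_cast
    linear_combination -(u:ℂ) * hadd
  rw [key, hsum, ← Complex.ofReal_div]


lemma aux_rou (M : ℕ) (hM : M ≠ 0) (u : ℝ) (hu : |u| < 1) :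
    ∑ j ∈ Finset.range M, ((1:ℂ) - (u:ℂ) * Complex.exp (2*(π:ℂ)*Complex.I/M) ^ j)⁻¹
      = (M : ℂ) * ((1:ℂ) - (u:ℂ)^M)⁻¹ := by
  set ω : ℂ := Complex.exp (2*(π:ℂ)*Complex.I/M) with hω
  have hprim : IsPrimitiveRoot ω M := Complex.isPrimitiveRoot_exp M hM
  have hωn : ‖ω‖ = 1 := by
    have : ω = Complex.exp (((2*π/(M:ℝ)) : ℝ) * Complex.I) := by
      rw [hω]; congr 1; push_cast; ring
    rw [this, Complex.norm_exp_ofReal_mul_I]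
  have hun : ∀ j : ℕ, ‖(u:ℂ) * ω ^ j‖ < 1 := by
    intro j
    rw [norm_mul, norm_pow, hωn, one_pow, mul_one, Complex.norm_real, Real.norm_eq_abs]
    exact hu
  have hgeo : ∀ j : ℕ, ((1:ℂ) - (u:ℂ) * ω ^ j)⁻¹ = ∑' r : ℕ, ((u:ℂ) * ω ^ j) ^ r :=
    fun j => (tsum_geometric_of_norm_lt_one (hun j)).symm
  have hsummable : ∀ j ∈ Finset.range M, Summable (fun r : ℕ => ((u:ℂ) * ω ^ j) ^ r) :=
    fun j _ => summable_geometric_of_norm_lt_one (hun j)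
  calc ∑ j ∈ Finset.range M, ((1:ℂ) - (u:ℂ) * ω ^ j)⁻¹
      = ∑ j ∈ Finset.range M, ∑' r : ℕ, ((u:ℂ) * ω ^ j) ^ r := by
        exact Finset.sum_congr rfl fun j _ => hgeo j
    _ = ∑' r : ℕ, ∑ j ∈ Finset.range M, ((u:ℂ) * ω ^ j) ^ r := (Summable.tsum_finsetSum hsummable).symm
    _ = ∑' r : ℕ, ((u:ℂ)^r * (if M ∣ r then (M:ℂ) else 0)) := by
        refine tsum_congr fun r => ?_
        have : ∀ j, ((u:ℂ) * ω ^ j) ^ r = (u:ℂ)^r * (ω^r)^j := by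
          intro j; rw [mul_pow, ← pow_mul, ← pow_mul, Nat.mul_comm]
        simp_rw [this, ← Finset.mul_sum]
        congr 1
        by_cases hdvd : M ∣ r
        · rw [if_pos hdvd]
          have h1 : ω ^ r = 1 := (hprim.pow_eq_one_iff_dvd r).2 hdvd
          simp [h1]
        · rw [if_neg hdvd]
          have h1 : ω ^ r ≠ 1 := fun h => hdvd ((hprim.pow_eq_one_iff_dvd r).1 h)
          rw [geom_sum_eq h1]
          have : (ω ^ r) ^ M = 1 := by
            rw [← pow_mul, Nat.mul_comm, pow_mul, hprim.pow_eq_one, one_pow]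
          rw [this, sub_self, zero_div]
    _ = ∑' s : ℕ, ((u:ℂ)^(M*s) * (if M ∣ M*s then (M:ℂ) else 0)) := by
        refine (Function.Injective.tsum_eq (g := fun s => M * s) ?_ ?_).symm
        · intro a b hab
          exact Nat.eq_of_mul_eq_mul_left (Nat.pos_of_ne_zero hM) hab
        · intro r hr
          rcases Classical.em (M ∣ r) with h | h
          · obtain ⟨s, rfl⟩ := h; exact ⟨s, rfl⟩
          · simp [h] at hr
    _ = (M : ℂ) * ((1:ℂ) - (u:ℂ)^M)⁻¹ := by
        have h1 : ∀ s : ℕ, (u:ℂ)^(M*s) * (if M ∣ M*s then (M:ℂ) else 0)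
            = (M:ℂ) * ((u:ℂ)^M)^s := by
          intro s
          rw [if_pos (Dvd.intro s rfl), pow_mul]
          ring
        simp_rw [h1]
        rw [tsum_mul_left, tsum_geometric_of_norm_lt_one]
        rw [norm_pow, Complex.norm_real, Real.norm_eq_abs]
        exact pow_lt_one₀ (abs_nonneg u) hu hM


lemma aux_P1 (N : ℕ) (u : ℝ) (hu : |u| < 1) :
    (1 - u^2) * ∑ k ∈ Finset.range N, (1 - 2*u*Real.cos (((k:ℝ)+1)*π/(N+1)) + u^2)⁻¹
      = (2*N+2 : ℝ) * (1 - u^(2*N+2))⁻¹ - (1-u)⁻¹ - (1+u)⁻¹ - N := by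
  obtain ⟨hul, hur⟩ := abs_lt.1 hu
  set M := 2*N+2 with hMdef
  have hM : M ≠ 0 := by omega
  set ω : ℂ := Complex.exp (2*(π:ℂ)*Complex.I/M) with hωdef
  have hrou := aux_rou M hM u hu
  -- evaluate special powers of ω
  have hNC : ((N:ℂ)+1) ≠ 0 := Nat.cast_add_one_ne_zero N
  have hω0 : ω ^ (0:ℕ) = 1 := pow_zero ω
  have hωexp : ∀ j : ℕ, ω ^ j = Complex.exp ((j:ℂ) * (2*(π:ℂ)*Complex.I/M)) := by
    intro j; rw [hωdef, ← Complex.exp_nat_mul]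
  have hMc : (M:ℂ) = 2*((N:ℂ)+1) := by rw [hMdef]; push_cast; ring
  have hMne : (M:ℂ) ≠ 0 := by rw [hMc]; exact mul_ne_zero two_ne_zero hNC
  have hωM : ω ^ M = 1 := by
    rw [hωexp]
    have h : ((M:ℕ):ℂ) * (2*(π:ℂ)*Complex.I/(M:ℕ)) = 2*(π:ℂ)*Complex.I := by
      field_simp
    rw [h, Complex.exp_two_pi_mul_I]
  have hωN1 : ω ^ (N+1) = -1 := by
    rw [hωexp]
    have : ((N+1 : ℕ):ℂ) * (2*(π:ℂ)*Complex.I/M) = (π:ℂ) * Complex.I := by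
      rw [hMc]; push_cast
      field_simp
    rw [this, Complex.exp_pi_mul_I]
  have hpair : ∀ k : ℕ, k < N →
      ((1:ℂ) - u*ω^(k+1))⁻¹ + ((1:ℂ) - u*ω^(2*N+1-k))⁻¹
        = (((2 - 2*u*Real.cos (((k:ℝ)+1)*π/(N+1))) /
            (1 - 2*u*Real.cos (((k:ℝ)+1)*π/(N+1)) + u^2) : ℝ) : ℂ) := by
    intro k hk
    have hβ : ω^(k+1) = Complex.exp ((((k:ℝ)+1)*π/(N+1) : ℝ) * Complex.I) := by
      rw [hωexp]
      congr 1
      rw [hMc]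
      push_cast
      field_simp
    have hinv : ω^(2*N+1-k) = Complex.exp (-(((k:ℝ)+1)*π/(N+1) : ℝ) * Complex.I) := by
      have h1 : ω^(2*N+1-k) * ω^(k+1) = 1 := by
        rw [← pow_add]
        have : 2*N+1-k + (k+1) = M := by omega
        rw [this, hωM]
      have h2 : ω^(k+1) ≠ 0 := by
        rw [hβ]; exact Complex.exp_ne_zero _
      have h3 : ω^(2*N+1-k) = (ω^(k+1))⁻¹ := by
        field_simp at h1 ⊢
        linear_combination h1
      rw [h3, hβ, ← Complex.exp_neg]
      congr 1
      push_cast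
      ring
    rw [hβ, hinv]
    exact aux_pair u _ hu
  -- split the range M sum
  set g : ℕ → ℂ := fun j => ((1:ℂ) - u*ω^j)⁻¹ with hg
  have hsplit : ∑ j ∈ Finset.range M, g j
      = g 0 + g (N+1) + ∑ k ∈ Finset.range N, (g (k+1) + g (2*N+1-k)) := by
    have h1 : M = (N+1) + (N+1) := by omega
    rw [h1, Finset.sum_range_add, Finset.sum_range_succ', Finset.sum_range_succ']
    have h2 : ∑ k ∈ Finset.range N, g (2*N+1-k)
        = ∑ i ∈ Finset.range N, g (N+1+(i+1)) := by
      rw [← Finset.sum_range_reflect]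
      apply Finset.sum_congr rfl
      intro k hk
      congr 1
      have := Finset.mem_range.1 hk
      omega
    rw [Finset.sum_add_distrib, h2]
    abel
  have hrou' : ∑ j ∈ Finset.range M, g j = (M:ℂ) * ((1:ℂ) - (u:ℂ)^M)⁻¹ := hrou
  have hg0 : g 0 = (((1-u : ℝ)) : ℂ)⁻¹ := by
    simp only [hg, hω0]
    push_cast
    ring_nf
  have hgN1 : g (N+1) = (((1+u : ℝ)) : ℂ)⁻¹ := by
    simp only [hg, hωN1]
    push_cast
    ring_nf
  have hsum2 : ∑ k ∈ Finset.range N, (g (k+1) + g (2*N+1-k))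
      = ((∑ k ∈ Finset.range N, (2 - 2*u*Real.cos (((k:ℝ)+1)*π/(N+1))) /
          (1 - 2*u*Real.cos (((k:ℝ)+1)*π/(N+1)) + u^2) : ℝ) : ℂ) := by
    rw [Complex.ofReal_sum]
    exact Finset.sum_congr rfl fun k hk => hpair k (Finset.mem_range.1 hk)
  have hreal : (M:ℝ) * (1 - u^M)⁻¹ - (1-u)⁻¹ - (1+u)⁻¹
      = ∑ k ∈ Finset.range N, (2 - 2*u*Real.cos (((k:ℝ)+1)*π/(N+1))) /
          (1 - 2*u*Real.cos (((k:ℝ)+1)*π/(N+1)) + u^2) := by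
    have hC : (((M:ℝ) * (1 - u^M)⁻¹ - (1-u)⁻¹ - (1+u)⁻¹ : ℝ) : ℂ)
        = ((∑ k ∈ Finset.range N, (2 - 2*u*Real.cos (((k:ℝ)+1)*π/(N+1))) /
            (1 - 2*u*Real.cos (((k:ℝ)+1)*π/(N+1)) + u^2) : ℝ) : ℂ) := by
      rw [← hsum2]
      have := hsplit
      rw [hrou', hg0, hgN1] at this
      push_cast
      push_cast at this
      linear_combination this
    exact_mod_cast hC
  have hperk : ∀ k ∈ Finset.range N,
      (2 - 2*u*Real.cos (((k:ℝ)+1)*π/(N+1))) /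
        (1 - 2*u*Real.cos (((k:ℝ)+1)*π/(N+1)) + u^2)
      = 1 + (1-u^2) * (1 - 2*u*Real.cos (((k:ℝ)+1)*π/(N+1)) + u^2)⁻¹ := by
    intro k _
    have hD : (0:ℝ) < 1 - 2*u*Real.cos (((k:ℝ)+1)*π/(N+1)) + u^2 :=
      aux_Dpos u _ hu (abs_cos_le_one _)
    field_simp
    ring
  rw [Finset.sum_congr rfl hperk, Finset.sum_add_distrib, ← Finset.mul_sum] at hreal
  simp only [Finset.sum_const, Finset.card_range, nsmul_eq_mul, mul_one] at hreal
  have hMcast : (M:ℝ) = 2*(N:ℝ)+2 := by rw [hMdef]; push_cast; ring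
  rw [hMcast] at hreal
  linarith [hreal]


lemma aux_SF (N : ℕ) (u : ℝ) (hu : |u| < 1) :
    ∑ k ∈ Finset.range N, (1 - Real.cos (((k:ℝ)+1)*π/(N+1)) * (2*u/(1+u^2)))⁻¹
      = (1+u^2) * (1-u^2)⁻¹ *
        ((2*(N:ℝ)+2) * (1-u^(2*N+2))⁻¹ - (1-u)⁻¹ - (1+u)⁻¹ - N) := by
  obtain ⟨hul, hur⟩ := abs_lt.1 hu
  have h1pu2 : (0:ℝ) < 1 + u^2 := by positivity
  have h1mu2 : (0:ℝ) < 1 - u^2 := by nlinarith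
  have hperk : ∀ k ∈ Finset.range N,
      (1 - Real.cos (((k:ℝ)+1)*π/(N+1)) * (2*u/(1+u^2)))⁻¹
        = (1+u^2) * (1 - 2*u*Real.cos (((k:ℝ)+1)*π/(N+1)) + u^2)⁻¹ := by
    intro k _
    have hD : (0:ℝ) < 1 - 2*u*Real.cos (((k:ℝ)+1)*π/(N+1)) + u^2 :=
      aux_Dpos u _ hu (abs_cos_le_one _)
    have hden2 : (1 - Real.cos (((k:ℝ)+1)*π/(N+1)) * (2*u/(1+u^2)))
        = (1 - 2*u*Real.cos (((k:ℝ)+1)*π/(N+1)) + u^2)/(1+u^2) := by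
      field_simp
      ring
    rw [hden2, inv_div, div_eq_mul_inv]
  rw [Finset.sum_congr rfl hperk, ← Finset.mul_sum]
  have hP1 := aux_P1 N u hu
  have hsum : ∑ k ∈ Finset.range N, (1 - 2*u*Real.cos (((k:ℝ)+1)*π/(N+1)) + u^2)⁻¹
      = (1-u^2)⁻¹ * ((2*(N:ℝ)+2) * (1-u^(2*N+2))⁻¹ - (1-u)⁻¹ - (1+u)⁻¹ - N) := by
    rw [← hP1, inv_mul_cancel_left₀ (ne_of_gt h1mu2)]
  rw [hsum]
  ring

set_option maxHeartbeats 1600000 in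
lemma aux_riccati_alg (Nr u rr zz Sv dSv : ℝ)
    (h1 : 1-u ≠ 0) (h2 : 1+u ≠ 0) (h3 : (1:ℝ)-u^2 ≠ 0) (h4 : (1:ℝ)+u^2 ≠ 0)
    (h5 : (1:ℝ) - rr*u ≠ 0)
    (hz : zz = 2*u/(1+u^2))
    (hS : Sv = (1+u^2) * (1-u^2)⁻¹ *
      ((2*Nr+2) * (1-rr*u)⁻¹ - (1-u)⁻¹ - (1+u)⁻¹ - Nr))
    (hd : dSv * (2*(1-u^2)/(1+u^2)^2)
      = (2*u*(1-u^2)⁻¹ + (1+u^2)*(2*u*((1-u^2)^2)⁻¹)) *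
          ((2*Nr+2) * (1-rr*u)⁻¹ - (1-u)⁻¹ - (1+u)⁻¹ - Nr)
        + ((1+u^2)*(1-u^2)⁻¹) *
          ((2*Nr+2)^2 * rr * ((1-rr*u)^2)⁻¹ - ((1-u)^2)⁻¹ + ((1+u)^2)⁻¹)) :
    (1-zz^2)*zz*dSv = (2+zz^2)*Sv + (1-zz^2)*Sv^2 - Nr*(Nr+2) := by
  have h6 : (2*(1-u^2)/(1+u^2)^2) ≠ 0 :=
    div_ne_zero (mul_ne_zero two_ne_zero h3) (pow_ne_zero 2 h4)
  have hdv : dSv = ((2*u*(1-u^2)⁻¹ + (1+u^2)*(2*u*((1-u^2)^2)⁻¹)) *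
          ((2*Nr+2) * (1-rr*u)⁻¹ - (1-u)⁻¹ - (1+u)⁻¹ - Nr)
        + ((1+u^2)*(1-u^2)⁻¹) *
          ((2*Nr+2)^2 * rr * ((1-rr*u)^2)⁻¹ - ((1-u)^2)⁻¹ + ((1+u)^2)⁻¹))
        / (2*(1-u^2)/(1+u^2)^2) := by
    rw [← hd, mul_div_assoc, div_self h6, mul_one]
  subst hz hS hdv
  have h5' : 1 - u*rr ≠ 0 := by rwa [mul_comm]
  field_simp
  ring

set_option maxHeartbeats 1600000 in
/-- **Riccati equation for the Chebyshev `U` moment generating function.**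
For every `N ≥ 1`, the function `G(z) = Σ_{r=0}^∞ m_r^{(U)}(N) z^r`, with
`m_r^{(U)}(N) = (1/N) Σ_{k=1}^N (cos(kπ/(N+1)))^r`, is well defined (the series
converges) and differentiable on `(−1, 1)`, and there it satisfies
`((1 − z²) z / N) G′(z) = ((2 + z²)/N) G(z) + (1 − z²) G(z)² − (N+2)/N`. -/
theorem chebyshevU_moment_gf_riccati (N : ℕ) (hN : 1 ≤ N)
    (m : ℕ → ℝ)
    (hm : ∀ r, m r = (1 / (N : ℝ)) *
        ∑ k ∈ Finset.range N, (Real.cos (((k : ℝ) + 1) * Real.pi / (N + 1))) ^ r)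
    (G : ℝ → ℝ) (hG : ∀ w, G w = ∑' r : ℕ, m r * w ^ r) :
    ∀ z ∈ Set.Ioo (-1 : ℝ) 1,
      Summable (fun r : ℕ => m r * z ^ r) ∧
        ∃ g' : ℝ, HasDerivAt G g' z ∧
          ((1 - z ^ 2) * z / N) * g' =
            ((2 + z ^ 2) / N) * G z + (1 - z ^ 2) * (G z) ^ 2 - (N + 2) / N := by
  intro z hz
  set x : ℕ → ℝ := fun k => Real.cos (((k : ℝ) + 1) * π / (N + 1)) with hx
  have hNr : (N:ℝ) ≠ 0 := by positivity
  have hzabs : |z| < 1 := abs_lt.2 ⟨hz.1, hz.2⟩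
  have hxk : ∀ k, |x k| ≤ 1 := fun k => abs_cos_le_one _
  have hxw : ∀ (k : ℕ) (w : ℝ), |w| < 1 → ‖x k * w‖ < 1 := by
    intro k w hw
    rw [Real.norm_eq_abs, abs_mul]
    calc |x k| * |w| ≤ 1 * |w| := by
          exact mul_le_mul_of_nonneg_right (hxk k) (abs_nonneg w)
      _ < 1 := by rwa [one_mul]
  have hden : ∀ (k : ℕ) (w : ℝ), |w| < 1 → 1 - x k * w ≠ 0 := by
    intro k w hw h
    have := hxw k w hw
    rw [Real.norm_eq_abs] at this
    have : x k * w < 1 := lt_of_le_of_lt (le_abs_self _) this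
    linarith
  have hmabs : ∀ r, |m r| ≤ 1 := by
    intro r
    have h1 : |∑ k ∈ Finset.range N, (x k) ^ r| ≤ (N:ℝ) := by
      calc |∑ k ∈ Finset.range N, (x k) ^ r| ≤ ∑ k ∈ Finset.range N, |(x k) ^ r| :=
            Finset.abs_sum_le_sum_abs _ _
        _ ≤ ∑ k ∈ Finset.range N, 1 := by
            refine Finset.sum_le_sum fun k _ => ?_
            rw [_root_.abs_pow]
            exact pow_le_one₀ (abs_nonneg _) (hxk k)
        _ = (N:ℝ) := by simp
    rw [hm r, abs_mul, abs_of_pos (show (0:ℝ) < 1/(N:ℝ) by positivity),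
      div_mul_eq_mul_div, one_mul, div_le_one (by positivity)]
    exact h1
  -- summability
  have hsummable : Summable (fun r : ℕ => m r * z ^ r) := by
    refine Summable.of_norm_bounded
      (summable_geometric_of_lt_one (abs_nonneg z) hzabs) ?_
    intro r
    rw [Real.norm_eq_abs, abs_mul, _root_.abs_pow]
    show |m r| * |z| ^ r ≤ |z| ^ r
    calc |m r| * |z| ^ r ≤ 1 * |z| ^ r :=
          mul_le_mul_of_nonneg_right (hmabs r) (by positivity)
      _ = |z| ^ r := one_mul _
  refine ⟨hsummable, ?_⟩
  -- the function S
  set S : ℝ → ℝ := fun w => ∑ k ∈ Finset.range N, (1 - x k * w)⁻¹ with hSdef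
  have hGS : ∀ w, |w| < 1 → G w = (N:ℝ)⁻¹ * S w := by
    intro w hw
    rw [hG w]
    have h1 : ∀ r : ℕ, m r * w ^ r = (N:ℝ)⁻¹ * ∑ k ∈ Finset.range N, (x k * w) ^ r := by
      intro r
      rw [hm r, one_div, mul_assoc, Finset.sum_mul]
      congr 1
      exact Finset.sum_congr rfl fun k _ => (mul_pow _ _ _).symm
    calc ∑' r : ℕ, m r * w ^ r
        = ∑' r : ℕ, (N:ℝ)⁻¹ * ∑ k ∈ Finset.range N, (x k * w) ^ r := tsum_congr h1
      _ = (N:ℝ)⁻¹ * ∑' r : ℕ, ∑ k ∈ Finset.range N, (x k * w) ^ r := tsum_mul_left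
      _ = (N:ℝ)⁻¹ * ∑ k ∈ Finset.range N, ∑' r : ℕ, (x k * w) ^ r := by
          rw [Summable.tsum_finsetSum fun k _ => summable_geometric_of_norm_lt_one (hxw k w hw)]
      _ = (N:ℝ)⁻¹ * S w := by
          rw [hSdef]
          congr 1
          exact Finset.sum_congr rfl fun k _ => tsum_geometric_of_norm_lt_one (hxw k w hw)
  -- derivative of S at z
  set dS : ℝ := ∑ k ∈ Finset.range N, x k * ((1 - x k * z)^2)⁻¹ with hdSdef
  have hS : HasDerivAt S dS z := by
    rw [hSdef, hdSdef]
    refine HasDerivAt.fun_sum fun k _ => ?_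
    have h1 : HasDerivAt (fun w : ℝ => 1 - x k * w) (-(x k)) z := by
      simpa using ((hasDerivAt_id z).const_mul (x k)).const_sub 1
    have h2 := h1.inv (hden k z hzabs)
    refine h2.congr_deriv ?_
    field_simp
  -- derivative of G at z
  have hGderiv : HasDerivAt G ((N:ℝ)⁻¹ * dS) z := by
    refine (hS.const_mul ((N:ℝ)⁻¹)).congr_of_eventuallyEq ?_
    have hmem : Set.Ioo (-1:ℝ) 1 ∈ nhds z := (isOpen_Ioo).mem_nhds hz
    filter_upwards [hmem] with w hw
    exact hGS w (abs_lt.2 ⟨hw.1, hw.2⟩)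
  refine ⟨(N:ℝ)⁻¹ * dS, hGderiv, ?_⟩
  -- construct u
  set s : ℝ := Real.sqrt (1 - z^2) with hsdef
  have hz2 : (0:ℝ) < 1 - z^2 := by nlinarith [abs_lt.1 hzabs, _root_.sq_abs z, sq_nonneg z]
  have hs2 : s^2 = 1 - z^2 := Real.sq_sqrt (le_of_lt hz2)
  have hspos : 0 < s := Real.sqrt_pos.2 hz2
  set u : ℝ := z / (1 + s) with hudef
  have h1s : (0:ℝ) < 1 + s := by linarith
  have hu : |u| < 1 := by
    rw [hudef, abs_div, abs_of_pos h1s, div_lt_one h1s]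
    calc |z| < 1 := hzabs
      _ ≤ 1 + s := by linarith
  obtain ⟨hul, hur⟩ := abs_lt.1 hu
  have h1pu2 : (0:ℝ) < 1 + u^2 := by positivity
  have h1mu2 : (0:ℝ) < 1 - u^2 := by nlinarith
  have h1mu : (1:ℝ) - u ≠ 0 := by nlinarith
  have h1pu : (1:ℝ) + u ≠ 0 := by nlinarith
  have hq1 : |u^(2*N+2)| < 1 := by
    rw [_root_.abs_pow]
    exact pow_lt_one₀ (abs_nonneg u) hu (by omega)
  have hqne : (1:ℝ) - u^(2*N+2) ≠ 0 := by
    have h2 := (abs_lt.1 hq1).2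
    intro h
    have h3 : u ^ (2*N+2) = 1 := by linarith
    rw [h3] at h2
    exact absurd h2 (lt_irrefl 1)
  have hphi : 2*u/(1+u^2) = z := by
    have key : z * (1 + u^2) = 2*u := by
      rw [hudef]
      field_simp
      linear_combination z*hs2
    rw [eq_comm, ← key]
    field_simp
  -- closed form F and its derivative
  set F : ℝ → ℝ := fun t => (1+t^2) * (1-t^2)⁻¹ *
      ((2*(N:ℝ)+2) * (1-t^(2*N+2))⁻¹ - (1-t)⁻¹ - (1+t)⁻¹ - N) with hFdef
  have hSφ : ∀ t, |t| < 1 → S (2*t/(1+t^2)) = F t := by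
    intro t ht
    rw [hSdef, hFdef]
    exact aux_SF N t ht
  set dF : ℝ := (2*u*(1-u^2)⁻¹ + (1+u^2)*(2*u*((1-u^2)^2)⁻¹)) *
      ((2*(N:ℝ)+2) * (1-u^(2*N+2))⁻¹ - (1-u)⁻¹ - (1+u)⁻¹ - N)
    + ((1+u^2)*(1-u^2)⁻¹) *
      ((2*(N:ℝ)+2)^2 * u^(2*N+1) * ((1-u^(2*N+2))^2)⁻¹ - ((1-u)^2)⁻¹ + ((1+u)^2)⁻¹)
    with hdFdef
  have hF : HasDerivAt F dF u := by
    have hA : HasDerivAt (fun t : ℝ => (1+t^2) * (1-t^2)⁻¹)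
        (2*u*(1-u^2)⁻¹ + (1+u^2)*(2*u*((1-u^2)^2)⁻¹)) u := by
      have h1 : HasDerivAt (fun t : ℝ => 1+t^2) (2*u) u := by
        simpa using (hasDerivAt_pow 2 u).const_add 1
      have h2 : HasDerivAt (fun t : ℝ => 1-t^2) (-(2*u)) u := by
        simpa using (hasDerivAt_pow 2 u).const_sub 1
      have h2i : HasDerivAt (fun t : ℝ => (1-t^2)⁻¹) (2*u*((1-u^2)^2)⁻¹) u := by
        have := h2.fun_inv (ne_of_gt h1mu2)
        refine this.congr_deriv ?_
        field_simp
      exact h1.mul h2i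
    have hB : HasDerivAt (fun t : ℝ =>
        (2*(N:ℝ)+2) * (1-t^(2*N+2))⁻¹ - (1-t)⁻¹ - (1+t)⁻¹ - (N:ℝ))
        ((2*(N:ℝ)+2)^2 * u^(2*N+1) * ((1-u^(2*N+2))^2)⁻¹ - ((1-u)^2)⁻¹ + ((1+u)^2)⁻¹) u := by
      have hp : HasDerivAt (fun t : ℝ => 1 - t^(2*N+2))
          (-((2*(N:ℝ)+2) * u^(2*N+1))) u := by
        have h0 : HasDerivAt (fun t : ℝ => 1 - t^(2*N+2)) (-(((2*N+2 : ℕ) : ℝ) * u^(2*N+2-1))) u :=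
          (hasDerivAt_pow (2*N+2) u).const_sub 1
        convert h0 using 1
        have he : 2*N+2-1 = 2*N+1 := by omega
        rw [he]
        push_cast
        ring
      have hpi : HasDerivAt (fun t : ℝ => (1-t^(2*N+2))⁻¹)
          ((2*(N:ℝ)+2) * u^(2*N+1) * ((1-u^(2*N+2))^2)⁻¹) u := by
        have := hp.fun_inv hqne
        refine this.congr_deriv ?_
        field_simp
      have hq1i : HasDerivAt (fun t : ℝ => (1-t)⁻¹) (((1-u)^2)⁻¹) u := by
        have h1 : HasDerivAt (fun t : ℝ => 1-t) (-1 : ℝ) u := by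
          simpa using (hasDerivAt_id u).const_sub 1
        have := h1.fun_inv h1mu
        refine this.congr_deriv ?_
        field_simp
      have hq2i : HasDerivAt (fun t : ℝ => (1+t)⁻¹) (-(((1+u)^2)⁻¹)) u := by
        have h1 : HasDerivAt (fun t : ℝ => 1+t) (1 : ℝ) u := by
          simpa using (hasDerivAt_id u).const_add 1
        have := h1.fun_inv h1pu
        refine this.congr_deriv ?_
        field_simp
      have := (((hpi.const_mul ((2*(N:ℝ)+2))).fun_sub hq1i).fun_sub hq2i).sub_const (N:ℝ)
      refine this.congr_deriv ?_
      ring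
    have := hA.fun_mul hB
    convert this using 1
  have hφ : HasDerivAt (fun t : ℝ => 2*t/(1+t^2)) (2*(1-u^2)/(1+u^2)^2) u := by
    have h1 : HasDerivAt (fun t : ℝ => 2*t) (2:ℝ) u := by
      simpa using (hasDerivAt_id u).const_mul 2
    have h2 : HasDerivAt (fun t : ℝ => 1+t^2) (2*u) u := by
      simpa using (hasDerivAt_pow 2 u).const_add 1
    have := h1.fun_div h2 (ne_of_gt h1pu2)
    refine this.congr_deriv ?_
    field_simp
    ring
  have hSz : HasDerivAt S dS (2*u/(1+u^2)) := by rw [hphi]; exact hS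
  have hcomp : HasDerivAt (S ∘ fun t : ℝ => 2*t/(1+t^2)) (dS * (2*(1-u^2)/(1+u^2)^2)) u :=
    HasDerivAt.comp u hSz hφ
  have hcomp' : HasDerivAt F (dS * (2*(1-u^2)/(1+u^2)^2)) u := by
    refine hcomp.congr_of_eventuallyEq ?_
    have hmem : Set.Ioo (-1:ℝ) 1 ∈ nhds u := (isOpen_Ioo).mem_nhds ⟨hul, hur⟩
    filter_upwards [hmem] with t ht
    exact ((hSφ t (abs_lt.2 ⟨ht.1, ht.2⟩))).symm
  have huniq : dS * (2*(1-u^2)/(1+u^2)^2) = dF := hcomp'.unique hF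
  -- closed form for S z
  have hSzval : S z = F u := by
    rw [← hphi]
    exact hSφ u hu
  -- core identity
  have hcore : (1 - z^2) * z * dS = (2 + z^2) * S z + (1 - z^2) * (S z)^2 - (N:ℝ)*((N:ℝ)+2) := by
    have hpow : u^(2*N+2) = u^(2*N+1) * u := by rw [← pow_succ]
    have hqne2 : (1:ℝ) - u^(2*N+1) * u ≠ 0 := by rw [← hpow]; exact hqne
    have huniq2 := huniq
    rw [hdFdef, hpow] at huniq2
    have hSzval2 : S z = (1+u^2) * (1-u^2)⁻¹ *
        ((2*(N:ℝ)+2) * (1-u^(2*N+1)*u)⁻¹ - (1-u)⁻¹ - (1+u)⁻¹ - N) := by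
      rw [hSzval, hFdef, ← hpow]
    exact aux_riccati_alg (N:ℝ) u (u^(2*N+1)) z (S z) dS h1mu h1pu (ne_of_gt h1mu2)
      (ne_of_gt h1pu2) hqne2 hphi.symm hSzval2 huniq2
  -- conclude
  rw [hGS z hzabs]
  field_simp
  linear_combination hcore
end

section
/- Case's equation for the moments of Chebyshev T zeros (Table 4): for every N ≥ 1 and every r ≥ 1, (2N − (r+1)) · m_{r+1}^{(T)}(N) = −r · m_{r−1}^{(T)}(N) + N · Σ_{s=0}^{r−1} ( m_{r−1−s}^{(T)}(N) · m_s^{(T)}(N) − m_{r−s}^{(T)}(N) · m_{s+1}^{(T)}(N) ). -/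
open Finset Real

noncomputable def cc (N : ℕ) (k : ℤ) : ℝ :=
  Real.cos (k * Real.pi / (2 * N)) / Real.sin (k * Real.pi / (2 * N))

lemma cc_zero (N : ℕ) : cc N 0 = 0 := by simp [cc]

lemma cc_neg (N : ℕ) (k : ℤ) : cc N (-k) = - cc N k := by
  have h : ((-k : ℤ) : ℝ) * Real.pi / (2 * N) = -((k : ℝ) * Real.pi / (2 * N)) := by
    push_cast; ring
  rw [cc, cc, h, Real.cos_neg, Real.sin_neg, div_neg]

lemma cc_symm (N : ℕ) (hN : 1 ≤ N) (t : ℤ) : cc N ((N : ℤ) + t) = - cc N ((N : ℤ) - t) := by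
  have hNne : (N : ℝ) ≠ 0 := by positivity
  have h1 : (((N : ℤ) + t : ℤ) : ℝ) * Real.pi / (2 * N)
      = Real.pi / 2 + (t : ℝ) * Real.pi / (2 * N) := by
    push_cast; field_simp
  have h2 : (((N : ℤ) - t : ℤ) : ℝ) * Real.pi / (2 * N)
      = Real.pi / 2 - (t : ℝ) * Real.pi / (2 * N) := by
    push_cast; field_simp
  rw [cc, cc, h1, h2]
  simp [Real.cos_add, Real.sin_add, Real.cos_pi_div_two_sub, Real.sin_pi_div_two_sub,
    neg_div]

lemma cc_N (N : ℕ) (hN : 1 ≤ N) : cc N (N : ℤ) = 0 := by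
  have h := cc_symm N hN 0
  simp at h
  linarith

lemma shift_sum (g : ℤ → ℝ) (N : ℕ) :
    ∑ j ∈ range N, g ((j : ℤ) + 1) + g 0 = ∑ j ∈ range N, g (j : ℤ) + g (N : ℤ) := by
  induction N with
  | zero => simp
  | succ n ih =>
      rw [sum_range_succ, sum_range_succ]
      push_cast
      linarith

lemma sums_eq (N : ℕ) (hN : 1 ≤ N) (i : ℕ) :
    ∑ j ∈ range N, cc N ((j : ℤ) - i) = ∑ j ∈ range N, cc N ((j : ℤ) + i + 1) := by
  induction i with
  | zero =>
      have h := shift_sum (fun k => cc N k) N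
      simp only [cc_zero, cc_N N hN, add_zero] at h
      simp only [Nat.cast_zero, sub_zero, zero_add, add_zero]
      linarith [h]
  | succ i ih =>
      have h1 := shift_sum (fun k => cc N (k - (i : ℤ) - 1)) N
      have h2 := shift_sum (fun k => cc N (k + (i : ℤ) + 1)) N
      -- h1: ∑ cc (j + 1 - i - 1) + cc (-i-1) = ∑ cc (j - i - 1) + cc (N - i - 1)
      -- h2: ∑ cc (j + 1 + i + 1) + cc (i+1) = ∑ cc (j + i + 1) + cc (N + i + 1)
      have e1 : ∀ j : ℕ, ((j : ℤ) + 1 - i - 1) = (j : ℤ) - i := by intro j; ring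
      have e2 : ∀ j : ℕ, ((j : ℤ) - (i : ℤ) - 1) = (j : ℤ) - (i + 1 : ℕ) := by
        intro j; push_cast; ring
      have e3 : ∀ j : ℕ, ((j : ℤ) + 1 + i + 1) = (j : ℤ) + (i + 1 : ℕ) + 1 := by
        intro j; push_cast; ring
      simp only [e1] at h1
      have hneg : cc N (0 - (i : ℤ) - 1) = - cc N ((i : ℤ) + 1) := by
        rw [show (0 - (i : ℤ) - 1) = -((i : ℤ) + 1) by ring, cc_neg]
      have hsym : cc N ((N : ℤ) + (i : ℤ) + 1) = - cc N ((N : ℤ) - (i : ℤ) - 1) := by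
        rw [show ((N : ℤ) + (i : ℤ) + 1) = (N : ℤ) + ((i : ℤ) + 1) by ring,
          cc_symm N hN, show ((N : ℤ) - ((i : ℤ) + 1)) = (N : ℤ) - (i : ℤ) - 1 by ring]
      rw [show ((0 : ℤ) + (i : ℤ) + 1) = (i : ℤ) + 1 by ring] at h2
      calc ∑ j ∈ range N, cc N ((j : ℤ) - (i + 1 : ℕ))
          = ∑ j ∈ range N, cc N ((j : ℤ) - (i : ℤ) - 1) := by
            apply Finset.sum_congr rfl; intro j _; rw [e2]
        _ = ∑ j ∈ range N, cc N ((j : ℤ) - i) - cc N ((N : ℤ) - i - 1) + cc N (0 - (i:ℤ) - 1) := by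
            linarith [h1]
        _ = ∑ j ∈ range N, cc N ((j : ℤ) + i + 1) - cc N ((N : ℤ) - i - 1) - cc N ((i:ℤ)+1) := by
            rw [ih, hneg]; ring
        _ = ∑ j ∈ range N, cc N ((j : ℤ) + 1 + i + 1) := by
            rw [hsym] at h2
            linarith [h2]
        _ = ∑ j ∈ range N, cc N ((j : ℤ) + (i + 1 : ℕ) + 1) := by
            apply Finset.sum_congr rfl; intro j _; rw [e3]

noncomputable def th (N i : ℕ) : ℝ := (2 * (i : ℝ) + 1) * Real.pi / (2 * N)
noncomputable def xx (N i : ℕ) : ℝ := Real.cos (th N i)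
noncomputable def SS (N k : ℕ) : ℝ := ∑ i ∈ range N, xx N i ^ k

lemma sin_pos_aux (N : ℕ) (hN : 1 ≤ N) (a : ℝ) (h0 : 0 < a) (h1 : a < 2 * N) :
    0 < Real.sin (a * Real.pi / (2 * N)) := by
  have hNpos : (0 : ℝ) < N := by exact_mod_cast hN
  apply Real.sin_pos_of_pos_of_lt_pi
  · positivity
  · rw [div_lt_iff₀ (by positivity)]
    nlinarith [Real.pi_pos]

lemma sin_th_pos (N i : ℕ) (hN : 1 ≤ N) (hi : i < N) : 0 < Real.sin (th N i) := by
  apply sin_pos_aux N hN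
  · positivity
  · have : (i : ℝ) + 1 ≤ N := by exact_mod_cast hi
    linarith

lemma inv_diff (N : ℕ) (hN : 1 ≤ N) {i j : ℕ} (hi : i < N) (hj : j < N) (hij : i ≠ j) :
    1 / (xx N i - xx N j) =
      (cc N ((j : ℤ) - i) - cc N ((j : ℤ) + i + 1)) / (2 * Real.sin (th N i)) := by
  have hNpos : (0 : ℝ) < N := by exact_mod_cast hN
  set α : ℝ := ((j : ℝ) - i) * Real.pi / (2 * N) with hα
  set β : ℝ := ((j : ℝ) + i + 1) * Real.pi / (2 * N) with hβ
  have hsβ : 0 < Real.sin β := by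
    apply sin_pos_aux N hN
    · positivity
    · have h1 : (j : ℝ) ≤ N - 1 := by
        have : (j : ℝ) + 1 ≤ N := by exact_mod_cast hj
        linarith
      have h2 : (i : ℝ) ≤ N - 1 := by
        have : (i : ℝ) + 1 ≤ N := by exact_mod_cast hi
        linarith
      linarith
  have hsα : Real.sin α ≠ 0 := by
    rcases lt_or_gt_of_ne hij with h | h
    · have : 0 < Real.sin α := by
        apply sin_pos_aux N hN
        · have : (i : ℝ) < j := by exact_mod_cast h
          linarith
        · have h1 : (j : ℝ) < N := by exact_mod_cast hj
          have : (0:ℝ) ≤ i := by positivity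
          linarith
      linarith
    · have hneg : α = -(((i : ℝ) - j) * Real.pi / (2 * N)) := by rw [hα]; ring
      have : 0 < Real.sin (((i : ℝ) - j) * Real.pi / (2 * N)) := by
        apply sin_pos_aux N hN
        · have : (j : ℝ) < i := by exact_mod_cast h
          linarith
        · have h1 : (i : ℝ) < N := by exact_mod_cast hi
          have : (0:ℝ) ≤ j := by positivity
          linarith
      rw [hneg, Real.sin_neg]
      linarith
  have hth : th N i = β - α := by rw [th, hα, hβ]; ring
  have hsθ : 0 < Real.sin (th N i) := sin_th_pos N i hN hi
  have hdiff : xx N i - xx N j = 2 * Real.sin β * Real.sin α := by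
    rw [xx, xx, Real.cos_sub_cos]
    have e1 : (th N i + th N j) / 2 = β := by rw [th, th, hβ]; ring
    have e2 : (th N i - th N j) / 2 = -α := by rw [th, th, hα]; ring
    rw [e1, e2, Real.sin_neg]
    ring
  have hc1 : cc N ((j : ℤ) - i) = Real.cos α / Real.sin α := by
    rw [cc]
    congr 2 <;> · congr 1; push_cast; ring
  have hc2 : cc N ((j : ℤ) + i + 1) = Real.cos β / Real.sin β := by
    rw [cc]
    congr 2 <;> · congr 1; push_cast; ring
  rw [hdiff, hc1, hc2, hth, Real.sin_sub]
  have h1 : Real.sin β ≠ 0 := ne_of_gt hsβ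
  have h2 : Real.sin β * Real.cos α - Real.cos β * Real.sin α ≠ 0 := by
    rw [← Real.sin_sub, ← hth]; exact ne_of_gt hsθ
  field_simp
  rw [mul_comm (Real.sin α), div_self h2]

lemma key (N : ℕ) (hN : 1 ≤ N) {i : ℕ} (hi : i < N) :
    ∑ j ∈ (range N).erase i, 1 / (xx N i - xx N j) = xx N i / (2 * (1 - xx N i ^ 2)) := by
  have hsθ : 0 < Real.sin (th N i) := sin_th_pos N i hN hi
  have hc : cc N (2 * (i : ℤ) + 1) = Real.cos (th N i) / Real.sin (th N i) := by
    rw [cc, th]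
    congr 2 <;> · congr 1; push_cast; ring
  have step1 : ∑ j ∈ (range N).erase i, 1 / (xx N i - xx N j)
      = ∑ j ∈ (range N).erase i,
          (cc N ((j : ℤ) - i) - cc N ((j : ℤ) + i + 1)) / (2 * Real.sin (th N i)) := by
    apply Finset.sum_congr rfl
    intro j hj
    rw [Finset.mem_erase, Finset.mem_range] at hj
    exact inv_diff N hN hi hj.2 (Ne.symm hj.1)
  have step2 : ∑ j ∈ (range N).erase i,
        (cc N ((j : ℤ) - i) - cc N ((j : ℤ) + i + 1))
      = cc N (2 * (i : ℤ) + 1) := by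
    have hmem : i ∈ range N := Finset.mem_range.mpr hi
    have := Finset.sum_erase_add (range N) (fun j => cc N ((j : ℤ) - i) - cc N ((j : ℤ) + i + 1)) hmem
    have hall : ∑ j ∈ range N, (cc N ((j : ℤ) - i) - cc N ((j : ℤ) + i + 1)) = 0 := by
      rw [Finset.sum_sub_distrib, sums_eq N hN i, sub_self]
    have hterm : cc N ((i : ℤ) - i) - cc N ((i : ℤ) + i + 1) = - cc N (2 * (i : ℤ) + 1) := by
      rw [sub_self, cc_zero, zero_sub]
      congr 2
      ring
    have this2 : ∑ j ∈ (range N).erase i, (cc N ((j : ℤ) - i) - cc N ((j : ℤ) + i + 1))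
        + (cc N ((i : ℤ) - i) - cc N ((i : ℤ) + i + 1))
        = ∑ j ∈ range N, (cc N ((j : ℤ) - i) - cc N ((j : ℤ) + i + 1)) := this
    rw [hterm] at this2
    linarith [this2, hall]
  rw [step1, ← Finset.sum_div, step2, hc]
  have hsq : 1 - xx N i ^ 2 = Real.sin (th N i) ^ 2 := by
    rw [xx, Real.sin_sq]
  rw [hsq, xx]
  rw [div_div]
  congr 1
  ring

lemma one_sub_sq_ne (N i : ℕ) (hN : 1 ≤ N) (hi : i < N) : 1 - xx N i ^ 2 ≠ 0 := by
  have h := sin_th_pos N i hN hi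
  have : 1 - xx N i ^ 2 = Real.sin (th N i) ^ 2 := by rw [xx, Real.sin_sq]
  rw [this]
  positivity

lemma xx_ne (N : ℕ) (hN : 1 ≤ N) {i j : ℕ} (hi : i < N) (hj : j < N) (hij : i ≠ j) :
    xx N i ≠ xx N j := by
  have hNpos : (0 : ℝ) < N := by exact_mod_cast hN
  have hmono : ∀ {a b : ℕ}, a < b → b < N → xx N b < xx N a := by
    intro a b hab hbN
    apply Real.cos_lt_cos_of_nonneg_of_le_pi
    · rw [th]; positivity
    · rw [th, div_le_iff₀ (by positivity)]
      have h1 : (b : ℝ) + 1 ≤ N := by exact_mod_cast hbN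
      nlinarith [Real.pi_pos]
    · rw [th, th]
      apply div_lt_div_of_pos_right ?_ (by positivity)
      have : (a : ℝ) + 1 ≤ b := by exact_mod_cast hab
      nlinarith [Real.pi_pos]
  rcases lt_or_gt_of_ne hij with h | h
  · exact (hmono h hj).ne'
  · exact (hmono h hi).ne

lemma sumA (N : ℕ) (hN : 1 ≤ N) (r : ℕ) :
    ∑ i ∈ range N, ∑ j ∈ (range N).erase i,
        (xx N i ^ r - xx N i ^ (r + 2)) / (xx N i - xx N j) = SS N (r + 1) / 2 := by
  rw [SS, Finset.sum_div]
  apply Finset.sum_congr rfl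
  intro i hi
  rw [Finset.mem_range] at hi
  have h1 : 1 - xx N i ^ 2 ≠ 0 := one_sub_sq_ne N i hN hi
  calc ∑ j ∈ (range N).erase i, (xx N i ^ r - xx N i ^ (r + 2)) / (xx N i - xx N j)
      = (xx N i ^ r - xx N i ^ (r + 2)) * ∑ j ∈ (range N).erase i, 1 / (xx N i - xx N j) := by
        rw [Finset.mul_sum]
        apply Finset.sum_congr rfl
        intro j _
        rw [mul_one_div]
    _ = (xx N i ^ r * (1 - xx N i ^ 2)) * (xx N i / (2 * (1 - xx N i ^ 2))) := by
        rw [key N hN hi]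
        ring_nf
    _ = xx N i ^ (r + 1) / 2 := by
        field_simp
        ring

lemma offdiag (N : ℕ) (s t : ℕ) :
    ∑ i ∈ range N, ∑ j ∈ (range N).erase i, xx N i ^ s * xx N j ^ t
      = SS N s * SS N t - SS N (s + t) := by
  rw [SS, SS, SS]
  have hper : ∀ i ∈ range N, ∑ j ∈ (range N).erase i, xx N i ^ s * xx N j ^ t
      = xx N i ^ s * (∑ j ∈ range N, xx N j ^ t) - xx N i ^ (s + t) := by
    intro i hi
    have h := Finset.sum_erase_add (range N) (fun j => xx N i ^ s * xx N j ^ t) hi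
    have h2 : ∑ j ∈ (range N).erase i, xx N i ^ s * xx N j ^ t
        + xx N i ^ s * xx N i ^ t = ∑ j ∈ range N, xx N i ^ s * xx N j ^ t := h
    have h3 : ∑ j ∈ range N, xx N i ^ s * xx N j ^ t
        = xx N i ^ s * ∑ j ∈ range N, xx N j ^ t := by rw [Finset.mul_sum]
    have h4 : xx N i ^ s * xx N i ^ t = xx N i ^ (s + t) := (pow_add _ _ _).symm
    linarith
  rw [Finset.sum_congr rfl hper, Finset.sum_sub_distrib, ← Finset.sum_mul]

lemma swap_sum (N : ℕ) (g : ℕ → ℕ → ℝ) :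
    ∑ i ∈ range N, ∑ j ∈ (range N).erase i, g i j
      = ∑ i ∈ range N, ∑ j ∈ (range N).erase i, g j i := by
  have h : ∀ (x y : ℕ), x ∈ range N ∧ y ∈ (range N).erase x ↔
      x ∈ (range N).erase y ∧ y ∈ range N := by
    intro i j
    simp only [mem_range, mem_erase]
    omega
  rw [Finset.sum_comm' h]

lemma SS_zero (N : ℕ) : SS N 0 = N := by simp [SS]

lemma master (N : ℕ) (hN : 1 ≤ N) (r : ℕ) (hr : 1 ≤ r) :
    (2 * (N : ℝ) - ((r : ℝ) + 1)) * SS N (r + 1) =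
      -(r : ℝ) * SS N (r - 1) +
        ∑ s ∈ range r, (SS N (r - 1 - s) * SS N s - SS N (r - s) * SS N (s + 1)) := by
  set D : ℝ := ∑ i ∈ range N, ∑ j ∈ (range N).erase i,
      ((xx N i ^ r - xx N i ^ (r + 2)) - (xx N j ^ r - xx N j ^ (r + 2)))
        / (xx N i - xx N j) with hD
  -- First evaluation: D = SS N (r+1)
  have hD1 : D = SS N (r + 1) := by
    have hA := sumA N hN r
    have hB : ∑ i ∈ range N, ∑ j ∈ (range N).erase i,
        (xx N j ^ r - xx N j ^ (r + 2)) / (xx N i - xx N j)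
        = - (SS N (r + 1) / 2) := by
      rw [swap_sum N (fun i j => (xx N j ^ r - xx N j ^ (r + 2)) / (xx N i - xx N j))]
      have : ∀ i ∈ range N, ∀ j ∈ (range N).erase i,
          (xx N i ^ r - xx N i ^ (r + 2)) / (xx N j - xx N i)
          = -((xx N i ^ r - xx N i ^ (r + 2)) / (xx N i - xx N j)) := by
        intro i _ j _
        rw [← neg_sub (xx N i) (xx N j), div_neg]
      calc ∑ i ∈ range N, ∑ j ∈ (range N).erase i,
            (xx N i ^ r - xx N i ^ (r + 2)) / (xx N j - xx N i)
          = ∑ i ∈ range N, ∑ j ∈ (range N).erase i,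
            -((xx N i ^ r - xx N i ^ (r + 2)) / (xx N i - xx N j)) := by
            apply Finset.sum_congr rfl
            intro i hi
            exact Finset.sum_congr rfl (this i hi)
        _ = - (SS N (r + 1) / 2) := by
            simp only [Finset.sum_neg_distrib]
            rw [hA]
    have hsplit2 : D = (∑ i ∈ range N, ∑ j ∈ (range N).erase i,
          (xx N i ^ r - xx N i ^ (r + 2)) / (xx N i - xx N j))
        - ∑ i ∈ range N, ∑ j ∈ (range N).erase i,
          (xx N j ^ r - xx N j ^ (r + 2)) / (xx N i - xx N j) := by
      rw [hD, ← Finset.sum_sub_distrib]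
      apply Finset.sum_congr rfl
      intro i _
      rw [← Finset.sum_sub_distrib]
      apply Finset.sum_congr rfl
      intro j _
      rw [sub_div]
    rw [hsplit2, hA, hB]
    ring
  -- Second evaluation via geometric sums
  have hD2 : D = (∑ s ∈ range r, (SS N s * SS N (r - 1 - s)) - (r : ℝ) * SS N (r - 1))
      - ((∑ s ∈ range (r + 2), (SS N s * SS N (r + 1 - s))) - ((r : ℝ) + 2) * SS N (r + 1)) := by
    have hterm : ∀ i ∈ range N, ∀ j ∈ (range N).erase i,
        ((xx N i ^ r - xx N i ^ (r + 2)) - (xx N j ^ r - xx N j ^ (r + 2)))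
          / (xx N i - xx N j)
        = (∑ s ∈ range r, xx N i ^ s * xx N j ^ (r - 1 - s))
          - ∑ s ∈ range (r + 2), xx N i ^ s * xx N j ^ (r + 1 - s) := by
      intro i hi j hj
      rw [Finset.mem_range] at hi
      rw [Finset.mem_erase, Finset.mem_range] at hj
      have hne : xx N i - xx N j ≠ 0 :=
        sub_ne_zero.mpr (xx_ne N hN hi hj.2 (Ne.symm hj.1))
      have hexp : ∀ s : ℕ, r + 1 - s = r + 2 - 1 - s := fun s => by omega
      simp only [hexp]
      rw [div_eq_iff hne, sub_mul, geom_sum₂_mul, geom_sum₂_mul]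
      ring
    have hDrw : D = ∑ s ∈ range r,
          (∑ i ∈ range N, ∑ j ∈ (range N).erase i, xx N i ^ s * xx N j ^ (r - 1 - s))
        - ∑ s ∈ range (r + 2),
          (∑ i ∈ range N, ∑ j ∈ (range N).erase i, xx N i ^ s * xx N j ^ (r + 1 - s)) := by
      rw [hD]
      rw [Finset.sum_congr rfl (fun i hi => Finset.sum_congr rfl (hterm i hi))]
      simp only [Finset.sum_sub_distrib]
      congr 1 <;> · rw [Finset.sum_comm]
                    apply Finset.sum_congr rfl
                    intro s _
                    rw [Finset.sum_comm]
    rw [hDrw]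
    congr 1
    · calc ∑ s ∈ range r, ∑ i ∈ range N, ∑ j ∈ (range N).erase i,
            xx N i ^ s * xx N j ^ (r - 1 - s)
          = ∑ s ∈ range r, (SS N s * SS N (r - 1 - s) - SS N (r - 1)) := by
            apply Finset.sum_congr rfl
            intro s hs
            rw [Finset.mem_range] at hs
            rw [offdiag N s (r - 1 - s)]
            congr 2
            omega
        _ = ∑ s ∈ range r, SS N s * SS N (r - 1 - s) - (r : ℝ) * SS N (r - 1) := by
            rw [Finset.sum_sub_distrib, Finset.sum_const, Finset.card_range, nsmul_eq_mul]
    · calc ∑ s ∈ range (r + 2), ∑ i ∈ range N, ∑ j ∈ (range N).erase i,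
            xx N i ^ s * xx N j ^ (r + 1 - s)
          = ∑ s ∈ range (r + 2), (SS N s * SS N (r + 1 - s) - SS N (r + 1)) := by
            apply Finset.sum_congr rfl
            intro s hs
            rw [Finset.mem_range] at hs
            rw [offdiag N s (r + 1 - s)]
            congr 2
            omega
        _ = ∑ s ∈ range (r + 2), SS N s * SS N (r + 1 - s) - ((r : ℝ) + 2) * SS N (r + 1) := by
            rw [Finset.sum_sub_distrib, Finset.sum_const, Finset.card_range, nsmul_eq_mul]
            push_cast
            ring
  -- split the big sum
  have hsplit : ∑ s ∈ range (r + 2), (SS N s * SS N (r + 1 - s))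
      = (N : ℝ) * SS N (r + 1) + (∑ s ∈ range r, SS N (s + 1) * SS N (r - s))
        + SS N (r + 1) * (N : ℝ) := by
    rw [Finset.sum_range_succ, Finset.sum_range_succ']
    simp only [Nat.add_sub_add_right, Nat.sub_self, Nat.sub_zero, SS_zero]
    ring
  -- final algebra
  have hgoal : ∑ s ∈ range r, (SS N (r - 1 - s) * SS N s - SS N (r - s) * SS N (s + 1))
      = (∑ s ∈ range r, SS N s * SS N (r - 1 - s))
        - ∑ s ∈ range r, SS N (s + 1) * SS N (r - s) := by
    rw [Finset.sum_sub_distrib]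
    congr 1
    · exact Finset.sum_congr rfl (fun s _ => mul_comm _ _)
    · exact Finset.sum_congr rfl (fun s _ => mul_comm _ _)
  rw [hgoal]
  rw [hD1] at hD2
  rw [hsplit] at hD2
  linarith [hD2]


/-- **Case's equation for the moments of Chebyshev `T` zeros.** For every `N ≥ 1`
and `r ≥ 1`, with `m_r = m_r^{(T)}(N) = (1/N) Σ_{i=1}^N (cos((2i−1)π/(2N)))^r`:
`(2N − (r+1)) m_{r+1} = −r·m_{r−1} + N Σ_{s=0}^{r−1} (m_{r−1−s} m_s − m_{r−s} m_{s+1})`. -/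
theorem chebyshevT_case_equation (N : ℕ) (hN : 1 ≤ N)
    (m : ℕ → ℝ)
    (hm : ∀ r, m r = (1 / (N : ℝ)) *
        ∑ i ∈ Finset.range N, (Real.cos ((2 * (i : ℝ) + 1) * Real.pi / (2 * N))) ^ r)
    (r : ℕ) (hr : 1 ≤ r) :
    (2 * (N : ℝ) - ((r : ℝ) + 1)) * m (r + 1) =
      -(r : ℝ) * m (r - 1) +
        (N : ℝ) * ∑ s ∈ Finset.range r, (m (r - 1 - s) * m s - m (r - s) * m (s + 1)) := by
  have hNne : (N : ℝ) ≠ 0 := by positivity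
  have hm' : ∀ k, m k = (1 / (N : ℝ)) * SS N k := by
    intro k
    rw [hm k]
    rfl
  have hmaster := master N hN r hr
  have hsum : ∑ s ∈ Finset.range r, (m (r - 1 - s) * m s - m (r - s) * m (s + 1))
      = (1 / (N : ℝ)) ^ 2 *
        ∑ s ∈ range r, (SS N (r - 1 - s) * SS N s - SS N (r - s) * SS N (s + 1)) := by
    rw [Finset.mul_sum]
    apply Finset.sum_congr rfl
    intro s _
    rw [hm', hm', hm', hm']
    ring
  rw [hm', hm', hsum]
  have : (2 * (N : ℝ) - ((r : ℝ) + 1)) * (1 / (N : ℝ) * SS N (r + 1))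
      = (1 / (N : ℝ)) * ((2 * (N : ℝ) - ((r : ℝ) + 1)) * SS N (r + 1)) := by ring
  rw [this, hmaster]
  field_simp
end
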